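/- arXiv:1603.09589 — 7 statements merged into one kernel-verified Lean document; each statement's English description precedes it below -/
import Mathlib

section
/- For any partition λ, the rank-generating function R(λ,q) := Σ_{μ ⊆ λ} q^{|μ|} of the interval [∅,λ] in Young's lattice satisfies R(λ,q) = Σ_{x=(i,j)} q^{i(j-1)} · R(λ_(x),q) · R(λ^(x),q), where x runs over the outside corner cells of λ, λ_(x) = (λ_{i+1}, λ_{i+2}, …) and λ^(x) = (λ_1 − j, λ_2 − j, …, λ_{i−1} − j). -/
open scoped BigOperators

/-- The rank-generating function `R(λ,q) = Σ_{μ ⊆ λ} q^{|μ|}` of the interval `[∅,λ]`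
in Young's lattice, where a partition is encoded as an antitone function `ℕ → ℕ`
(0-indexed row lengths) and `μ ⊆ λ` means pointwise `≤`. -/
noncomputable def rankGen (p : ℕ → ℕ) (q : ℚ) : ℚ :=
  ∑ᶠ m ∈ {m : ℕ → ℕ | Antitone m ∧ ∀ i, m i ≤ p i}, q ^ (∑ᶠ i, m i)

open scoped Classical

/-- The set of partitions dominated by `p` is finite when `p` has finite support. -/
lemma le_set_finite {p : ℕ → ℕ} (hfin : (Function.support p).Finite) :
    {m : ℕ → ℕ | ∀ i, m i ≤ p i}.Finite := by
  classical
  set s := hfin.toFinset with hs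
  have himg : ((fun (m : ℕ → ℕ) (i : s) => m i) ''
      {m : ℕ → ℕ | ∀ i, m i ≤ p i}).Finite := by
    apply Set.Finite.subset (Set.Finite.pi (fun i : s => Set.finite_Iic (p i)))
    rintro g ⟨m, hm, rfl⟩ i _
    exact hm i
  refine Set.Finite.of_finite_image himg ?_
  intro m hm m' hm' h
  funext i
  by_cases hi : p i = 0
  · have h1 := hm i; have h2 := hm' i; omega
  · have hi' : i ∈ s := by simp [hs, Function.mem_support, hi]
    exact congrFun h ⟨i, hi'⟩

/-- The row index of the unique outside corner associated to `m ⊆ p`: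
the least `k` with `m k = p k`. -/
noncomputable def rIdx (p m : ℕ → ℕ) : ℕ := sInf {k | m k = p k ∨ p k = 0}

lemma rIdx_spec {p m : ℕ → ℕ} (h0 : ∃ k, p k = 0) (hm : ∀ i, m i ≤ p i) :
    m (rIdx p m) = p (rIdx p m) ∧ ∀ k < rIdx p m, m k ≠ p k := by
  obtain ⟨k0, hk0⟩ := h0
  have hne : {k | m k = p k ∨ p k = 0}.Nonempty := ⟨k0, Or.inr hk0⟩
  have hmem := Nat.sInf_mem hne
  constructor
  · rcases hmem with h | h
    · exact h
    · have := hm (sInf {k | m k = p k ∨ p k = 0})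
      show m (rIdx p m) = p (rIdx p m)
      unfold rIdx; omega
  · intro k hk hkeq
    have := Nat.sInf_le (show k ∈ {k | m k = p k ∨ p k = 0} from Or.inl hkeq)
    unfold rIdx at hk; omega

lemma rIdx_eq {p m : ℕ → ℕ} {r : ℕ} (h1 : m r = p r)
    (h2 : ∀ k < r, m k ≠ p k ∧ p k ≠ 0) : rIdx p m = r := by
  have hle : rIdx p m ≤ r := Nat.sInf_le (Or.inl h1)
  rcases lt_or_eq_of_le hle with hlt | heq
  · exfalso
    have hmem := Nat.sInf_mem (⟨r, Or.inl h1⟩ :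
      {k | m k = p k ∨ p k = 0}.Nonempty)
    have := h2 _ hlt
    rcases hmem with h | h
    · exact this.1 h
    · exact this.2 h
  · exact heq

/-- `rankGen` as a finite sum with truncated weights. -/
lemma rankGen_eq_sum {p : ℕ → ℕ} {N : ℕ} (hN : ∀ k, p k ≠ 0 → k < N) (q : ℚ)
    (hS : {m : ℕ → ℕ | Antitone m ∧ ∀ i, m i ≤ p i}.Finite) :
    rankGen p q = ∑ m ∈ hS.toFinset, q ^ (∑ k ∈ Finset.range N, m k) := by
  rw [rankGen, finsum_mem_eq_finite_toFinset_sum _ hS]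
  refine Finset.sum_congr rfl fun m hm => ?_
  congr 1
  apply finsum_eq_sum_of_support_subset
  intro k hk
  have hmk : m k ≠ 0 := hk
  have h2 := (hS.mem_toFinset.mp hm).2 k
  have : p k ≠ 0 := by omega
  simpa using hN k this

/-- The sum over the fiber of partitions whose corner index is `r`. -/
lemma fiber_sum (p : ℕ → ℕ) (hp : Antitone p) {N : ℕ} (hN : ∀ k, p k ≠ 0 → k < N)
    (q : ℚ) (hS : {m : ℕ → ℕ | Antitone m ∧ ∀ i, m i ≤ p i}.Finite)
    (r : ℕ) (hr : r = 0 ∨ p r < p (r - 1)) :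
    ∑ m ∈ hS.toFinset.filter (fun m => rIdx p m = r),
        q ^ (∑ k ∈ Finset.range N, m k)
      = q ^ ((r + 1) * p r) * rankGen (fun k => p (k + r + 1)) q *
          rankGen (fun k => if k < r then p k - (p r + 1) else 0) q := by
  classical
  have hpN : p N = 0 := by by_contra h; exact absurd (hN N h) (lt_irrefl _)
  have h0 : ∃ k, p k = 0 := ⟨N, hpN⟩
  -- the column condition: rows above `r` are strictly longer than `p r`
  have hcol : ∀ k < r, p r + 1 ≤ p k := by
    intro k hk
    have hr' : p r < p (r - 1) := by
      rcases hr with h | h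
      · omega
      · exact h
    have : p (r - 1) ≤ p k := hp (by omega)
    omega
  have hrN : r ≤ N := by
    rcases hr with h | h
    · omega
    · have : p (r - 1) ≠ 0 := by omega
      have := hN _ this; omega
  set pν : ℕ → ℕ := fun k => p (k + r + 1) with hpν
  set pτ : ℕ → ℕ := fun k => if k < r then p k - (p r + 1) else 0 with hpτ
  have hνN : ∀ k, pν k ≠ 0 → k < N := by
    intro k hk; have := hN (k + r + 1) hk; omega
  have hτN : ∀ k, pτ k ≠ 0 → k < N := by
    intro k hk
    by_cases h : k < r
    · omega
    · simp [hpτ, h] at hk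
  have hSν : {m : ℕ → ℕ | Antitone m ∧ ∀ i, m i ≤ pν i}.Finite := by
    refine Set.Finite.subset (le_set_finite ?_) (fun m hm => hm.2)
    exact Set.Finite.subset (Set.finite_Iio N)
      (fun k hk => hνN k hk)
  have hSτ : {m : ℕ → ℕ | Antitone m ∧ ∀ i, m i ≤ pτ i}.Finite := by
    refine Set.Finite.subset (le_set_finite ?_) (fun m hm => hm.2)
    exact Set.Finite.subset (Set.finite_Iio N)
      (fun k hk => hτN k hk)
  rw [rankGen_eq_sum hνN q hSν, rankGen_eq_sum hτN q hSτ]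
  set M := N + r + 1 with hM
  -- the combination map
  set comb : (ℕ → ℕ) × (ℕ → ℕ) → (ℕ → ℕ) :=
    fun x k => if k < r then p r + x.2 k else if k = r then p r else x.1 (k - (r + 1))
    with hcomb
  set split : (ℕ → ℕ) → (ℕ → ℕ) × (ℕ → ℕ) :=
    fun m => (fun k => m (k + r + 1), fun k => if k < r then m k - p r else 0)
    with hsplit
  have key : ∀ x ∈ hSν.toFinset ×ˢ hSτ.toFinset,
      ∑ k ∈ Finset.range M, comb x k
        = (r + 1) * p r + (∑ k ∈ Finset.range N, x.1 k)
          + (∑ k ∈ Finset.range N, x.2 k) := by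
    rintro ⟨ν, τ⟩ hx
    rw [Finset.mem_product, hSν.mem_toFinset, hSτ.mem_toFinset] at hx
    obtain ⟨⟨hν1, hν2⟩, hτ1, hτ2⟩ := hx
    dsimp only
    have hsplit1 : ∑ k ∈ Finset.range (r+1), comb (ν, τ) k
        + ∑ k ∈ Finset.Ico (r+1) M, comb (ν, τ) k
        = ∑ k ∈ Finset.range M, comb (ν, τ) k :=
      Finset.sum_range_add_sum_Ico _ (by omega)
    have e1 : ∑ k ∈ Finset.range (r+1), comb (ν, τ) k
        = (r + 1) * p r + ∑ k ∈ Finset.range N, τ k := by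
      rw [Finset.sum_range_succ]
      have : ∀ k ∈ Finset.range r, comb (ν, τ) k = p r + τ k := by
        intro k hk; rw [Finset.mem_range] at hk
        simp [hcomb, hk]
      rw [Finset.sum_congr rfl this, Finset.sum_add_distrib, Finset.sum_const,
        Finset.card_range]
      have hcr : comb (ν, τ) r = p r := by simp [hcomb]
      have hτ0 : ∑ k ∈ Finset.range N, τ k = ∑ k ∈ Finset.range r, τ k := by
        refine (Finset.sum_subset (Finset.range_subset_range.2 hrN) ?_).symm
        intro k _ hk
        rw [Finset.mem_range] at hk
        have := hτ2 k
        simp [hpτ, hk] at this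
        omega
      rw [hcr, hτ0]; ring
    have e2 : ∑ k ∈ Finset.Ico (r+1) M, comb (ν, τ) k
        = ∑ k ∈ Finset.range N, ν k := by
      rw [Finset.sum_Ico_eq_sum_range]
      have hMN : M - (r + 1) = N := by omega
      rw [hMN]
      refine Finset.sum_congr rfl fun k _ => ?_
      have h1 : ¬ (r + 1 + k < r) := by omega
      have h2 : ¬ (r + 1 + k = r) := by omega
      simp only [hcomb, h1, h2, if_false]
      congr 1; omega
    omega
  have hmaps_split : ∀ m ∈ hS.toFinset.filter (fun m => rIdx p m = r),
      split m ∈ hSν.toFinset ×ˢ hSτ.toFinset := by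
    intro m hm
    rw [Finset.mem_filter, hS.mem_toFinset] at hm
    obtain ⟨⟨hm1, hm2⟩, hmr⟩ := hm
    have hspec := rIdx_spec h0 hm2
    rw [hmr] at hspec
    rw [Finset.mem_product, hSν.mem_toFinset, hSτ.mem_toFinset]
    refine ⟨⟨fun a b hab => hm1 (by omega), fun k => hm2 _⟩, ?_, ?_⟩
    · -- τ antitone
      apply antitone_nat_of_succ_le
      intro k
      by_cases h1 : k + 1 < r
      · simp only [hsplit, h1, if_pos (show k < r by omega)]
        exact Nat.sub_le_sub_right (hm1 (by omega)) _
      · simp only [hsplit, h1, if_false]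
        exact Nat.zero_le _
    · -- τ bounded
      intro k
      by_cases h1 : k < r
      · simp only [hsplit, hpτ, h1, if_pos]
        have hlt : m k < p k := lt_of_le_of_ne (hm2 k) (hspec.2 k h1)
        omega
      · simp [hsplit, hpτ, h1]
  have hmaps_comb : ∀ x ∈ hSν.toFinset ×ˢ hSτ.toFinset,
      comb x ∈ hS.toFinset.filter (fun m => rIdx p m = r) := by
    rintro ⟨ν, τ⟩ hx
    rw [Finset.mem_product, hSν.mem_toFinset, hSτ.mem_toFinset] at hx
    obtain ⟨⟨hν1, hν2⟩, hτ1, hτ2⟩ := hx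
    rw [Finset.mem_filter, hS.mem_toFinset]
    have hτb : ∀ k < r, τ k ≤ p k - (p r + 1) := by
      intro k hk; have := hτ2 k; simpa [hpτ, hk] using this
    have hmle : ∀ k, comb (ν, τ) k ≤ p k := by
      intro k
      rcases lt_trichotomy k r with h | h | h
      · have := hτb k h; have := hcol k h
        simp only [hcomb, h, if_pos]; omega
      · subst h; simp [hcomb]
      · have h1 : ¬ (k < r) := by omega
        have h2 : ¬ (k = r) := by omega
        simp only [hcomb, h1, h2, if_false]
        have := hν2 (k - (r+1))
        simp only [hpν] at this
        have he : k - (r+1) + r + 1 = k := by omega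
        rwa [he] at this
    refine ⟨⟨?_, hmle⟩, ?_⟩
    · -- comb antitone
      apply antitone_nat_of_succ_le
      intro k
      rcases lt_trichotomy (k+1) r with h | h | h
      · simp only [hcomb, h, if_pos (show k < r by omega), if_pos]
        exact Nat.add_le_add_left (hτ1 (by omega : k ≤ k + 1)) _
      · have hk : k < r := by omega
        simp only [hcomb, h, hk, if_pos, lt_irrefl, if_false, if_pos rfl]
        omega
      · have h1 : ¬ (k + 1 < r) := by omega
        have h2 : ¬ (k + 1 = r) := by omega
        simp only [hcomb, h1, h2, if_false]
        rcases eq_or_lt_of_le (show r ≤ k by omega) with hkr | hkr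
        · subst hkr
          simp only [lt_irrefl, if_false, if_pos rfl]
          have := hν2 (r + 1 - (r + 1))
          simp only [hpν] at this
          calc ν (r + 1 - (r + 1)) ≤ p (r + 1 - (r + 1) + r + 1) := this
            _ ≤ p r := hp (by omega)
        · have h3 : ¬ (k < r) := by omega
          have h4 : ¬ (k = r) := by omega
          simp only [h3, h4, if_false]
          exact hν1 (by omega : k - (r+1) ≤ k + 1 - (r+1))
    · -- corner index is r
      apply rIdx_eq
      · simp [hcomb]
      · intro k hk
        have hb := hτb k hk; have hc := hcol k hk
        constructor
        · simp only [hcomb, hk, if_pos]; omega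
        · omega
  have hleft : ∀ m ∈ hS.toFinset.filter (fun m => rIdx p m = r),
      comb (split m) = m := by
    intro m hm
    rw [Finset.mem_filter, hS.mem_toFinset] at hm
    obtain ⟨⟨hm1, hm2⟩, hmr⟩ := hm
    have hspec := rIdx_spec h0 hm2
    rw [hmr] at hspec
    funext k
    rcases lt_trichotomy k r with h | h | h
    · simp only [hcomb, hsplit, h, if_pos]
      have : m r ≤ m k := hm1 (le_of_lt h)
      omega
    · subst h; simp only [hcomb, lt_irrefl, if_false, if_pos rfl]
      exact hspec.1.symm
    · have h1 : ¬ (k < r) := by omega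
      have h2 : ¬ (k = r) := by omega
      simp only [hcomb, hsplit, h1, h2, if_false]
      congr 1; omega
  have hright : ∀ x ∈ hSν.toFinset ×ˢ hSτ.toFinset, split (comb x) = x := by
    rintro ⟨ν, τ⟩ hx
    rw [Finset.mem_product, hSν.mem_toFinset, hSτ.mem_toFinset] at hx
    obtain ⟨⟨hν1, hν2⟩, hτ1, hτ2⟩ := hx
    have h1 : (fun k => comb (ν, τ) (k + r + 1)) = ν := by
      funext k
      have ha : ¬ (k + r + 1 < r) := by omega
      have hb : ¬ (k + r + 1 = r) := by omega
      simp only [hcomb, ha, hb, if_false]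
      congr 1; omega
    have h2 : (fun k => if k < r then comb (ν, τ) k - p r else 0) = τ := by
      funext k
      by_cases h : k < r
      · simp only [hcomb, h, if_pos]; omega
      · have := hτ2 k
        simp only [hpτ, h, if_false] at this ⊢
        omega
    simp only [hsplit]
    exact Prod.ext h1 h2
  have main : ∑ m ∈ hS.toFinset.filter (fun m => rIdx p m = r),
      q ^ (∑ k ∈ Finset.range N, m k)
      = ∑ x ∈ hSν.toFinset ×ˢ hSτ.toFinset,
        q ^ ((r + 1) * p r) *
          (q ^ (∑ k ∈ Finset.range N, x.1 k) * q ^ (∑ k ∈ Finset.range N, x.2 k)) := by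
    refine Finset.sum_nbij' split comb hmaps_split hmaps_comb hleft hright ?_
    intro m hm
    have hx := hmaps_split m hm
    have hw := key (split m) hx
    rw [hleft m hm] at hw
    rw [Finset.mem_filter, hS.mem_toFinset] at hm
    obtain ⟨⟨hm1, hm2⟩, hmr⟩ := hm
    have hmM : ∑ k ∈ Finset.range N, m k = ∑ k ∈ Finset.range M, m k := by
      refine Finset.sum_subset (Finset.range_subset_range.2 (by omega)) ?_
      intro k _ hk
      rw [Finset.mem_range] at hk
      have h2 := hm2 k
      have hp0 : p k = 0 := by
        by_contra h; exact hk (hN k h)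
      omega
    rw [hmM, hw, pow_add, pow_add, mul_assoc]
  rw [main, Finset.sum_product]
  simp only [mul_assoc, Finset.sum_mul, Finset.mul_sum]
  rw [Finset.sum_comm]

/-- For any partition `λ`, one has
`R(λ,q) = Σ_x q^{i(j-1)} · R(λ_(x),q) · R(λ^(x),q)`, where `x = (i,j)` runs over the
outside corner cells of `λ` (1-indexed row `i`, column `j`),
`λ_(x) = (λ_{i+1}, λ_{i+2}, …)` and `λ^(x) = (λ_1 - j, …, λ_{i-1} - j)`.
Here, 0-indexed, the outside corner in row `r` exists iff `r = 0` or `p (r-1) > p r`,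
and then `i = r+1`, `j = p r + 1`, so `q^{i(j-1)} = q^{(r+1)·(p r)}`. -/
theorem stmt5 (p : ℕ → ℕ) (hp : Antitone p) (hfin : (Function.support p).Finite) (q : ℚ) :
    rankGen p q =
      ∑ᶠ r ∈ {r : ℕ | r = 0 ∨ p r < p (r - 1)},
        q ^ ((r + 1) * p r) * rankGen (fun k => p (k + r + 1)) q *
          rankGen (fun k => if k < r then p k - (p r + 1) else 0) q := by
  classical
  obtain ⟨b, hb⟩ := hfin.bddAbove
  set N := b + 1 with hNdef
  have hN : ∀ k, p k ≠ 0 → k < N := by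
    intro k hk
    have : k ≤ b := hb (Function.mem_support.2 hk)
    omega
  have hpN : p N = 0 := by
    by_contra h
    have := hN N h
    omega
  have h0 : ∃ k, p k = 0 := ⟨N, hpN⟩
  have hS : {m : ℕ → ℕ | Antitone m ∧ ∀ i, m i ≤ p i}.Finite :=
    (le_set_finite hfin).subset (fun m hm => hm.2)
  have hC : {r : ℕ | r = 0 ∨ p r < p (r - 1)}.Finite := by
    refine Set.Finite.subset (Set.finite_Iic N) ?_
    rintro r (h | h)
    · simp [h]
    · have : p (r - 1) ≠ 0 := by omega
      have := hN _ this
      simp only [Set.mem_Iic]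
      omega
  have hmaps : ∀ m ∈ hS.toFinset, rIdx p m ∈ hC.toFinset := by
    intro m hm
    rw [hS.mem_toFinset] at hm
    have hspec := rIdx_spec h0 hm.2
    rw [hC.mem_toFinset]
    by_cases hz : rIdx p m = 0
    · exact Or.inl hz
    · right
      have h1 := hspec.2 (rIdx p m - 1) (by omega)
      have h2 : m (rIdx p m) ≤ m (rIdx p m - 1) := hm.1 (by omega)
      have h3 := hm.2 (rIdx p m - 1)
      have h4 := hspec.1
      omega
  rw [rankGen_eq_sum hN q hS, finsum_mem_eq_finite_toFinset_sum _ hC,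
    ← Finset.sum_fiberwise_of_maps_to hmaps (fun m => q ^ (∑ k ∈ Finset.range N, m k))]
  refine Finset.sum_congr rfl fun r hr => ?_
  exact fiber_sum p hp hN q hS r (hC.mem_toFinset.mp hr)
end

section
/- For any partition λ, the number f^λ(+1) of standard barely set-valued tableaux of shape λ satisfies the recurrence f^λ(+1) = Σ_{x=(i,j)} (i−1) · f^{λ∪{x}}, where x runs over the outside corner cells of λ and f^μ denotes the number of standard Young tableaux of shape μ. -/
open scoped BigOperators

/-- A standard Young tableau of shape `μ` (cells 0-indexed as `(row, column)`). -/
structure SYT (μ : YoungDiagram) where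
  entry : ℕ × ℕ → ℕ
  outside : ∀ c : ℕ × ℕ, c ∉ μ → entry c = 0
  bijOn : Set.BijOn entry (μ.cells : Set (ℕ × ℕ)) (Set.Icc 1 μ.card)
  row_lt : ∀ i j1 j2 : ℕ, j1 < j2 → (i, j2) ∈ μ → entry (i, j1) < entry (i, j2)
  col_lt : ∀ i1 i2 j : ℕ, i1 < i2 → (i2, j) ∈ μ → entry (i1, j) < entry (i2, j)

/-- A standard barely set-valued tableau of shape `μ`: a filling of the cells of `μ` by
the numbers `1, …, |μ|+1`, each used exactly once, with exactly one cell containing two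
numbers and all other cells containing one, rows weakly increasing and columns strictly
increasing in the max/min sense. -/
structure SBSVT (μ : YoungDiagram) where
  entry : ℕ × ℕ → Finset ℕ
  outside : ∀ c : ℕ × ℕ, c ∉ μ → entry c = ∅
  nonempty : ∀ c : ℕ × ℕ, c ∈ μ → (entry c).Nonempty
  card_le : ∀ c : ℕ × ℕ, c ∈ μ → (entry c).card ≤ 2
  unique_double : ∃! c : ℕ × ℕ, c ∈ μ ∧ (entry c).card = 2
  mem_range : ∀ c : ℕ × ℕ, c ∈ μ → entry c ⊆ Finset.Icc 1 (μ.card + 1)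
  exactly_once : ∀ k ∈ Finset.Icc 1 (μ.card + 1), ∃! c : ℕ × ℕ, c ∈ μ ∧ k ∈ entry c
  row_le : ∀ i j1 j2 : ℕ, j1 < j2 → (i, j2) ∈ μ →
    ∀ a ∈ entry (i, j1), ∀ b ∈ entry (i, j2), a ≤ b
  col_lt : ∀ i1 i2 j : ℕ, i1 < i2 → (i2, j) ∈ μ →
    ∀ a ∈ entry (i1, j), ∀ b ∈ entry (i2, j), a < b

open scoped Classical in
/-- Add a cell to a Young diagram (when the result is still a Young diagram). -/
noncomputable def addCell (μ : YoungDiagram) (c : ℕ × ℕ) : YoungDiagram :=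
  if h : IsLowerSet (insert c (μ.cells : Set (ℕ × ℕ))) then
    ⟨insert c μ.cells, by rw [Finset.coe_insert]; exact h⟩
  else μ

namespace StmtAux
open YoungDiagram

def remFinset (μ : YoungDiagram) : Finset (ℕ × ℕ) :=
  μ.cells.filter (fun d => (d.1, d.2 + 1) ∉ μ ∧ (d.1 + 1, d.2) ∉ μ)

lemma mem_remFinset {μ : YoungDiagram} {d : ℕ × ℕ} :
    d ∈ remFinset μ ↔ d ∈ μ ∧ (d.1, d.2 + 1) ∉ μ ∧ (d.1 + 1, d.2) ∉ μ := by
  simp [remFinset, YoungDiagram.mem_cells]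

lemma rem_iff_rowLen {μ : YoungDiagram} {d : ℕ × ℕ} :
    d ∈ remFinset μ ↔ μ.rowLen d.1 = d.2 + 1 ∧ μ.rowLen (d.1 + 1) ≤ d.2 := by
  obtain ⟨i, j⟩ := d
  simp only [mem_remFinset, YoungDiagram.mem_iff_lt_rowLen]
  have := μ.rowLen_anti i (i+1) (by omega)
  constructor
  · rintro ⟨h1, h2, h3⟩; omega
  · rintro ⟨h1, h2⟩; omega

lemma eraseCell_aux {μ : YoungDiagram} {d : ℕ × ℕ} (hd : d ∈ remFinset μ) :
    IsLowerSet ((μ.cells.erase d : Finset (ℕ × ℕ)) : Set (ℕ × ℕ)) := by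
  rw [mem_remFinset] at hd
  intro x y hyx hx
  simp only [Finset.coe_erase, Set.mem_diff, Set.mem_singleton_iff, Finset.mem_coe,
    YoungDiagram.mem_cells] at hx ⊢
  obtain ⟨hyx1, hyx2⟩ : y.1 ≤ x.1 ∧ y.2 ≤ x.2 := ⟨hyx.1, hyx.2⟩
  refine ⟨μ.up_left_mem hyx1 hyx2 hx.1, ?_⟩
  rintro rfl
  rcases Nat.lt_or_ge y.1 x.1 with h | h
  · exact hd.2.2 (μ.up_left_mem (by omega) hyx2 hx.1)
  · have : y.2 < x.2 := by
      rcases Nat.lt_or_ge y.2 x.2 with h' | h'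
      · exact h'
      · exact absurd (Prod.ext (by omega) (by omega)) (Ne.symm hx.2)
    exact hd.2.1 (μ.up_left_mem (by omega) (by omega) hx.1)

def eraseCell (μ : YoungDiagram) (d : ℕ × ℕ) : YoungDiagram :=
  if h : d ∈ remFinset μ then ⟨μ.cells.erase d, eraseCell_aux h⟩ else μ

lemma eraseCell_cells {μ : YoungDiagram} {d : ℕ × ℕ} (hd : d ∈ remFinset μ) :
    (eraseCell μ d).cells = μ.cells.erase d := by
  rw [eraseCell, dif_pos hd]

lemma mem_eraseCell {μ : YoungDiagram} {d : ℕ × ℕ} (hd : d ∈ remFinset μ) {x : ℕ × ℕ} :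
    x ∈ eraseCell μ d ↔ x ≠ d ∧ x ∈ μ := by
  rw [← YoungDiagram.mem_cells, eraseCell_cells hd, Finset.mem_erase, YoungDiagram.mem_cells]

lemma card_eraseCell {μ : YoungDiagram} {d : ℕ × ℕ} (hd : d ∈ remFinset μ) :
    (eraseCell μ d).card = μ.card - 1 := by
  rw [YoungDiagram.card, eraseCell_cells hd,
    Finset.card_erase_of_mem ((YoungDiagram.mem_cells _).mpr (mem_remFinset.mp hd).1)]

lemma card_eraseCell' {μ : YoungDiagram} {d : ℕ × ℕ} (hd : d ∈ remFinset μ) :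
    (eraseCell μ d).card + 1 = μ.card := by
  have h0 : 0 < μ.card := Finset.card_pos.mpr ⟨d, (YoungDiagram.mem_cells _).mpr (mem_remFinset.mp hd).1⟩
  rw [card_eraseCell hd]; omega

open scoped Classical in
noncomputable def addFinset (μ : YoungDiagram) : Finset (ℕ × ℕ) :=
  (Finset.range (μ.colLen 0 + 1) ×ˢ Finset.range (μ.rowLen 0 + 1)).filter
    (fun c => c ∉ μ ∧ IsLowerSet (insert c (μ.cells : Set (ℕ × ℕ))))

lemma lower_insert_mem {μ : YoungDiagram} {c x : ℕ × ℕ}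
    (hl : IsLowerSet (insert c (μ.cells : Set (ℕ × ℕ)))) (hx : x ≤ c) (hne : x ≠ c) :
    x ∈ μ := by
  have := hl hx (Set.mem_insert c _)
  rcases this with h | h
  · exact absurd h hne
  · exact (YoungDiagram.mem_cells _).mp h

lemma mem_addFinset {μ : YoungDiagram} {c : ℕ × ℕ} :
    c ∈ addFinset μ ↔ c ∉ μ ∧ IsLowerSet (insert c (μ.cells : Set (ℕ × ℕ))) := by
  classical
  obtain ⟨i, j⟩ := c
  rw [addFinset, Finset.mem_filter, and_iff_right_iff_imp]
  rintro ⟨hc, hl⟩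
  rw [Finset.mem_product, Finset.mem_range, Finset.mem_range]
  constructor
  · rcases Nat.eq_zero_or_pos i with h | h
    · simp; omega
    · have hm : (i - 1, j) ∈ μ := lower_insert_mem hl
        (Prod.mk_le_mk.mpr ⟨by omega, le_refl _⟩)
        (by intro h'; rw [Prod.mk.injEq] at h'; omega)
      have h1 := YoungDiagram.mem_iff_lt_colLen.mp hm
      have h2 := μ.colLen_anti 0 j (Nat.zero_le _)
      simp; omega
  · rcases Nat.eq_zero_or_pos j with h | h
    · simp; omega
    · have hm : (i, j - 1) ∈ μ := lower_insert_mem hl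
        (Prod.mk_le_mk.mpr ⟨le_refl _, by omega⟩)
        (by intro h'; rw [Prod.mk.injEq] at h'; omega)
      have h1 := YoungDiagram.mem_iff_lt_rowLen.mp hm
      have h2 := μ.rowLen_anti 0 i (Nat.zero_le _)
      simp; omega

lemma add_iff_rowLen {μ : YoungDiagram} {c : ℕ × ℕ} :
    c ∈ addFinset μ ↔ c.2 = μ.rowLen c.1 ∧ (c.1 = 0 ∨ c.2 < μ.rowLen (c.1 - 1)) := by
  rw [mem_addFinset]
  obtain ⟨i, j⟩ := c
  simp only
  constructor
  · rintro ⟨hc, hl⟩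
    have hge : μ.rowLen i ≤ j := by
      by_contra h
      exact hc (YoungDiagram.mem_iff_lt_rowLen.mpr (by omega))
    have heq : j = μ.rowLen i := by
      by_contra h
      have hm : (i, μ.rowLen i) ∈ μ := lower_insert_mem hl
        (Prod.mk_le_mk.mpr ⟨le_refl _, by omega⟩)
        (by intro h'; rw [Prod.mk.injEq] at h'; omega)
      have := YoungDiagram.mem_iff_lt_rowLen.mp hm
      omega
    refine ⟨heq, ?_⟩
    rcases Nat.eq_zero_or_pos i with h | h
    · exact Or.inl h
    · refine Or.inr ?_
      have hm : (i - 1, j) ∈ μ := lower_insert_mem hl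
        (Prod.mk_le_mk.mpr ⟨by omega, le_refl _⟩)
        (by intro h'; rw [Prod.mk.injEq] at h'; omega)
      exact YoungDiagram.mem_iff_lt_rowLen.mp hm
  · rintro ⟨heq, hi⟩
    have hc : (i, j) ∉ μ := by
      intro h
      have := YoungDiagram.mem_iff_lt_rowLen.mp h
      omega
    refine ⟨hc, ?_⟩
    intro x y hyx hx
    rcases hx with h | h
    · rcases eq_or_ne y (i, j) with h' | h'
      · exact Or.inl h'
      · refine Or.inr ?_
        rw [Finset.mem_coe, YoungDiagram.mem_cells]
        rw [h] at hyx
        have h1 : y.1 ≤ i := hyx.1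
        have h2 : y.2 ≤ j := hyx.2
        rw [← Prod.mk.eta (p := y), YoungDiagram.mem_iff_lt_rowLen]
        rcases eq_or_ne y.1 i with hy1 | hy1
        · have : y.2 ≠ j := by
            intro hy2
            exact h' (Prod.ext hy1 hy2)
          rw [hy1]; omega
        · have hlt : y.1 < i := by omega
          have h0 : i ≠ 0 := by omega
          have hi2 : j < μ.rowLen (i - 1) := hi.resolve_left h0
          have := μ.rowLen_anti y.1 (i - 1) (by omega)
          omega
    · exact Or.inr (μ.isLowerSet hyx h)

lemma addFinset_lower {μ : YoungDiagram} {c : ℕ × ℕ} (hc : c ∈ addFinset μ) :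
    IsLowerSet (insert c (μ.cells : Set (ℕ × ℕ))) := (mem_addFinset.mp hc).2

lemma addFinset_not_mem {μ : YoungDiagram} {c : ℕ × ℕ} (hc : c ∈ addFinset μ) : c ∉ μ :=
  (mem_addFinset.mp hc).1

lemma addCell_cells {μ : YoungDiagram} {c : ℕ × ℕ} (hc : c ∈ addFinset μ) :
    (addCell μ c).cells = insert c μ.cells := by
  rw [addCell, dif_pos (addFinset_lower hc)]

lemma mem_addCell {μ : YoungDiagram} {c : ℕ × ℕ} (hc : c ∈ addFinset μ) {x : ℕ × ℕ} :
    x ∈ addCell μ c ↔ x = c ∨ x ∈ μ := by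
  rw [← YoungDiagram.mem_cells, addCell_cells hc, Finset.mem_insert, YoungDiagram.mem_cells]

lemma card_addCell {μ : YoungDiagram} {c : ℕ × ℕ} (hc : c ∈ addFinset μ) :
    (addCell μ c).card = μ.card + 1 := by
  rw [YoungDiagram.card, addCell_cells hc, Finset.card_insert_of_notMem]
  intro h
  exact addFinset_not_mem hc ((YoungDiagram.mem_cells _).mp h)

lemma rowLen_eq {ν : YoungDiagram} {i m : ℕ} (h : ∀ j, (i, j) ∈ ν ↔ j < m) :
    ν.rowLen i = m := by
  have h1 : ¬ (m < ν.rowLen i) := fun h' =>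
    absurd ((h m).mp (YoungDiagram.mem_iff_lt_rowLen.mpr h')) (by omega)
  have h2 : ¬ (ν.rowLen i < m) := fun h' =>
    absurd (YoungDiagram.mem_iff_lt_rowLen.mp ((h (ν.rowLen i)).mpr h')) (by omega)
  omega

lemma rowLen_addCell {μ : YoungDiagram} {c : ℕ × ℕ} (hc : c ∈ addFinset μ) (i : ℕ) :
    (addCell μ c).rowLen i = if i = c.1 then c.2 + 1 else μ.rowLen i := by
  have hc2 := (add_iff_rowLen.mp hc).1
  obtain ⟨a, b⟩ := c
  simp only at hc2 ⊢
  apply rowLen_eq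
  intro j
  rw [mem_addCell hc, YoungDiagram.mem_iff_lt_rowLen]
  split_ifs with h
  · subst h
    constructor
    · rintro (h' | h')
      · rw [Prod.mk.injEq] at h'; omega
      · omega
    · intro h'
      rcases eq_or_ne j b with h'' | h''
      · exact Or.inl (by rw [h''])
      · exact Or.inr (by omega)
  · constructor
    · rintro (h' | h')
      · rw [Prod.mk.injEq] at h'; omega
      · exact h'
    · exact Or.inr

lemma rowLen_eraseCell {μ : YoungDiagram} {d : ℕ × ℕ} (hd : d ∈ remFinset μ) (i : ℕ) :
    (eraseCell μ d).rowLen i = if i = d.1 then d.2 else μ.rowLen i := by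
  have hd2 := (rem_iff_rowLen.mp hd).1
  obtain ⟨a, b⟩ := d
  simp only at hd2 ⊢
  apply rowLen_eq
  intro j
  rw [mem_eraseCell hd, YoungDiagram.mem_iff_lt_rowLen]
  split_ifs with h
  · subst h
    constructor
    · rintro ⟨h1, h2⟩
      rw [ne_eq, Prod.mk.injEq] at h1
      omega
    · intro h'
      refine ⟨?_, by omega⟩
      rw [ne_eq, Prod.mk.injEq]
      omega
  · constructor
    · rintro ⟨h1, h2⟩; exact h2
    · intro h'
      refine ⟨?_, h'⟩
      rw [ne_eq, Prod.mk.injEq]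
      omega

lemma c_rem_addCell {μ : YoungDiagram} {c : ℕ × ℕ} (hc : c ∈ addFinset μ) :
    c ∈ remFinset (addCell μ c) := by
  have hc2 := (add_iff_rowLen.mp hc).1
  rw [rem_iff_rowLen, rowLen_addCell hc, rowLen_addCell hc, if_pos rfl, if_neg (by omega)]
  exact ⟨rfl, by have := μ.rowLen_anti c.1 (c.1 + 1) (by omega); omega⟩

lemma d_add_eraseCell {μ : YoungDiagram} {d : ℕ × ℕ} (hd : d ∈ remFinset μ) :
    d ∈ addFinset (eraseCell μ d) := by
  have hd2 := (rem_iff_rowLen.mp hd).1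
  rw [add_iff_rowLen, rowLen_eraseCell hd, if_pos rfl]
  refine ⟨rfl, ?_⟩
  rcases Nat.eq_zero_or_pos d.1 with h | h
  · exact Or.inl h
  · refine Or.inr ?_
    rw [rowLen_eraseCell hd, if_neg (by omega)]
    have := μ.rowLen_anti (d.1 - 1) d.1 (by omega)
    omega

lemma eraseCell_addCell {μ : YoungDiagram} {c : ℕ × ℕ} (hc : c ∈ addFinset μ) :
    eraseCell (addCell μ c) c = μ := by
  have h1 := c_rem_addCell hc
  apply YoungDiagram.ext
  rw [eraseCell_cells h1, addCell_cells hc, Finset.erase_insert]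
  intro h
  exact addFinset_not_mem hc ((YoungDiagram.mem_cells _).mp h)

lemma addCell_eraseCell {μ : YoungDiagram} {d : ℕ × ℕ} (hd : d ∈ remFinset μ) :
    addCell (eraseCell μ d) d = μ := by
  have h1 := d_add_eraseCell hd
  apply YoungDiagram.ext
  rw [addCell_cells h1, eraseCell_cells hd, Finset.insert_erase]
  exact (YoungDiagram.mem_cells _).mpr (mem_remFinset.mp hd).1

/-- `c` is not the right or lower neighbour of `d`. -/
def Q (c d : ℕ × ℕ) : Prop :=
  ¬(c.1 = d.1 ∧ c.2 = d.2 + 1) ∧ ¬(c.1 = d.1 + 1 ∧ c.2 = d.2)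

instance (c d : ℕ × ℕ) : Decidable (Q c d) := by unfold Q; infer_instance

lemma remFinset_addCell {μ : YoungDiagram} {c : ℕ × ℕ} (hc : c ∈ addFinset μ) :
    remFinset (addCell μ c) = insert c ((remFinset μ).filter (fun d => Q c d)) := by
  have hc2 := add_iff_rowLen.mp hc
  ext d
  rw [Finset.mem_insert, Finset.mem_filter, rem_iff_rowLen, rem_iff_rowLen,
    rowLen_addCell hc, rowLen_addCell hc]
  obtain ⟨a, b⟩ := c
  obtain ⟨i, j⟩ := d
  simp only [Q, Prod.mk.injEq] at hc2 ⊢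
  rcases eq_or_ne i a with rfl | hia
  · rw [if_pos rfl, if_neg (by omega)]
    have h1 := μ.rowLen_anti i (i + 1) (by omega)
    omega
  · rw [if_neg hia]
    rcases eq_or_ne (i + 1) a with h | h
    · subst h
      rw [if_pos rfl]
      simp only [Nat.add_sub_cancel] at hc2
      omega
    · rw [if_neg h]
      omega

lemma addFinset_eraseCell {μ : YoungDiagram} {d : ℕ × ℕ} (hd : d ∈ remFinset μ) :
    addFinset (eraseCell μ d) = insert d ((addFinset μ).filter (fun c => Q c d)) := by
  have hd2 := rem_iff_rowLen.mp hd
  ext c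
  rw [Finset.mem_insert, Finset.mem_filter, add_iff_rowLen, add_iff_rowLen,
    rowLen_eraseCell hd, rowLen_eraseCell hd]
  obtain ⟨a, b⟩ := c
  obtain ⟨i, j⟩ := d
  simp only [Q, Prod.mk.injEq] at hd2 ⊢
  rcases eq_or_ne a i with rfl | hai
  · rw [if_pos rfl]
    rcases Nat.eq_zero_or_pos a with rfl | hi
    · rw [if_pos rfl]
      simp only [Nat.zero_sub, true_and, and_true, true_or, or_true] at hd2 ⊢
      omega
    · rw [if_neg (by omega)]
      have h1 := μ.rowLen_anti (a - 1) a (by omega)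
      omega
  · rw [if_neg hai]
    rcases eq_or_ne a (i + 1) with rfl | hai2
    · rw [if_pos (by omega)]
      simp only [Nat.add_sub_cancel, true_and, and_true, true_or, or_true]
      omega
    · rw [if_neg (by omega)]
      omega

lemma erase_add_comm {μ : YoungDiagram} {c d : ℕ × ℕ} (hc : c ∈ addFinset μ)
    (hd : d ∈ remFinset μ) (hQ : Q c d) :
    eraseCell (addCell μ c) d = addCell (eraseCell μ d) c := by
  have hd' : d ∈ remFinset (addCell μ c) := by
    rw [remFinset_addCell hc]
    exact Finset.mem_insert_of_mem (Finset.mem_filter.mpr ⟨hd, hQ⟩)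
  have hc' : c ∈ addFinset (eraseCell μ d) := by
    rw [addFinset_eraseCell hd]
    exact Finset.mem_insert_of_mem (Finset.mem_filter.mpr ⟨hc, hQ⟩)
  have hne : d ≠ c := by
    intro h
    exact addFinset_not_mem hc (h ▸ (mem_remFinset.mp hd).1)
  apply YoungDiagram.ext
  rw [eraseCell_cells hd', addCell_cells hc, addCell_cells hc', eraseCell_cells hd,
    Finset.erase_insert_of_ne (Ne.symm hne)]

lemma sum_add_rows {μ : YoungDiagram} :
    ∑ c ∈ addFinset μ, c.1 = ∑ d ∈ remFinset μ, (d.1 + 1) := by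
  rw [← Finset.sum_filter_of_ne (p := fun c => c.1 ≠ 0)
    (fun x _ h => by simpa using h)]
  refine Finset.sum_nbij' (fun c => (c.1 - 1, μ.rowLen (c.1 - 1) - 1))
    (fun d => (d.1 + 1, μ.rowLen (d.1 + 1))) ?_ ?_ ?_ ?_ ?_
  · intro c hc
    rw [Finset.mem_filter] at hc
    obtain ⟨hc, hc0⟩ := hc
    have h1 := add_iff_rowLen.mp hc
    obtain ⟨a', ha⟩ : ∃ a', c.1 = a' + 1 := ⟨c.1 - 1, by omega⟩
    rw [rem_iff_rowLen]
    dsimp only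
    simp only [ha, Nat.add_sub_cancel] at h1 ⊢
    have h2 := μ.rowLen_anti a' (a' + 1) (by omega)
    omega
  · intro d hd
    have h1 := rem_iff_rowLen.mp hd
    rw [Finset.mem_filter, add_iff_rowLen]
    dsimp only
    simp only [Nat.add_sub_cancel, true_and, and_true, true_or, or_true]
    omega
  · intro c hc
    rw [Finset.mem_filter] at hc
    obtain ⟨hc, hc0⟩ := hc
    have h1 := add_iff_rowLen.mp hc
    have hcc : c.1 - 1 + 1 = c.1 := by omega
    rw [Prod.ext_iff]
    dsimp only
    simp only [hcc]
    exact ⟨trivial, by omega⟩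
  · intro d hd
    have h1 := rem_iff_rowLen.mp hd
    rw [Prod.ext_iff]
    dsimp only
    simp only [Nat.add_sub_cancel]
    exact ⟨trivial, by omega⟩
  · intro c hc
    rw [Finset.mem_filter] at hc
    simp only
    omega

lemma SYT.ext' {μ : YoungDiagram} {T U : SYT μ} (h : T.entry = U.entry) : T = U := by
  cases T; cases U; cases h; rfl

lemma SBSVT.ext' {μ : YoungDiagram} {T U : SBSVT μ} (h : T.entry = U.entry) : T = U := by
  cases T; cases U; cases h; rfl

instance (μ : YoungDiagram) : Finite (SYT μ) := by
  let f : SYT μ → (μ.cells → Finset.Icc 1 μ.card) := fun T c =>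
    ⟨T.entry c, by
      have := T.bijOn.mapsTo (Finset.mem_coe.mpr c.2)
      rw [Finset.mem_Icc]
      exact ⟨this.1, this.2⟩⟩
  have hf : Function.Injective f := by
    intro T U h
    apply SYT.ext'
    funext c
    by_cases hc : c ∈ μ.cells
    · have := congrFun h ⟨c, hc⟩
      exact Subtype.ext_iff.mp this
    · rw [T.outside c (fun h' => hc ((YoungDiagram.mem_cells _).mpr h')),
        U.outside c (fun h' => hc ((YoungDiagram.mem_cells _).mpr h'))]
  exact Finite.of_injective f hf

instance (μ : YoungDiagram) : Finite (SBSVT μ) := by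
  let f : SBSVT μ → (μ.cells → (Finset.Icc 1 (μ.card + 1)).powerset) := fun S c =>
    ⟨S.entry c, by
      rw [Finset.mem_powerset]
      exact S.mem_range c ((YoungDiagram.mem_cells _).mp c.2)⟩
  have hf : Function.Injective f := by
    intro T U h
    apply SBSVT.ext'
    funext c
    by_cases hc : c ∈ μ.cells
    · have := congrFun h ⟨c, hc⟩
      exact Subtype.ext_iff.mp this
    · rw [T.outside c (fun h' => hc ((YoungDiagram.mem_cells _).mpr h')),
        U.outside c (fun h' => hc ((YoungDiagram.mem_cells _).mpr h'))]
  exact Finite.of_injective f hf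

lemma nat_card_sigma {ι : Type*} [Fintype ι] (f : ι → Type*) [∀ i, Finite (f i)] :
    Nat.card (Σ i, f i) = ∑ i, Nat.card (f i) := by
  letI : ∀ i, Fintype (f i) := fun i => Fintype.ofFinite _
  simp [Nat.card_eq_fintype_card, Fintype.card_sigma]

/-! ### Branching rule for SYT -/

lemma icc_insert (m : ℕ) (hm : 0 < m) :
    Set.Icc 1 m = insert m (Set.Icc 1 (m - 1)) := by
  ext k
  simp only [Set.mem_Icc, Set.mem_insert_iff]
  omega

lemma mem_erase_coe {ν : YoungDiagram} {d : ℕ × ℕ} (hd : d ∈ remFinset ν) :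
    ((eraseCell ν d).cells : Set (ℕ × ℕ)) = (ν.cells : Set (ℕ × ℕ)) \ {d} := by
  rw [eraseCell_cells hd, Finset.coe_erase]

lemma not_mem_self_erase {ν : YoungDiagram} {d : ℕ × ℕ} (hd : d ∈ remFinset ν) :
    d ∉ eraseCell ν d := by
  rw [mem_eraseCell hd]
  simp

lemma entry_le_of_erase {ν : YoungDiagram} {d : ℕ × ℕ} (hd : d ∈ remFinset ν)
    (T : SYT (eraseCell ν d)) {c : ℕ × ℕ} (hc : c ∈ eraseCell ν d) :
    1 ≤ T.entry c ∧ T.entry c ≤ ν.card - 1 := by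
  have := T.bijOn.mapsTo (Finset.mem_coe.mpr ((YoungDiagram.mem_cells _).mpr hc))
  rw [Set.mem_Icc, card_eraseCell hd] at this
  exact this

lemma no_right_of_rem {ν : YoungDiagram} {d : ℕ × ℕ} (hd : d ∈ remFinset ν)
    {i j1 j2 : ℕ} (h1 : (i, j1) = d) (hj : j1 < j2) (h2 : (i, j2) ∈ ν) : False := by
  have hi : i = d.1 := congrArg Prod.fst h1
  have hj1 : j1 = d.2 := congrArg Prod.snd h1
  have : (d.1, d.2 + 1) ∈ ν := ν.up_left_mem (by omega) (by omega) h2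
  exact (mem_remFinset.mp hd).2.1 this

lemma no_below_of_rem {ν : YoungDiagram} {d : ℕ × ℕ} (hd : d ∈ remFinset ν)
    {i1 i2 j : ℕ} (h1 : (i1, j) = d) (hi : i1 < i2) (h2 : (i2, j) ∈ ν) : False := by
  have hi1 : i1 = d.1 := congrArg Prod.fst h1
  have hj1 : j = d.2 := congrArg Prod.snd h1
  have : (d.1 + 1, d.2) ∈ ν := ν.up_left_mem (by omega) (by omega) h2
  exact (mem_remFinset.mp hd).2.2 this

def sytUp {ν : YoungDiagram} {d : ℕ × ℕ} (hd : d ∈ remFinset ν)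
    (T : SYT (eraseCell ν d)) : SYT ν where
  entry c := if c = d then ν.card else T.entry c
  outside c hc := by
    rw [if_neg (fun h => hc (by rw [h]; exact (mem_remFinset.mp hd).1)), T.outside]
    rw [mem_eraseCell hd]
    exact fun h => hc h.2
  bijOn := by
    have hm : 0 < ν.card :=
      Finset.card_pos.mpr ⟨d, (YoungDiagram.mem_cells _).mpr (mem_remFinset.mp hd).1⟩
    have hb : Set.BijOn (fun c => if c = d then ν.card else T.entry c)
        ((ν.cells : Set (ℕ × ℕ)) \ {d}) (Set.Icc 1 (ν.card - 1)) := by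
      have := T.bijOn
      rw [mem_erase_coe hd, card_eraseCell hd] at this
      exact this.congr (fun c hc => by
        rw [if_neg (by exact fun h => hc.2 h)])
    have hb2 := hb.insert (a := d) (by
      rw [if_pos rfl, Set.mem_Icc]
      omega)
    rw [if_pos rfl] at hb2
    rw [← icc_insert _ hm, Set.insert_diff_singleton,
      Set.insert_eq_of_mem (Finset.mem_coe.mpr ((YoungDiagram.mem_cells _).mpr
        (mem_remFinset.mp hd).1))] at hb2
    exact hb2
  row_lt i j1 j2 hj h2 := by
    have hm : 0 < ν.card :=
      Finset.card_pos.mpr ⟨d, (YoungDiagram.mem_cells _).mpr (mem_remFinset.mp hd).1⟩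
    have hne1 : (i, j1) ≠ d := fun h => no_right_of_rem hd h hj h2
    rw [if_neg hne1]
    by_cases hne2 : (i, j2) = d
    · rw [if_pos hne2]
      have h1m : (i, j1) ∈ eraseCell ν d := by
        rw [mem_eraseCell hd]
        exact ⟨hne1, ν.up_left_mem (le_refl _) (by omega) h2⟩
      have := (entry_le_of_erase hd T h1m).2
      omega
    · rw [if_neg hne2]
      exact T.row_lt i j1 j2 hj (by rw [mem_eraseCell hd]; exact ⟨hne2, h2⟩)
  col_lt i1 i2 j hi h2 := by
    have hne1 : (i1, j) ≠ d := fun h => no_below_of_rem hd h hi h2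
    rw [if_neg hne1]
    by_cases hne2 : (i2, j) = d
    · rw [if_pos hne2]
      have h1m : (i1, j) ∈ eraseCell ν d := by
        rw [mem_eraseCell hd]
        exact ⟨hne1, ν.up_left_mem (by omega) (le_refl _) h2⟩
      have := (entry_le_of_erase hd T h1m).2
      have hm : 0 < ν.card :=
        Finset.card_pos.mpr ⟨d, (YoungDiagram.mem_cells _).mpr (mem_remFinset.mp hd).1⟩
      omega
    · rw [if_neg hne2]
      exact T.col_lt i1 i2 j hi (by rw [mem_eraseCell hd]; exact ⟨hne2, h2⟩)

lemma sytUp_entry_self {ν : YoungDiagram} {d : ℕ × ℕ} (hd : d ∈ remFinset ν)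
    (T : SYT (eraseCell ν d)) : (sytUp hd T).entry d = ν.card := if_pos rfl

def sytDown {ν : YoungDiagram} {d : ℕ × ℕ} (hd : d ∈ remFinset ν) (U : SYT ν)
    (hde : U.entry d = ν.card) : SYT (eraseCell ν d) where
  entry c := if c = d then 0 else U.entry c
  outside c hc := by
    by_cases h : c = d
    · rw [if_pos h]
    · rw [if_neg h]
      rw [mem_eraseCell hd] at hc
      push_neg at hc
      exact U.outside c (hc h)
  bijOn := by
    have hdc : d ∈ (ν.cells : Set (ℕ × ℕ)) :=
      Finset.mem_coe.mpr ((YoungDiagram.mem_cells _).mpr (mem_remFinset.mp hd).1)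
    have hm : 0 < ν.card :=
      Finset.card_pos.mpr ⟨d, (YoungDiagram.mem_cells _).mpr (mem_remFinset.mp hd).1⟩
    have hbij : Set.BijOn U.entry ((ν.cells : Set (ℕ × ℕ)) \ {d})
        (Set.Icc 1 ν.card \ {ν.card}) := by
      refine ⟨fun c hc => ?_, U.bijOn.injOn.mono Set.diff_subset, fun k hk => ?_⟩
      · refine ⟨U.bijOn.mapsTo hc.1, fun hk => hc.2 ?_⟩
        have := U.bijOn.injOn hc.1 hdc (by rw [hde]; exact hk)
        simp [this]
      · obtain ⟨c, hc, hck⟩ := U.bijOn.surjOn hk.1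
        refine ⟨c, ⟨hc, fun hcd => hk.2 ?_⟩, hck⟩
        rw [← hck]
        simp only [Set.mem_singleton_iff] at hcd ⊢
        rw [hcd, hde]
    have hicc : Set.Icc 1 ν.card \ {ν.card} = Set.Icc 1 ((eraseCell ν d).card) := by
      rw [card_eraseCell hd]
      ext k
      simp only [Set.mem_Icc, Set.mem_diff, Set.mem_singleton_iff]
      omega
    rw [hicc, ← mem_erase_coe hd] at hbij
    exact hbij.congr (fun c hc => by
      rw [mem_erase_coe hd] at hc
      rw [if_neg (show ¬(c = d) from fun h => hc.2 h)])
  row_lt i j1 j2 hj h2 := by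
    rw [mem_eraseCell hd] at h2
    have hne1 : (i, j1) ≠ d := fun h => no_right_of_rem hd h hj h2.2
    rw [if_neg hne1, if_neg h2.1]
    exact U.row_lt i j1 j2 hj h2.2
  col_lt i1 i2 j hi h2 := by
    rw [mem_eraseCell hd] at h2
    have hne1 : (i1, j) ≠ d := fun h => no_below_of_rem hd h hi h2.2
    rw [if_neg hne1, if_neg h2.1]
    exact U.col_lt i1 i2 j hi h2.2

lemma sytG_bijective (ν : YoungDiagram) (hν : 0 < ν.card) :
    Function.Bijective (fun p : (Σ d : {d // d ∈ remFinset ν}, SYT (eraseCell ν d.1)) =>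
      sytUp p.1.2 p.2) := by
  constructor
  · rintro ⟨⟨d, hd⟩, T⟩ ⟨⟨d', hd'⟩, T'⟩ h
    simp only at h
    have hdd : d = d' := by
      by_contra hne
      have h1 : (sytUp hd T).entry d = ν.card := sytUp_entry_self hd T
      have h2 : (sytUp hd' T').entry d = T'.entry d := if_neg hne
      have hmem : d ∈ eraseCell ν d' := by
        rw [mem_eraseCell hd']
        exact ⟨hne, (mem_remFinset.mp hd).1⟩
      have h3 := (entry_le_of_erase hd' T' hmem).2
      rw [h] at h1
      omega
    subst hdd
    have hTT : T = T' := by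
      apply SYT.ext'
      funext c
      by_cases hc : c = d
      · rw [hc, T.outside d (not_mem_self_erase hd), T'.outside d (not_mem_self_erase hd)]
      · have := congrFun (congrArg SYT.entry h) c
        simpa [sytUp, if_neg hc] using this
    subst hTT
    rfl
  · intro U
    have hm : ν.card ∈ Set.Icc 1 ν.card := Set.mem_Icc.mpr ⟨hν, le_refl _⟩
    obtain ⟨d, hdc, hde⟩ := U.bijOn.surjOn hm
    have hdμ : d ∈ ν := (YoungDiagram.mem_cells _).mp (Finset.mem_coe.mp hdc)
    have hd : d ∈ remFinset ν := by
      rw [mem_remFinset]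
      refine ⟨hdμ, fun hr => ?_, fun hb => ?_⟩
      · have hlt := U.row_lt d.1 d.2 (d.2 + 1) (by omega) hr
        have hle := (U.bijOn.mapsTo (Finset.mem_coe.mpr ((YoungDiagram.mem_cells _).mpr hr))).2
        rw [Prod.mk.eta, hde] at hlt
        omega
      · have hlt := U.col_lt d.1 (d.1 + 1) d.2 (by omega) hb
        have hle := (U.bijOn.mapsTo (Finset.mem_coe.mpr ((YoungDiagram.mem_cells _).mpr hb))).2
        rw [Prod.mk.eta, hde] at hlt
        omega
    refine ⟨⟨⟨d, hd⟩, sytDown hd U hde⟩, ?_⟩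
    apply SYT.ext'
    funext c
    by_cases hc : c = d
    · rw [hc]
      show (if d = d then ν.card else _) = U.entry d
      rw [if_pos rfl, hde]
    · show (if c = d then ν.card else (sytDown hd U hde).entry c) = U.entry c
      rw [if_neg hc]
      show (if c = d then 0 else U.entry c) = U.entry c
      rw [if_neg hc]

lemma card_syt (ν : YoungDiagram) (hν : 0 < ν.card) :
    Nat.card (SYT ν) = ∑ d ∈ remFinset ν, Nat.card (SYT (eraseCell ν d)) := by
  rw [← Nat.card_eq_of_bijective _ (sytG_bijective ν hν), nat_card_sigma]
  rw [← Finset.sum_coe_sort (remFinset ν) (fun d => Nat.card (SYT (eraseCell ν d)))]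

/-! ### SBSVT recursion -/

lemma syt_bounds {μ : YoungDiagram} (T : SYT μ) {c : ℕ × ℕ} (hc : c ∈ μ) :
    1 ≤ T.entry c ∧ T.entry c ≤ μ.card :=
  Set.mem_Icc.mp (T.bijOn.mapsTo (Finset.mem_coe.mpr ((YoungDiagram.mem_cells _).mpr hc)))

lemma sbsvt_bounds {μ : YoungDiagram} (X : SBSVT μ) {c : ℕ × ℕ} (hc : c ∈ μ) {a : ℕ}
    (ha : a ∈ X.entry c) : 1 ≤ a ∧ a ≤ μ.card + 1 :=
  Finset.mem_Icc.mp (X.mem_range c hc ha)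

lemma top_unique {μ : YoungDiagram} (X : SBSVT μ) {c c' : ℕ × ℕ} (hc : c ∈ μ) (hc' : c' ∈ μ)
    {k : ℕ} (hk1 : 1 ≤ k) (hk2 : k ≤ μ.card + 1) (h1 : k ∈ X.entry c) (h2 : k ∈ X.entry c') :
    c = c' := by
  obtain ⟨y, _, hyu⟩ := X.exactly_once k (Finset.mem_Icc.mpr ⟨hk1, hk2⟩)
  rw [hyu c ⟨hc, h1⟩, hyu c' ⟨hc', h2⟩]

def sbsvtUp1 {μ : YoungDiagram} {d : ℕ × ℕ} (hd : d ∈ remFinset μ) (T : SYT μ) : SBSVT μ where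
  entry c := if c ∈ μ then (if c = d then {T.entry d, μ.card + 1} else {T.entry c}) else ∅
  outside c hc := by rw [if_neg hc]
  nonempty c hc := by
    rw [if_pos hc]
    split_ifs
    · exact Finset.insert_nonempty _ _
    · exact Finset.singleton_nonempty _
  card_le c hc := by
    rw [if_pos hc]
    split_ifs
    · exact (Finset.card_insert_le _ _).trans (by simp)
    · simp
  unique_double := by
    have hdμ := (mem_remFinset.mp hd).1
    have hTd := (syt_bounds T hdμ).2
    refine ⟨d, ⟨hdμ, ?_⟩, ?_⟩
    · rw [if_pos hdμ, if_pos rfl,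
        Finset.card_insert_of_notMem (by rw [Finset.mem_singleton]; omega),
        Finset.card_singleton]
    · rintro c ⟨hcμ, hc2⟩
      by_contra hne
      rw [if_pos hcμ, if_neg hne, Finset.card_singleton] at hc2
      omega
  mem_range c hc := by
    rw [if_pos hc]
    have hb := syt_bounds T hc
    split_ifs with h
    · intro a ha
      rw [Finset.mem_insert, Finset.mem_singleton] at ha
      have hbd := syt_bounds T (mem_remFinset.mp hd).1
      rw [Finset.mem_Icc]
      rcases ha with rfl | rfl
      · omega
      · omega
    · intro a ha
      rw [Finset.mem_singleton] at ha
      subst ha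
      rw [Finset.mem_Icc]
      omega
  exactly_once k hk := by
    have hdμ := (mem_remFinset.mp hd).1
    rw [Finset.mem_Icc] at hk
    by_cases hk1 : k = μ.card + 1
    · refine ⟨d, ⟨hdμ, ?_⟩, ?_⟩
      · rw [if_pos hdμ, if_pos rfl, hk1]
        exact Finset.mem_insert_of_mem (Finset.mem_singleton_self _)
      · rintro c ⟨hcμ, hck⟩
        rw [if_pos hcμ] at hck
        by_cases h : c = d
        · exact h
        · rw [if_neg h, Finset.mem_singleton] at hck
          have := (syt_bounds T hcμ).2
          omega
    · have hk' : k ∈ Set.Icc 1 μ.card := Set.mem_Icc.mpr ⟨hk.1, by omega⟩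
      obtain ⟨c, hcc, hck⟩ := T.bijOn.surjOn hk'
      have hcμ : c ∈ μ := (YoungDiagram.mem_cells _).mp (Finset.mem_coe.mp hcc)
      refine ⟨c, ⟨hcμ, ?_⟩, ?_⟩
      · rw [if_pos hcμ]
        split_ifs with h
        · subst h
          exact Finset.mem_insert.mpr (Or.inl hck.symm)
        · rw [Finset.mem_singleton]
          exact hck.symm
      · rintro y ⟨hyμ, hyk⟩
        rw [if_pos hyμ] at hyk
        have hyT : T.entry y = k := by
          by_cases h : y = d
          · subst h
            rw [if_pos rfl] at hyk
            rcases Finset.mem_insert.mp hyk with h' | h'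
            · exact h'.symm
            · rw [Finset.mem_singleton] at h'
              exact absurd h' hk1
          · rw [if_neg h, Finset.mem_singleton] at hyk
            exact hyk.symm
        exact T.bijOn.injOn (Finset.mem_coe.mpr ((YoungDiagram.mem_cells _).mpr hyμ)) hcc
          (hyT.trans hck.symm)
  row_le i j1 j2 hj h2 a ha b hb := by
    have h1μ : (i, j1) ∈ μ := μ.up_left_mem (le_refl _) (by omega) h2
    rw [if_pos h1μ] at ha
    rw [if_pos h2] at hb
    have hne1 : (i, j1) ≠ d := fun h => no_right_of_rem hd h hj h2
    rw [if_neg hne1, Finset.mem_singleton] at ha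
    subst ha
    have hlt := T.row_lt i j1 j2 hj h2
    by_cases h : (i, j2) = d
    · rw [if_pos h] at hb
      rw [h] at hlt
      rcases Finset.mem_insert.mp hb with h' | h'
      · omega
      · rw [Finset.mem_singleton] at h'
        have := (syt_bounds T h1μ).2
        omega
    · rw [if_neg h, Finset.mem_singleton] at hb
      omega
  col_lt i1 i2 j hi h2 a ha b hb := by
    have h1μ : (i1, j) ∈ μ := μ.up_left_mem (by omega) (le_refl _) h2
    rw [if_pos h1μ] at ha
    rw [if_pos h2] at hb
    have hne1 : (i1, j) ≠ d := fun h => no_below_of_rem hd h hi h2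
    rw [if_neg hne1, Finset.mem_singleton] at ha
    subst ha
    have hlt := T.col_lt i1 i2 j hi h2
    by_cases h : (i2, j) = d
    · rw [if_pos h] at hb
      rw [h] at hlt
      rcases Finset.mem_insert.mp hb with h' | h'
      · omega
      · rw [Finset.mem_singleton] at h'
        have := (syt_bounds T h1μ).2
        omega
    · rw [if_neg h, Finset.mem_singleton] at hb
      omega

def sbsvtUp2 {μ : YoungDiagram} {d : ℕ × ℕ} (hd : d ∈ remFinset μ)
    (S : SBSVT (eraseCell μ d)) : SBSVT μ where
  entry c := if c = d then {μ.card + 1} else S.entry c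
  outside c hc := by
    have hcd : c ≠ d := fun h => hc (h ▸ (mem_remFinset.mp hd).1)
    rw [if_neg hcd]
    exact S.outside c (by rw [mem_eraseCell hd]; exact fun h => hc h.2)
  nonempty c hc := by
    by_cases h : c = d
    · rw [if_pos h]
      exact Finset.singleton_nonempty _
    · rw [if_neg h]
      exact S.nonempty c (by rw [mem_eraseCell hd]; exact ⟨h, hc⟩)
  card_le c hc := by
    by_cases h : c = d
    · rw [if_pos h]
      simp
    · rw [if_neg h]
      exact S.card_le c (by rw [mem_eraseCell hd]; exact ⟨h, hc⟩)
  unique_double := by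
    obtain ⟨c₀, ⟨hc₀m, hc₀2⟩, hun⟩ := S.unique_double
    have hc₀ := (mem_eraseCell hd).mp hc₀m
    refine ⟨c₀, ⟨hc₀.2, ?_⟩, ?_⟩
    · rw [if_neg hc₀.1]
      exact hc₀2
    · rintro y ⟨hyμ, hy2⟩
      by_cases h : y = d
      · rw [if_pos h, Finset.card_singleton] at hy2
        omega
      · rw [if_neg h] at hy2
        exact hun y ⟨(mem_eraseCell hd).mpr ⟨h, hyμ⟩, hy2⟩
  mem_range c hc := by
    have hm1 := card_eraseCell' hd
    by_cases h : c = d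
    · rw [if_pos h]
      intro a ha
      rw [Finset.mem_singleton] at ha
      rw [ha, Finset.mem_Icc]
      omega
    · rw [if_neg h]
      intro a ha
      have := sbsvt_bounds S ((mem_eraseCell hd).mpr ⟨h, hc⟩) ha
      rw [Finset.mem_Icc]
      omega
  exactly_once k hk := by
    have hm1 := card_eraseCell' hd
    have hdμ := (mem_remFinset.mp hd).1
    rw [Finset.mem_Icc] at hk
    by_cases hk1 : k = μ.card + 1
    · refine ⟨d, ⟨hdμ, ?_⟩, ?_⟩
      · rw [if_pos rfl, Finset.mem_singleton]
        exact hk1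
      · rintro y ⟨hyμ, hyk⟩
        by_cases h : y = d
        · exact h
        · rw [if_neg h] at hyk
          have := sbsvt_bounds S ((mem_eraseCell hd).mpr ⟨h, hyμ⟩) hyk
          omega
    · obtain ⟨c, ⟨hcm, hck⟩, hcu⟩ := S.exactly_once k (Finset.mem_Icc.mpr ⟨hk.1, by omega⟩)
      have hc := (mem_eraseCell hd).mp hcm
      refine ⟨c, ⟨hc.2, ?_⟩, ?_⟩
      · rw [if_neg hc.1]
        exact hck
      · rintro y ⟨hyμ, hyk⟩
        by_cases h : y = d
        · rw [if_pos h, Finset.mem_singleton] at hyk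
          exact absurd hyk hk1
        · rw [if_neg h] at hyk
          exact hcu y ⟨(mem_eraseCell hd).mpr ⟨h, hyμ⟩, hyk⟩
  row_le i j1 j2 hj h2 a ha b hb := by
    have hm1 := card_eraseCell' hd
    have hne1 : (i, j1) ≠ d := fun h => no_right_of_rem hd h hj h2
    rw [if_neg hne1] at ha
    have haS : (i, j1) ∈ eraseCell μ d := by
      by_contra h
      rw [S.outside _ h] at ha
      exact absurd ha (Finset.notMem_empty a)
    have hab := sbsvt_bounds S haS ha
    by_cases h : (i, j2) = d
    · rw [if_pos h, Finset.mem_singleton] at hb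
      omega
    · rw [if_neg h] at hb
      exact S.row_le i j1 j2 hj ((mem_eraseCell hd).mpr ⟨h, h2⟩) a ha b hb
  col_lt i1 i2 j hi h2 a ha b hb := by
    have hm1 := card_eraseCell' hd
    have hne1 : (i1, j) ≠ d := fun h => no_below_of_rem hd h hi h2
    rw [if_neg hne1] at ha
    have haS : (i1, j) ∈ eraseCell μ d := by
      by_contra h
      rw [S.outside _ h] at ha
      exact absurd ha (Finset.notMem_empty a)
    have hab := sbsvt_bounds S haS ha
    by_cases h : (i2, j) = d
    · rw [if_pos h, Finset.mem_singleton] at hb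
      omega
    · rw [if_neg h] at hb
      exact S.col_lt i1 i2 j hi ((mem_eraseCell hd).mpr ⟨h, h2⟩) a ha b hb

/-- The small entry of each cell of a barely set-valued tableau. -/
noncomputable def tEnt {μ : YoungDiagram} (X : SBSVT μ) (c : ℕ × ℕ) : ℕ :=
  sInf {a | a ∈ X.entry c ∧ a ≠ μ.card + 1}

lemma tEnt_spec {μ : YoungDiagram} (X : SBSVT μ) {d c : ℕ × ℕ} (hdμ : d ∈ μ)
    (htop : μ.card + 1 ∈ X.entry d) (hcard : (X.entry d).card = 2) (hc : c ∈ μ) :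
    tEnt X c ∈ X.entry c ∧ tEnt X c ≠ μ.card + 1 := by
  show tEnt X c ∈ {a | a ∈ X.entry c ∧ a ≠ μ.card + 1}
  apply Nat.sInf_mem
  by_cases h : c = d
  · subst h
    have h1 : ((X.entry c).erase (μ.card + 1)).card = 1 := by
      rw [Finset.card_erase_of_mem htop, hcard]
    obtain ⟨a, ha⟩ := (Finset.card_pos (s := (X.entry c).erase (μ.card + 1))).mp (by omega)
    rw [Finset.mem_erase] at ha
    exact ⟨a, ha.2, ha.1⟩
  · obtain ⟨a, ha⟩ := X.nonempty c hc
    refine ⟨a, ha, fun he => ?_⟩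
    rw [he] at ha
    exact h (top_unique X hc hdμ (by omega) (le_refl _) ha htop)

lemma tEnt_eq {μ : YoungDiagram} (X : SBSVT μ) {d c : ℕ × ℕ} (hdμ : d ∈ μ)
    (htop : μ.card + 1 ∈ X.entry d) (hcard : (X.entry d).card = 2) (hc : c ∈ μ)
    {k : ℕ} (hk : k ∈ X.entry c) (hkne : k ≠ μ.card + 1) : tEnt X c = k := by
  have hspec := tEnt_spec X hdμ htop hcard hc
  by_cases h : c = d
  · subst h
    have h1 : ((X.entry c).erase (μ.card + 1)).card = 1 := by
      rw [Finset.card_erase_of_mem htop, hcard]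
    obtain ⟨a, ha⟩ := Finset.card_eq_one.mp h1
    have e1 : k = a := by
      have := Finset.mem_erase.mpr ⟨hkne, hk⟩
      rwa [ha, Finset.mem_singleton] at this
    have e2 : tEnt X c = a := by
      have := Finset.mem_erase.mpr ⟨hspec.2, hspec.1⟩
      rwa [ha, Finset.mem_singleton] at this
    rw [e2, e1]
  · have hcne2 : (X.entry c).card ≠ 2 := by
      intro h2
      obtain ⟨c₀, _, hu⟩ := X.unique_double
      exact h ((hu c ⟨hc, h2⟩).trans (hu d ⟨hdμ, hcard⟩).symm)
    have h1 : (X.entry c).card = 1 := by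
      have := X.card_le c hc
      have := Finset.card_pos.mpr (X.nonempty c hc)
      omega
    obtain ⟨a, ha⟩ := Finset.card_eq_one.mp h1
    have e1 : k = a := by rwa [ha, Finset.mem_singleton] at hk
    have e2 : tEnt X c = a := by
      have := hspec.1
      rwa [ha, Finset.mem_singleton] at this
    rw [e2, e1]

lemma entry_single {μ : YoungDiagram} (X : SBSVT μ) {d c : ℕ × ℕ} (hdμ : d ∈ μ)
    (htop : μ.card + 1 ∈ X.entry d) (hcard : (X.entry d).card = 2) (hc : c ∈ μ)
    (hne : c ≠ d) : X.entry c = {tEnt X c} := by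
  have hcne2 : (X.entry c).card ≠ 2 := by
    intro h2
    obtain ⟨c₀, _, hu⟩ := X.unique_double
    exact hne ((hu c ⟨hc, h2⟩).trans (hu d ⟨hdμ, hcard⟩).symm)
  have h1 : (X.entry c).card = 1 := by
    have := X.card_le c hc
    have := Finset.card_pos.mpr (X.nonempty c hc)
    omega
  obtain ⟨a, ha⟩ := Finset.card_eq_one.mp h1
  have e2 : tEnt X c = a := by
    have := (tEnt_spec X hdμ htop hcard hc).1
    rwa [ha, Finset.mem_singleton] at this
  rw [ha, e2]

lemma entry_pair {μ : YoungDiagram} (X : SBSVT μ) {d : ℕ × ℕ} (hdμ : d ∈ μ)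
    (htop : μ.card + 1 ∈ X.entry d) (hcard : (X.entry d).card = 2) :
    X.entry d = {tEnt X d, μ.card + 1} := by
  have hspec := tEnt_spec X hdμ htop hcard hdμ
  refine (Finset.eq_of_subset_of_card_le ?_ ?_).symm
  · rw [Finset.insert_subset_iff, Finset.singleton_subset_iff]
    exact ⟨hspec.1, htop⟩
  · rw [hcard, Finset.card_insert_of_notMem (by rw [Finset.mem_singleton]; exact hspec.2),
      Finset.card_singleton]

noncomputable def sbsvtDown1 {μ : YoungDiagram} (X : SBSVT μ) {d : ℕ × ℕ} (hdμ : d ∈ μ)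
    (htop : μ.card + 1 ∈ X.entry d) (hcard : (X.entry d).card = 2) : SYT μ where
  entry := tEnt X
  outside c hc := by
    have hempty : {a | a ∈ X.entry c ∧ a ≠ μ.card + 1} = ∅ := by
      rw [X.outside c hc]
      ext a
      simp
    unfold tEnt
    rw [hempty, Nat.sInf_empty]
  bijOn := by
    refine ⟨fun c hc => ?_, fun c hc c' hc' he => ?_, fun k hk => ?_⟩
    · have hcμ : c ∈ μ := (YoungDiagram.mem_cells _).mp (Finset.mem_coe.mp hc)
      have hs := tEnt_spec X hdμ htop hcard hcμ
      have hb := sbsvt_bounds X hcμ hs.1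
      rw [Set.mem_Icc]
      omega
    · have hcμ : c ∈ μ := (YoungDiagram.mem_cells _).mp (Finset.mem_coe.mp hc)
      have hcμ' : c' ∈ μ := (YoungDiagram.mem_cells _).mp (Finset.mem_coe.mp hc')
      have hs := tEnt_spec X hdμ htop hcard hcμ
      have hs' := tEnt_spec X hdμ htop hcard hcμ'
      have hb := sbsvt_bounds X hcμ hs.1
      exact top_unique X hcμ hcμ' hb.1 hb.2 hs.1 (he ▸ hs'.1)
    · rw [Set.mem_Icc] at hk
      obtain ⟨c, ⟨hcμ, hck⟩, _⟩ := X.exactly_once k (Finset.mem_Icc.mpr ⟨hk.1, by omega⟩)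
      refine ⟨c, Finset.mem_coe.mpr ((YoungDiagram.mem_cells _).mpr hcμ), ?_⟩
      exact tEnt_eq X hdμ htop hcard hcμ hck (by omega)
  row_lt i j1 j2 hj h2 := by
    have h1μ : (i, j1) ∈ μ := μ.up_left_mem (le_refl _) (by omega) h2
    have hs1 := tEnt_spec X hdμ htop hcard h1μ
    have hs2 := tEnt_spec X hdμ htop hcard h2
    have hle := X.row_le i j1 j2 hj h2 _ hs1.1 _ hs2.1
    rcases Nat.lt_or_ge (tEnt X (i, j1)) (tEnt X (i, j2)) with h | h
    · exact h
    · exfalso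
      have he : tEnt X (i, j1) = tEnt X (i, j2) := by omega
      have hb := sbsvt_bounds X h1μ hs1.1
      have := top_unique X h1μ h2 hb.1 hb.2 hs1.1 (he ▸ hs2.1)
      rw [Prod.mk.injEq] at this
      omega
  col_lt i1 i2 j hi h2 := by
    have h1μ : (i1, j) ∈ μ := μ.up_left_mem (by omega) (le_refl _) h2
    have hs1 := tEnt_spec X hdμ htop hcard h1μ
    have hs2 := tEnt_spec X hdμ htop hcard h2
    exact X.col_lt i1 i2 j hi h2 _ hs1.1 _ hs2.1

noncomputable def sbsvtDown2 {μ : YoungDiagram} {d : ℕ × ℕ} (hd : d ∈ remFinset μ)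
    (X : SBSVT μ) (hsing : X.entry d = {μ.card + 1}) : SBSVT (eraseCell μ d) where
  entry c := if c = d then ∅ else X.entry c
  outside c hc := by
    by_cases h : c = d
    · rw [if_pos h]
    · rw [if_neg h]
      rw [mem_eraseCell hd] at hc
      push_neg at hc
      exact X.outside c (hc h)
  nonempty c hc := by
    rw [mem_eraseCell hd] at hc
    rw [if_neg hc.1]
    exact X.nonempty c hc.2
  card_le c hc := by
    rw [mem_eraseCell hd] at hc
    rw [if_neg hc.1]
    exact X.card_le c hc.2
  unique_double := by
    obtain ⟨c₀, ⟨hc₀μ, hc₀2⟩, hun⟩ := X.unique_double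
    have hc₀d : c₀ ≠ d := by
      intro h
      rw [h, hsing, Finset.card_singleton] at hc₀2
      omega
    refine ⟨c₀, ⟨(mem_eraseCell hd).mpr ⟨hc₀d, hc₀μ⟩, ?_⟩, ?_⟩
    · rw [if_neg hc₀d]
      exact hc₀2
    · rintro y ⟨hym, hy2⟩
      rw [mem_eraseCell hd] at hym
      rw [if_neg hym.1] at hy2
      exact hun y ⟨hym.2, hy2⟩
  mem_range c hc := by
    have hm1 := card_eraseCell' hd
    rw [mem_eraseCell hd] at hc
    rw [if_neg hc.1]
    intro a ha
    have hb := sbsvt_bounds X hc.2 ha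
    have hane : a ≠ μ.card + 1 := by
      intro h
      refine hc.1 (top_unique X hc.2 (mem_remFinset.mp hd).1 hb.1 hb.2 ha ?_)
      rw [hsing, h]
      exact Finset.mem_singleton_self _
    rw [Finset.mem_Icc]
    omega
  exactly_once k hk := by
    have hm1 := card_eraseCell' hd
    rw [Finset.mem_Icc] at hk
    obtain ⟨c, ⟨hcμ, hck⟩, hcu⟩ := X.exactly_once k (Finset.mem_Icc.mpr ⟨hk.1, by omega⟩)
    have hcd : c ≠ d := by
      intro h
      rw [h, hsing, Finset.mem_singleton] at hck
      omega
    refine ⟨c, ⟨(mem_eraseCell hd).mpr ⟨hcd, hcμ⟩, ?_⟩, ?_⟩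
    · rw [if_neg hcd]
      exact hck
    · rintro y ⟨hym, hyk⟩
      rw [mem_eraseCell hd] at hym
      rw [if_neg hym.1] at hyk
      exact hcu y ⟨hym.2, hyk⟩
  row_le i j1 j2 hj h2 a ha b hb := by
    rw [mem_eraseCell hd] at h2
    by_cases h : (i, j1) = d
    · rw [if_pos h] at ha
      exact absurd ha (Finset.notMem_empty a)
    · rw [if_neg h] at ha
      rw [if_neg h2.1] at hb
      exact X.row_le i j1 j2 hj h2.2 a ha b hb
  col_lt i1 i2 j hi h2 a ha b hb := by
    rw [mem_eraseCell hd] at h2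
    by_cases h : (i1, j) = d
    · rw [if_pos h] at ha
      exact absurd ha (Finset.notMem_empty a)
    · rw [if_neg h] at ha
      rw [if_neg h2.1] at hb
      exact X.col_lt i1 i2 j hi h2.2 a ha b hb

lemma sbsvtUp1_entry {μ : YoungDiagram} {d : ℕ × ℕ} (hd : d ∈ remFinset μ) (T : SYT μ)
    (c : ℕ × ℕ) : (sbsvtUp1 hd T).entry c =
      if c ∈ μ then (if c = d then {T.entry d, μ.card + 1} else {T.entry c}) else ∅ := rfl

lemma sbsvtUp2_entry {μ : YoungDiagram} {d : ℕ × ℕ} (hd : d ∈ remFinset μ)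
    (S : SBSVT (eraseCell μ d)) (c : ℕ × ℕ) :
    (sbsvtUp2 hd S).entry c = if c = d then {μ.card + 1} else S.entry c := rfl

lemma up1_top_iff {μ : YoungDiagram} {d : ℕ × ℕ} (hd : d ∈ remFinset μ) (T : SYT μ)
    (c : ℕ × ℕ) : μ.card + 1 ∈ (sbsvtUp1 hd T).entry c ↔ c = d := by
  rw [sbsvtUp1_entry]
  constructor
  · intro h
    by_cases hcμ : c ∈ μ
    · rw [if_pos hcμ] at h
      by_cases hcd : c = d
      · exact hcd
      · rw [if_neg hcd, Finset.mem_singleton] at h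
        have := (syt_bounds T hcμ).2
        omega
    · rw [if_neg hcμ] at h
      exact absurd h (Finset.notMem_empty _)
  · rintro rfl
    rw [if_pos (mem_remFinset.mp hd).1, if_pos rfl]
    exact Finset.mem_insert_of_mem (Finset.mem_singleton_self _)

lemma up2_top_iff {μ : YoungDiagram} {d : ℕ × ℕ} (hd : d ∈ remFinset μ)
    (S : SBSVT (eraseCell μ d)) (c : ℕ × ℕ) :
    μ.card + 1 ∈ (sbsvtUp2 hd S).entry c ↔ c = d := by
  rw [sbsvtUp2_entry]
  constructor
  · intro h
    by_cases hcd : c = d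
    · exact hcd
    · rw [if_neg hcd] at h
      by_cases hce : c ∈ eraseCell μ d
      · have := (sbsvt_bounds S hce h).2
        have := card_eraseCell' hd
        omega
      · rw [S.outside c hce] at h
        exact absurd h (Finset.notMem_empty _)
  · rintro rfl
    rw [if_pos rfl]
    exact Finset.mem_singleton_self _

lemma up1_card {μ : YoungDiagram} {d : ℕ × ℕ} (hd : d ∈ remFinset μ) (T : SYT μ) :
    ((sbsvtUp1 hd T).entry d).card = 2 := by
  have hdμ := (mem_remFinset.mp hd).1
  have := (syt_bounds T hdμ).2
  rw [sbsvtUp1_entry, if_pos hdμ, if_pos rfl,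
    Finset.card_insert_of_notMem (by rw [Finset.mem_singleton]; omega), Finset.card_singleton]

lemma up2_card {μ : YoungDiagram} {d : ℕ × ℕ} (hd : d ∈ remFinset μ)
    (S : SBSVT (eraseCell μ d)) : ((sbsvtUp2 hd S).entry d).card = 1 := by
  rw [sbsvtUp2_entry, if_pos rfl, Finset.card_singleton]

noncomputable def sbsvtG (μ : YoungDiagram)
    (p : Σ d : {d // d ∈ remFinset μ}, (SYT μ ⊕ SBSVT (eraseCell μ d.1))) : SBSVT μ :=
  match p with
  | ⟨⟨_, hd⟩, Sum.inl T⟩ => sbsvtUp1 hd T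
  | ⟨⟨_, hd⟩, Sum.inr S⟩ => sbsvtUp2 hd S

lemma sbsvtG_bijective (μ : YoungDiagram) : Function.Bijective (sbsvtG μ) := by
  constructor
  · rintro ⟨⟨d, hd⟩, x⟩ ⟨⟨d', hd'⟩, x'⟩ h
    have hdd : d = d' := by
      have h1 : μ.card + 1 ∈ (sbsvtG μ ⟨⟨d, hd⟩, x⟩).entry d := by
        rcases x with T | S
        · exact (up1_top_iff hd T d).mpr rfl
        · exact (up2_top_iff hd S d).mpr rfl
      rw [h] at h1
      rcases x' with T' | S'
      · exact (up1_top_iff hd' T' d).mp h1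
      · exact (up2_top_iff hd' S' d).mp h1
    subst hdd
    rcases x with T | S <;> rcases x' with T' | S'
    · have hTT : T = T' := by
        apply SYT.ext'
        funext c
        have hEc : (sbsvtUp1 hd T).entry c = (sbsvtUp1 hd' T').entry c :=
          congrFun (congrArg SBSVT.entry h) c
        rw [sbsvtUp1_entry, sbsvtUp1_entry] at hEc
        by_cases hcμ : c ∈ μ
        · by_cases hcd : c = d
          · subst hcd
            rw [if_pos hcμ, if_pos rfl, if_pos hcμ, if_pos rfl] at hEc
            have h1 : T.entry c ∈ ({T'.entry c, μ.card + 1} : Finset ℕ) := by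
              rw [← hEc]
              exact Finset.mem_insert_self _ _
            rcases Finset.mem_insert.mp h1 with h' | h'
            · exact h'
            · rw [Finset.mem_singleton] at h'
              have := (syt_bounds T hcμ).2
              omega
          · rw [if_pos hcμ, if_pos hcμ, if_neg hcd, if_neg hcd] at hEc
            exact Finset.singleton_injective hEc
        · rw [T.outside c hcμ, T'.outside c hcμ]
      rw [hTT]
    · exfalso
      have h1 := up1_card hd T
      rw [show (sbsvtUp1 hd T) = sbsvtG μ ⟨⟨d, hd⟩, Sum.inl T⟩ from rfl, h] at h1
      rw [show sbsvtG μ ⟨⟨d, hd'⟩, Sum.inr S'⟩ = sbsvtUp2 hd' S' from rfl, up2_card hd' S'] at h1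
      omega
    · exfalso
      have h1 := up1_card hd' T'
      rw [show (sbsvtUp1 hd' T') = sbsvtG μ ⟨⟨d, hd'⟩, Sum.inl T'⟩ from rfl, ← h] at h1
      rw [show sbsvtG μ ⟨⟨d, hd⟩, Sum.inr S⟩ = sbsvtUp2 hd S from rfl, up2_card hd S] at h1
      omega
    · have hSS : S = S' := by
        apply SBSVT.ext'
        funext c
        have hEc : (sbsvtUp2 hd S).entry c = (sbsvtUp2 hd' S').entry c :=
          congrFun (congrArg SBSVT.entry h) c
        rw [sbsvtUp2_entry, sbsvtUp2_entry] at hEc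
        by_cases hcd : c = d
        · subst hcd
          rw [S.outside c (not_mem_self_erase hd), S'.outside c (not_mem_self_erase hd)]
        · rwa [if_neg hcd, if_neg hcd] at hEc
      rw [hSS]
  · intro X
    obtain ⟨d, ⟨hdμ, htop⟩, huniq⟩ := X.exactly_once (μ.card + 1)
      (Finset.mem_Icc.mpr ⟨by omega, le_refl _⟩)
    have hd : d ∈ remFinset μ := by
      rw [mem_remFinset]
      refine ⟨hdμ, fun hr => ?_, fun hb => ?_⟩
      · obtain ⟨b, hbm⟩ := X.nonempty _ hr
        have hle := X.row_le d.1 d.2 (d.2 + 1) (by omega) hr (μ.card + 1)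
          (by rw [Prod.mk.eta]; exact htop) b hbm
        have hbb := (sbsvt_bounds X hr hbm).2
        have hbe : b = μ.card + 1 := by omega
        have := huniq (d.1, d.2 + 1) ⟨hr, by rw [← hbe]; exact hbm⟩
        rw [Prod.ext_iff] at this
        simp only at this
        omega
      · obtain ⟨b, hbm⟩ := X.nonempty _ hb
        have hlt := X.col_lt d.1 (d.1 + 1) d.2 (by omega) hb (μ.card + 1)
          (by rw [Prod.mk.eta]; exact htop) b hbm
        have hbb := (sbsvt_bounds X hb hbm).2
        omega
    by_cases hcard : (X.entry d).card = 2
    · refine ⟨⟨⟨d, hd⟩, Sum.inl (sbsvtDown1 X hdμ htop hcard)⟩, ?_⟩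
      apply SBSVT.ext'
      funext c
      show (sbsvtUp1 hd (sbsvtDown1 X hdμ htop hcard)).entry c = X.entry c
      rw [sbsvtUp1_entry]
      by_cases hcμ : c ∈ μ
      · by_cases hcd : c = d
        · subst hcd
          rw [if_pos hcμ, if_pos rfl]
          exact (entry_pair X hdμ htop hcard).symm
        · rw [if_pos hcμ, if_neg hcd]
          exact (entry_single X hdμ htop hcard hcμ hcd).symm
      · rw [if_neg hcμ]
        exact (X.outside c hcμ).symm
    · have h1 : (X.entry d).card = 1 := by
        have := X.card_le d hdμ
        have := Finset.card_pos.mpr (X.nonempty d hdμ)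
        omega
      have hsing : X.entry d = {μ.card + 1} := by
        obtain ⟨a, ha⟩ := Finset.card_eq_one.mp h1
        have : μ.card + 1 = a := by rwa [ha, Finset.mem_singleton] at htop
        rw [ha, ← this]
      refine ⟨⟨⟨d, hd⟩, Sum.inr (sbsvtDown2 hd X hsing)⟩, ?_⟩
      apply SBSVT.ext'
      funext c
      show (sbsvtUp2 hd (sbsvtDown2 hd X hsing)).entry c = X.entry c
      rw [sbsvtUp2_entry]
      by_cases hcd : c = d
      · subst hcd
        rw [if_pos rfl]
        exact hsing.symm
      · rw [if_neg hcd]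
        show (if c = d then ∅ else X.entry c) = X.entry c
        rw [if_neg hcd]

lemma card_sbsvt (μ : YoungDiagram) :
    Nat.card (SBSVT μ) =
      ∑ d ∈ remFinset μ, (Nat.card (SYT μ) + Nat.card (SBSVT (eraseCell μ d))) := by
  rw [← Nat.card_eq_of_bijective _ (sbsvtG_bijective μ), nat_card_sigma]
  rw [← Finset.sum_coe_sort (remFinset μ)
    (fun d => Nat.card (SYT μ) + Nat.card (SBSVT (eraseCell μ d)))]
  congr 1
  funext d
  rw [Nat.card_sum]

lemma main (n : ℕ) : ∀ (μ : YoungDiagram), μ.card = n →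
    Nat.card (SBSVT μ) = ∑ c ∈ addFinset μ, c.1 * Nat.card (SYT (addCell μ c)) := by
  induction n using Nat.strong_induction_on with
  | _ n IH =>
    intro μ hn
    rw [card_sbsvt]
    have step1 : ∀ d ∈ remFinset μ,
        Nat.card (SYT μ) + Nat.card (SBSVT (eraseCell μ d)) =
          (d.1 + 1) * Nat.card (SYT μ) +
            ∑ c ∈ (addFinset μ).filter (fun c => Q c d),
              c.1 * Nat.card (SYT (addCell (eraseCell μ d) c)) := by
      intro d hd
      have hIH := IH (eraseCell μ d).card
        (by have := card_eraseCell' hd; omega) (eraseCell μ d) rfl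
      rw [hIH, addFinset_eraseCell hd, Finset.sum_insert (by
          simp only [Finset.mem_filter, not_and]
          exact fun hmem _ => addFinset_not_mem hmem (mem_remFinset.mp hd).1),
        addCell_eraseCell hd, Nat.succ_mul]
      omega
    rw [Finset.sum_congr rfl step1, Finset.sum_add_distrib]
    have step2 : ∀ c ∈ addFinset μ,
        c.1 * Nat.card (SYT (addCell μ c)) =
          c.1 * Nat.card (SYT μ) +
            ∑ d ∈ (remFinset μ).filter (fun d => Q c d),
              c.1 * Nat.card (SYT (eraseCell (addCell μ c) d)) := by
      intro c hc
      rw [card_syt (addCell μ c) (by rw [card_addCell hc]; omega), remFinset_addCell hc,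
        Finset.sum_insert (by
          simp only [Finset.mem_filter, not_and]
          exact fun hmem _ => addFinset_not_mem hc (mem_remFinset.mp hmem).1),
        mul_add, eraseCell_addCell hc, Finset.mul_sum]
    rw [Finset.sum_congr rfl step2, Finset.sum_add_distrib]
    congr 1
    · rw [← Finset.sum_mul, ← Finset.sum_mul, sum_add_rows]
    · rw [Finset.sum_congr rfl (fun d _ => Finset.sum_filter
        (fun c => Q c d) (fun c => c.1 * Nat.card (SYT (addCell (eraseCell μ d) c)))),
        Finset.sum_comm]
      refine Finset.sum_congr rfl fun c hc => ?_
      rw [Finset.sum_filter]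
      refine Finset.sum_congr rfl fun d hd => ?_
      split_ifs with hQ
      · rw [erase_add_comm hc hd hQ]
      · rfl

lemma main' (μ : YoungDiagram) :
    Nat.card (SBSVT μ) = ∑ c ∈ addFinset μ, c.1 * Nat.card (SYT (addCell μ c)) :=
  main μ.card μ rfl

end StmtAux

/-- `f^λ(+1) = Σ_{x=(i,j)} (i-1) · f^{λ∪{x}}`, the sum over outside corner cells `x` of
`λ` (here 0-indexed, so the 1-indexed coefficient `i-1` equals the 0-indexed row `c.1`). -/
theorem stmt7 (μ : YoungDiagram) :
    Nat.card (SBSVT μ) =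
      ∑ᶠ c ∈ {c : ℕ × ℕ | c ∉ μ ∧ IsLowerSet (insert c (μ.cells : Set (ℕ × ℕ)))},
        c.1 * Nat.card (SYT (addCell μ c)) := by
  have hset : {c : ℕ × ℕ | c ∉ μ ∧ IsLowerSet (insert c (μ.cells : Set (ℕ × ℕ)))} =
      ↑(StmtAux.addFinset μ) := by
    ext c
    rw [Finset.mem_coe, StmtAux.mem_addFinset, Set.mem_setOf_eq]
  rw [hset, finsum_mem_coe_finset]
  exact StmtAux.main' μ
end

section
/- For the rectangular staircase partition λ = δ_d ∘ (b^a), the expected down-degree of a uniformly random element of the interval [∅,λ] in Young's lattice equals (d−1)ab/(a+b). -/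
open scoped BigOperators

/-- The down-degree of `p`: the number of elements covered by `p`. -/
noncomputable def downDeg (P : Type*) [PartialOrder P] (p : P) : ℕ :=
  {q : P | q ⋖ p}.ncard

/-- The rectangular staircase Young diagram `δ_d ∘ (b^a)`: row `r` (0-indexed,
for `r < a(d-1)`) has length `b·(d-1-r/a)`. -/
def rectStaircase (d a b : ℕ) : YoungDiagram where
  cells := (Finset.range (a * (d - 1)) ×ˢ Finset.range (b * (d - 1))).filter
    (fun c => c.2 < b * (d - 1 - c.1 / a))
  isLowerSet := by
    intro x y hle hx
    simp only [Finset.coe_filter, Set.mem_setOf_eq, Finset.mem_product,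
      Finset.mem_range] at hx ⊢
    obtain ⟨⟨hx1, hx2⟩, hx3⟩ := hx
    refine ⟨⟨lt_of_le_of_lt hle.1 hx1, lt_of_le_of_lt hle.2 hx2⟩, ?_⟩
    calc y.2 ≤ x.2 := hle.2
      _ < b * (d - 1 - x.1 / a) := hx3
      _ ≤ b * (d - 1 - y.1 / a) :=
        Nat.mul_le_mul_left _ (Nat.sub_le_sub_left (Nat.div_le_div_right hle.1) _)

open YoungDiagram

namespace StaircaseAux

/-- helper to compute rowLen from a membership characterization -/
lemma rowLen_eq_of_iff {ν : YoungDiagram} {k m : ℕ} (H : ∀ j, (k, j) ∈ ν ↔ j < m) :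
    ν.rowLen k = m := by
  have h1 := H (ν.rowLen k)
  have h2 := H m
  rw [mem_iff_lt_rowLen] at h1 h2
  omega

/-- erase the corner cell in row `i` (requires a corner there). -/
def eraseC (μ : YoungDiagram) (i : ℕ) (h : μ.rowLen (i + 1) < μ.rowLen i) : YoungDiagram where
  cells := μ.cells.erase (i, μ.rowLen i - 1)
  isLowerSet := by
    intro q p hle hq
    simp only [Finset.coe_erase, Set.mem_diff, Set.mem_singleton_iff, Finset.mem_coe,
      YoungDiagram.mem_cells] at hq ⊢
    obtain ⟨hq1, hq2⟩ := hq
    refine ⟨μ.isLowerSet hle hq1, ?_⟩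
    intro hp
    apply hq2
    have hle1 : p.1 ≤ q.1 := hle.1
    have hle2 : p.2 ≤ q.2 := hle.2
    have hq1' : q.2 < μ.rowLen q.1 := by
      rw [← mem_iff_lt_rowLen]; rwa [← Prod.mk.eta (p := q)] at hq1
    have hp1 : p.1 = i := by rw [hp]
    have hp2 : p.2 = μ.rowLen i - 1 := by rw [hp]
    -- show q = (i, rowLen i - 1)
    have hcase : q.1 = i := by
      by_contra hne
      have hgt : i + 1 ≤ q.1 := by omega
      have := μ.rowLen_anti (i + 1) q.1 hgt
      omega
    have : q.2 = μ.rowLen i - 1 := by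
      rw [hcase] at hq1'; omega
    rw [← Prod.mk.eta (p := q), hcase, this]

lemma mem_eraseC {μ : YoungDiagram} {i : ℕ} (h : μ.rowLen (i + 1) < μ.rowLen i) {k j : ℕ} :
    (k, j) ∈ eraseC μ i h ↔ ((k, j) ∈ μ ∧ (k, j) ≠ (i, μ.rowLen i - 1)) := by
  show (k, j) ∈ μ.cells.erase (i, μ.rowLen i - 1) ↔ _
  rw [Finset.mem_erase, YoungDiagram.mem_cells, and_comm]

lemma rowLen_eraseC {μ : YoungDiagram} {i : ℕ} (h : μ.rowLen (i + 1) < μ.rowLen i) (k : ℕ) :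
    (eraseC μ i h).rowLen k = if k = i then μ.rowLen i - 1 else μ.rowLen k := by
  apply rowLen_eq_of_iff
  intro j
  rw [mem_eraseC h, mem_iff_lt_rowLen]
  by_cases hk : k = i
  · subst hk
    simp only [if_pos rfl, ne_eq, Prod.mk.injEq]
    simp only [eq_self_iff_true, true_and, if_true]
    omega
  · simp only [if_neg hk, ne_eq, Prod.mk.injEq]
    have : ¬(k = i ∧ j = μ.rowLen i - 1) := fun hc => hk hc.1
    tauto

lemma eraseC_le {μ : YoungDiagram} {i : ℕ} (h : μ.rowLen (i + 1) < μ.rowLen i) :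
    eraseC μ i h ≤ μ := by
  rw [← YoungDiagram.cells_subset_iff]
  intro c hc
  rw [YoungDiagram.mem_cells] at hc ⊢
  rw [← Prod.mk.eta (p := c)] at hc ⊢
  exact ((mem_eraseC h).mp hc).1

/-- add a cell at the end of row `i` (requires addability). -/
def addC (μ : YoungDiagram) (i : ℕ) (h : i = 0 ∨ μ.rowLen i < μ.rowLen (i - 1)) : YoungDiagram where
  cells := insert (i, μ.rowLen i) μ.cells
  isLowerSet := by
    intro q p hle hq
    simp only [Finset.coe_insert, Set.mem_insert_iff, Finset.mem_coe,
      YoungDiagram.mem_cells] at hq ⊢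
    have hle1 : p.1 ≤ q.1 := hle.1
    have hle2 : p.2 ≤ q.2 := hle.2
    rcases hq with hq | hq
    · -- q is the new cell
      have hq1 : q.1 = i := by rw [hq]
      have hq2 : q.2 = μ.rowLen i := by rw [hq]
      by_cases hp : p.1 = i ∧ p.2 = μ.rowLen i
      · left; rw [← Prod.mk.eta (p := p), hp.1, hp.2]
      · right
        rw [← Prod.mk.eta (p := p), mem_iff_lt_rowLen]
        rcases Nat.eq_or_lt_of_le (hq1 ▸ hle1) with heq | hlt
        · rw [heq]; omega
        · have hi : i ≠ 0 := by omega
          rcases h with h | h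
          · exact absurd h hi
          · have := μ.rowLen_anti p.1 (i - 1) (by omega)
            omega
    · right; exact μ.isLowerSet hle hq

lemma mem_addC {μ : YoungDiagram} {i : ℕ} (h : i = 0 ∨ μ.rowLen i < μ.rowLen (i - 1)) {k j : ℕ} :
    (k, j) ∈ addC μ i h ↔ ((k, j) = (i, μ.rowLen i) ∨ (k, j) ∈ μ) := by
  show (k, j) ∈ insert (i, μ.rowLen i) μ.cells ↔ _
  rw [Finset.mem_insert, YoungDiagram.mem_cells]

lemma rowLen_addC {μ : YoungDiagram} {i : ℕ} (h : i = 0 ∨ μ.rowLen i < μ.rowLen (i - 1)) (k : ℕ) :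
    (addC μ i h).rowLen k = if k = i then μ.rowLen i + 1 else μ.rowLen k := by
  apply rowLen_eq_of_iff
  intro j
  rw [mem_addC h, mem_iff_lt_rowLen]
  by_cases hk : k = i
  · subst hk
    simp only [if_pos rfl, Prod.mk.injEq]
    simp only [eq_self_iff_true, true_and, if_true]
    omega
  · simp only [if_neg hk, Prod.mk.injEq]
    have : ¬(k = i ∧ j = μ.rowLen i) := fun hc => hk hc.1
    tauto

lemma eraseC_addC {μ : YoungDiagram} {i : ℕ} (h : i = 0 ∨ μ.rowLen i < μ.rowLen (i - 1))
    (h2 : (addC μ i h).rowLen (i + 1) < (addC μ i h).rowLen i) :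
    eraseC (addC μ i h) i h2 = μ := by
  ext ⟨k, j⟩
  rw [YoungDiagram.mem_cells, YoungDiagram.mem_cells]
  rw [mem_eraseC h2, mem_addC h, rowLen_addC h i, if_pos rfl]
  simp only [Nat.add_sub_cancel, ne_eq, Prod.mk.injEq]
  rw [mem_iff_lt_rowLen]
  rcases eq_or_ne k i with rfl | hk <;> omega

lemma addC_eraseC {μ : YoungDiagram} {i : ℕ} (h : μ.rowLen (i + 1) < μ.rowLen i)
    (h2 : i = 0 ∨ (eraseC μ i h).rowLen i < (eraseC μ i h).rowLen (i - 1)) :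
    addC (eraseC μ i h) i h2 = μ := by
  ext ⟨k, j⟩
  rw [YoungDiagram.mem_cells, YoungDiagram.mem_cells]
  rw [mem_addC h2, mem_eraseC h, rowLen_eraseC h i, if_pos rfl]
  simp only [Prod.mk.injEq, ne_eq]
  rw [mem_iff_lt_rowLen (i := k)]
  rcases eq_or_ne k i with rfl | hk <;> omega

end StaircaseAux

namespace StaircaseAux

variable {Λ : YoungDiagram}

/-- erased corner is a cover in the interval below `Λ`. -/
lemma eraseC_covBy {x : {μ : YoungDiagram // μ ≤ Λ}} {i : ℕ}
    (h : x.1.rowLen (i + 1) < x.1.rowLen i) :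
    (⟨eraseC x.1 i h, le_trans (eraseC_le h) x.2⟩ : {μ : YoungDiagram // μ ≤ Λ}) ⋖ x := by
  have hmem : (i, x.1.rowLen i - 1) ∈ x.1.cells := by
    rw [YoungDiagram.mem_cells, mem_iff_lt_rowLen]; omega
  constructor
  · rw [Subtype.mk_lt_mk, ← YoungDiagram.cells_ssubset_iff]
    exact Finset.erase_ssubset hmem
  · intro z hqz hzx
    rw [Subtype.mk_lt_mk, ← YoungDiagram.cells_ssubset_iff] at hqz
    rw [← Subtype.coe_lt_coe, ← YoungDiagram.cells_ssubset_iff] at hzx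
    have h1 := Finset.card_lt_card hqz
    have h2 := Finset.card_lt_card hzx
    have h3 : (eraseC x.1 i h).cells.card = x.1.cells.card - 1 := by
      rw [show (eraseC x.1 i h).cells = x.1.cells.erase (i, x.1.rowLen i - 1) from rfl,
        Finset.card_erase_of_mem hmem]
    have h4 : 0 < x.1.cells.card := Finset.card_pos.mpr ⟨_, hmem⟩
    omega

/-- every cover below `x` is an erased corner. -/
lemma covBy_eq_eraseC {x q : {μ : YoungDiagram // μ ≤ Λ}} (hc : q ⋖ x) :
    ∃ (i : ℕ) (h : x.1.rowLen (i + 1) < x.1.rowLen i),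
      q = ⟨eraseC x.1 i h, le_trans (eraseC_le h) x.2⟩ := by
  have hlt : q.1.cells ⊂ x.1.cells := by
    have h := hc.1
    rw [← Subtype.coe_lt_coe, ← YoungDiagram.cells_ssubset_iff] at h
    exact h
  have hne : (x.1.cells \ q.1.cells).Nonempty := by
    obtain ⟨c, hcx, hcq⟩ := Finset.exists_of_ssubset hlt
    exact ⟨c, Finset.mem_sdiff.mpr ⟨hcx, hcq⟩⟩
  obtain ⟨c, hcD, hcmax⟩ : ∃ c ∈ x.1.cells \ q.1.cells, ∀ u ∈ x.1.cells \ q.1.cells, ¬ c < u := by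
    obtain ⟨c, hc⟩ := Finset.exists_maximal hne
    exact ⟨c, hc.1, fun u hu hlt => absurd (hc.2 hu hlt.le) (not_le_of_gt hlt)⟩
  rw [Finset.mem_sdiff] at hcD
  obtain ⟨hcx, hcq⟩ := hcD
  -- the diagram x minus c
  have hpf : IsLowerSet (↑(x.1.cells.erase c) : Set (ℕ × ℕ)) := by
    intro u v hle hu
    simp only [Finset.coe_erase, Set.mem_diff, Set.mem_singleton_iff, Finset.mem_coe,
      YoungDiagram.mem_cells] at hu ⊢
    obtain ⟨hu1, hu2⟩ := hu
    refine ⟨x.1.isLowerSet hle hu1, ?_⟩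
    rintro rfl
    have hvu : v < u := lt_of_le_of_ne hle (Ne.symm hu2)
    have huD : u ∈ x.1.cells \ q.1.cells := by
      rw [Finset.mem_sdiff]
      refine ⟨by rwa [YoungDiagram.mem_cells], ?_⟩
      intro huq
      exact hcq (q.1.isLowerSet hle huq)
    exact hcmax u huD hvu
  set zd : YoungDiagram := ⟨x.1.cells.erase c, hpf⟩ with hzd
  have hzle : zd ≤ x.1 := by
    rw [← YoungDiagram.cells_subset_iff]
    exact Finset.erase_subset _ _
  have hqz : q.1.cells ⊆ zd.cells := Finset.subset_erase.mpr ⟨hlt.1, hcq⟩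
  have hzx : (⟨zd, le_trans hzle x.2⟩ : {μ : YoungDiagram // μ ≤ Λ}) < x := by
    rw [Subtype.mk_lt_mk, ← YoungDiagram.cells_ssubset_iff]
    exact Finset.erase_ssubset hcx
  have hqeq : q.1.cells = zd.cells := by
    by_contra hne'
    have : q < ⟨zd, le_trans hzle x.2⟩ := by
      rw [Subtype.mk_lt_mk, ← YoungDiagram.cells_ssubset_iff]
      exact lt_of_le_of_ne hqz hne'
    exact hc.2 this hzx
  -- now show c is a corner
  obtain ⟨i, j⟩ := c
  have hj : j < x.1.rowLen i := by
    rw [← mem_iff_lt_rowLen, ← YoungDiagram.mem_cells]; exact hcx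
  have hrt : (i, j + 1) ∉ x.1.cells := by
    intro hmem
    have : (i, j + 1) ∈ q.1.cells := by
      rw [hqeq]
      exact Finset.mem_erase.mpr ⟨by simp, hmem⟩
    have : (i, j) ∈ q.1.cells := by
      rw [YoungDiagram.mem_cells] at this ⊢
      exact q.1.isLowerSet (by simp) this
    exact hcq this
  have hdn : (i + 1, j) ∉ x.1.cells := by
    intro hmem
    have : (i + 1, j) ∈ q.1.cells := by
      rw [hqeq]
      exact Finset.mem_erase.mpr ⟨by simp, hmem⟩
    have : (i, j) ∈ q.1.cells := by
      rw [YoungDiagram.mem_cells] at this ⊢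
      exact q.1.isLowerSet (by simp) this
    exact hcq this
  rw [YoungDiagram.mem_cells, mem_iff_lt_rowLen] at hrt hdn
  have hcorner : x.1.rowLen (i + 1) < x.1.rowLen i := by omega
  refine ⟨i, hcorner, ?_⟩
  apply Subtype.ext
  apply YoungDiagram.ext
  show q.1.cells = _
  rw [hqeq]
  show x.1.cells.erase (i, j) = x.1.cells.erase (i, x.1.rowLen i - 1)
  congr 2
  omega

/-- downDeg equals the number of corner rows. -/
lemma downDeg_eq (x : {μ : YoungDiagram // μ ≤ Λ}) (N : ℕ)
    (hN : ∀ i, N ≤ i → x.1.rowLen i = 0) :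
    downDeg {μ : YoungDiagram // μ ≤ Λ} x =
      ((Finset.range N).filter (fun i => x.1.rowLen (i + 1) < x.1.rowLen i)).card := by
  classical
  set f : ℕ → {μ : YoungDiagram // μ ≤ Λ} := fun i =>
    if h : x.1.rowLen (i + 1) < x.1.rowLen i then
      ⟨eraseC x.1 i h, le_trans (eraseC_le h) x.2⟩ else x with hf
  have hseteq : {q : {μ : YoungDiagram // μ ≤ Λ} | q ⋖ x} =
      ↑(((Finset.range N).filter (fun i => x.1.rowLen (i + 1) < x.1.rowLen i)).image f) := by
    ext q
    simp only [Set.mem_setOf_eq, Finset.coe_image, Set.mem_image, Finset.mem_coe,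
      Finset.mem_filter, Finset.mem_range]
    constructor
    · intro hq
      obtain ⟨i, h, rfl⟩ := covBy_eq_eraseC hq
      refine ⟨i, ⟨?_, h⟩, ?_⟩
      · by_contra hge
        have := hN i (by omega)
        omega
      · rw [hf]; simp only [dif_pos h]
    · rintro ⟨i, ⟨_, h⟩, rfl⟩
      rw [hf]; simp only [dif_pos h]
      exact eraseC_covBy h
  rw [downDeg, hseteq, Set.ncard_coe_finset]
  apply Finset.card_image_of_injOn
  intro i hi i' hi' heq
  simp only [Finset.coe_filter, Set.mem_setOf_eq, Finset.mem_range] at hi hi'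
  by_contra hne
  have h1 : (f i).1.rowLen i = x.1.rowLen i - 1 := by
    rw [hf]; simp only [dif_pos hi.2]
    rw [rowLen_eraseC hi.2 i, if_pos rfl]
  have h2 : (f i').1.rowLen i = x.1.rowLen i := by
    rw [hf]; simp only [dif_pos hi'.2]
    rw [rowLen_eraseC hi'.2 i, if_neg hne]
  rw [heq] at h1
  have := hi.2
  omega

end StaircaseAux

namespace StaircaseAux

lemma mem_rectStaircase {d a b : ℕ} (ha : 0 < a) {c : ℕ × ℕ} :
    c ∈ rectStaircase d a b ↔ c.2 < b * (d - 1 - c.1 / a) := by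
  show c ∈ (Finset.range (a * (d - 1)) ×ˢ Finset.range (b * (d - 1))).filter
    (fun c => c.2 < b * (d - 1 - c.1 / a)) ↔ _
  rw [Finset.mem_filter, Finset.mem_product, Finset.mem_range,
    Finset.mem_range]
  constructor
  · tauto
  · intro h
    refine ⟨⟨?_, ?_⟩, h⟩
    · have h2 : d - 1 - c.1 / a ≠ 0 := by
        intro h0; rw [h0, Nat.mul_zero] at h; omega
      obtain ⟨u, hu⟩ : ∃ u, c.1 / a = u := ⟨_, rfl⟩
      rw [hu] at h2
      have h3 : c.1 / a < d - 1 := by rw [hu]; omega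
      have := (Nat.div_lt_iff_lt_mul ha).mp h3
      rwa [Nat.mul_comm] at this
    · have : b * (d - 1 - c.1 / a) ≤ b * (d - 1) := Nat.mul_le_mul_left _ (Nat.sub_le _ _)
      omega

lemma rowLen_le_L {d a b : ℕ} (ha : 0 < a) {μ : YoungDiagram}
    (hμ : μ ≤ rectStaircase d a b) (i : ℕ) : μ.rowLen i ≤ b * (d - 1 - i / a) := by
  by_contra hlt
  have hmem : (i, b * (d - 1 - i / a)) ∈ μ := by
    rw [mem_iff_lt_rowLen]; omega
  have hsub := YoungDiagram.cells_subset_iff.mpr hμ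
  have hmem2 : (i, b * (d - 1 - i / a)) ∈ rectStaircase d a b := by
    rw [← YoungDiagram.mem_cells]
    exact hsub (by rw [YoungDiagram.mem_cells]; exact hmem)
  rw [mem_rectStaircase ha] at hmem2
  simp only at hmem2
  omega

lemma rowLen_eq_zero_of_le {d a b : ℕ} (ha : 0 < a) {μ : YoungDiagram}
    (hμ : μ ≤ rectStaircase d a b) {i : ℕ} (hi : a * (d - 1) ≤ i) : μ.rowLen i = 0 := by
  have h1 := rowLen_le_L ha hμ i
  have h2 : d - 1 ≤ i / a := by
    rw [Nat.le_div_iff_mul_le ha, Nat.mul_comm]; omega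
  have h3 : d - 1 - i / a = 0 := by omega
  rw [h3, Nat.mul_zero] at h1
  omega

/-- the balanced property: outer corners of the staircase lie on `b*i + a*j = a*b*(d-1)`. -/
lemma balanced {d a b : ℕ} (hb : 0 < b) {i : ℕ}
    (hadd : i = 0 ∨ b * (d - 1 - i / a) < b * (d - 1 - (i - 1) / a)) :
    b * i + a * (b * (d - 1 - i / a)) = a * b * (d - 1) := by
  rcases hadd with rfl | hlt
  · rw [Nat.zero_div, Nat.sub_zero, Nat.mul_zero, Nat.zero_add]
    ring
  · have hi : i ≠ 0 := by
      rintro rfl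
      simp at hlt
    have hv : d - 1 - i / a < d - 1 - (i - 1) / a := lt_of_mul_lt_mul_left hlt (Nat.zero_le b)
    have hdvd : a ∣ i := by
      by_contra hnd
      have hnd' : ¬ a ∣ (i - 1) + 1 := by rwa [show i - 1 + 1 = i from by omega]
      have heq := Nat.succ_div_of_not_dvd hnd'
      rw [show i - 1 + 1 = i from by omega] at heq
      omega
    have ha : 0 < a := by
      rcases Nat.eq_zero_or_pos a with rfl | h
      · obtain ⟨q, rfl⟩ := hdvd; simp at hi
      · exact h
    obtain ⟨q, rfl⟩ := hdvd
    have hq : a * q / a = q := Nat.mul_div_cancel_left _ ha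
    have hq' : (a * q - 1) / a = q - 1 := by
      have hq0 : q ≠ 0 := by rintro rfl; simp at hi
      have h1 : a * q - 1 = a * (q - 1) + (a - 1) := by
        have h2 : a * ((q - 1) + 1) = a * (q - 1) + a := by ring
        rw [show (q - 1) + 1 = q from by omega] at h2
        omega
      rw [h1, Nat.mul_add_div ha, Nat.div_eq_of_lt (by omega), Nat.add_zero]
    rw [hq] at hv ⊢
    rw [hq'] at hv
    have hqle : q ≤ d - 1 := by omega
    calc b * (a * q) + a * (b * (d - 1 - q)) = a * b * (q + (d - 1 - q)) := by ring
      _ = a * b * (d - 1) := by rw [show q + (d - 1 - q) = d - 1 by omega]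

/-- The key per-diagram identity. -/
lemma key_identity {d a b : ℕ} (ha : 0 < a) (hb : 0 < b) {μ : YoungDiagram}
    (hμ : μ ≤ rectStaircase d a b) :
    (∑ i ∈ Finset.range (a * (d - 1) + 1),
        ((if μ.rowLen i < b * (d - 1 - i / a) ∧ (i = 0 ∨ μ.rowLen i < μ.rowLen (i - 1))
            then ((b : ℚ) * i + a * μ.rowLen i - ((a * b * (d - 1) : ℕ) : ℚ)) else 0)
         - (if μ.rowLen (i + 1) < μ.rowLen i
            then ((b : ℚ) * i + a * μ.rowLen i - a - ((a * b * (d - 1) : ℕ) : ℚ)) else 0)))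
      = ((a : ℚ) + b) * ((Finset.range (a * (d - 1) + 1)).filter
          (fun i => μ.rowLen (i + 1) < μ.rowLen i)).card - ((a * b * (d - 1) : ℕ) : ℚ) := by
  classical
  set n := a * (d - 1) with hn
  have hr0 : ∀ i, n ≤ i → μ.rowLen i = 0 := fun i hi => rowLen_eq_zero_of_le ha hμ hi
  have hA : ∀ i, (if μ.rowLen i < b * (d - 1 - i / a) ∧ (i = 0 ∨ μ.rowLen i < μ.rowLen (i - 1))
            then ((b : ℚ) * i + a * μ.rowLen i - ((a * b * (d - 1) : ℕ) : ℚ)) else 0)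
      = (if (i = 0 ∨ μ.rowLen i < μ.rowLen (i - 1))
            then ((b : ℚ) * i + a * μ.rowLen i - ((a * b * (d - 1) : ℕ) : ℚ)) else 0) := by
    intro i
    by_cases h2 : i = 0 ∨ μ.rowLen i < μ.rowLen (i - 1)
    · by_cases h1 : μ.rowLen i < b * (d - 1 - i / a)
      · rw [if_pos ⟨h1, h2⟩, if_pos h2]
      · rw [if_neg (fun hc => h1 hc.1), if_pos h2]
        have hle := rowLen_le_L ha hμ i
        have heq : μ.rowLen i = b * (d - 1 - i / a) := by omega
        have hbal : b * i + a * (b * (d - 1 - i / a)) = a * b * (d - 1) := by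
          apply balanced hb
          rcases h2 with h2 | h2
          · exact Or.inl h2
          · right
            have := rowLen_le_L ha hμ (i - 1)
            omega
        have hcast : ((b * i + a * (b * (d - 1 - i / a)) : ℕ) : ℚ)
            = ((a * b * (d - 1) : ℕ) : ℚ) := by rw [hbal]
        rw [heq]
        push_cast at hcast ⊢
        linarith
    · rw [if_neg (fun hc => h2 hc.2), if_neg h2]
  simp only [hA]
  rw [Finset.sum_sub_distrib]
  rw [Finset.sum_range_succ' (fun i => (if (i = 0 ∨ μ.rowLen i < μ.rowLen (i - 1))
            then ((b : ℚ) * i + a * μ.rowLen i - ((a * b * (d - 1) : ℕ) : ℚ)) else 0)) n]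
  rw [Finset.sum_range_succ (fun i => (if μ.rowLen (i + 1) < μ.rowLen i
            then ((b : ℚ) * i + a * μ.rowLen i - a - ((a * b * (d - 1) : ℕ) : ℚ)) else 0)) n]
  have hPRn : ¬ (μ.rowLen (n + 1) < μ.rowLen n) := by
    have := hr0 n le_rfl
    omega
  rw [if_neg hPRn, add_zero]
  have hadd0 : (if ((0 : ℕ) = 0 ∨ μ.rowLen 0 < μ.rowLen (0 - 1))
      then ((b : ℚ) * (0 : ℕ) + a * μ.rowLen 0 - ((a * b * (d - 1) : ℕ) : ℚ)) else 0)
      = (a : ℚ) * μ.rowLen 0 - ((a * b * (d - 1) : ℕ) : ℚ) := by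
    rw [if_pos (Or.inl rfl)]
    push_cast
    ring
  rw [hadd0]
  have haddsucc : ∀ i, (if ((i + 1 : ℕ) = 0 ∨ μ.rowLen (i + 1) < μ.rowLen (i + 1 - 1))
      then ((b : ℚ) * ((i + 1 : ℕ) : ℚ) + a * μ.rowLen (i + 1) - ((a * b * (d - 1) : ℕ) : ℚ)) else 0)
      = (if μ.rowLen (i + 1) < μ.rowLen i
      then ((b : ℚ) * ((i + 1 : ℕ) : ℚ) + a * μ.rowLen (i + 1) - ((a * b * (d - 1) : ℕ) : ℚ)) else 0) := by
    intro i
    have h : ((i + 1 : ℕ) = 0 ∨ μ.rowLen (i + 1) < μ.rowLen (i + 1 - 1))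
        ↔ μ.rowLen (i + 1) < μ.rowLen i := by
      simp only [Nat.add_sub_cancel]
      omega
    rw [if_congr h rfl rfl]
  simp only [haddsucc]
  have hcomb : ∀ i ∈ Finset.range n,
      ((if μ.rowLen (i + 1) < μ.rowLen i
        then ((b : ℚ) * ((i + 1 : ℕ) : ℚ) + a * μ.rowLen (i + 1) - ((a * b * (d - 1) : ℕ) : ℚ)) else 0)
       - (if μ.rowLen (i + 1) < μ.rowLen i
        then ((b : ℚ) * i + a * μ.rowLen i - a - ((a * b * (d - 1) : ℕ) : ℚ)) else 0))
      = (if μ.rowLen (i + 1) < μ.rowLen i then ((a : ℚ) + b) else 0)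
        + (a : ℚ) * ((μ.rowLen (i + 1) : ℚ) - μ.rowLen i) := by
    intro i _
    by_cases h : μ.rowLen (i + 1) < μ.rowLen i
    · rw [if_pos h, if_pos h, if_pos h]
      push_cast
      ring
    · rw [if_neg h, if_neg h, if_neg h]
      have hanti := μ.rowLen_anti i (i + 1) (by omega)
      have heq : μ.rowLen (i + 1) = μ.rowLen i := by omega
      rw [heq]
      ring
  have step : (∑ i ∈ Finset.range n, (if μ.rowLen (i + 1) < μ.rowLen i
        then ((b : ℚ) * ((i + 1 : ℕ) : ℚ) + a * μ.rowLen (i + 1) - ((a * b * (d - 1) : ℕ) : ℚ)) else 0))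
      - (∑ i ∈ Finset.range n, (if μ.rowLen (i + 1) < μ.rowLen i
        then ((b : ℚ) * i + a * μ.rowLen i - a - ((a * b * (d - 1) : ℕ) : ℚ)) else 0))
      = (∑ i ∈ Finset.range n,
          ((if μ.rowLen (i + 1) < μ.rowLen i then ((a : ℚ) + b) else 0)
            + (a : ℚ) * ((μ.rowLen (i + 1) : ℚ) - μ.rowLen i))) := by
    rw [← Finset.sum_congr rfl hcomb, Finset.sum_sub_distrib]
  have hrearrange : ∀ (X Y Z : ℚ), (X + Z) - Y = (X - Y) + Z := by intros; ring
  rw [hrearrange, step]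
  rw [Finset.sum_add_distrib, ← Finset.mul_sum, Finset.sum_range_sub (fun i => (μ.rowLen i : ℚ)) n]
  rw [hr0 n le_rfl]
  have hcard : (∑ i ∈ Finset.range n, (if μ.rowLen (i + 1) < μ.rowLen i then ((a : ℚ) + b) else 0))
      = ((a : ℚ) + b) * ((Finset.range (n + 1)).filter
          (fun i => μ.rowLen (i + 1) < μ.rowLen i)).card := by
    rw [← Finset.sum_filter, Finset.sum_const]
    have h : (Finset.range (n + 1)).filter (fun i => μ.rowLen (i + 1) < μ.rowLen i)
        = (Finset.range n).filter (fun i => μ.rowLen (i + 1) < μ.rowLen i) := by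
      rw [Finset.range_add_one, Finset.filter_insert, if_neg hPRn]
    rw [h, nsmul_eq_mul, mul_comm]
  rw [hcard]
  push_cast
  ring

end StaircaseAux

namespace StaircaseAux

/-- addable-within-λ summand -/
def TA (d a b : ℕ) (μ : YoungDiagram) (i : ℕ) : ℚ :=
  if μ.rowLen i < b * (d - 1 - i / a) ∧ (i = 0 ∨ μ.rowLen i < μ.rowLen (i - 1))
    then ((b : ℚ) * i + a * μ.rowLen i - ((a * b * (d - 1) : ℕ) : ℚ)) else 0

/-- removable summand -/
def TR (d a b : ℕ) (μ : YoungDiagram) (i : ℕ) : ℚ :=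
  if μ.rowLen (i + 1) < μ.rowLen i
    then ((b : ℚ) * i + a * μ.rowLen i - (a : ℚ) - ((a * b * (d - 1) : ℕ) : ℚ)) else 0

lemma key_identity' {d a b : ℕ} (ha : 0 < a) (hb : 0 < b) {μ : YoungDiagram}
    (hμ : μ ≤ rectStaircase d a b) :
    (∑ i ∈ Finset.range (a * (d - 1) + 1), (TA d a b μ i - TR d a b μ i))
      = ((a : ℚ) + b) * ((Finset.range (a * (d - 1) + 1)).filter
          (fun i => μ.rowLen (i + 1) < μ.rowLen i)).card - ((a * b * (d - 1) : ℕ) : ℚ) := by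
  simp only [TA, TR]
  exact key_identity ha hb hμ

lemma addC_le_staircase {d a b : ℕ} (ha : 0 < a) {μ : YoungDiagram}
    (hμ : μ ≤ rectStaircase d a b) {i : ℕ}
    (h1 : μ.rowLen i < b * (d - 1 - i / a))
    (h2 : i = 0 ∨ μ.rowLen i < μ.rowLen (i - 1)) :
    addC μ i h2 ≤ rectStaircase d a b := by
  rw [← YoungDiagram.cells_subset_iff]
  show insert (i, μ.rowLen i) μ.cells ⊆ _
  apply Finset.insert_subset
  · rw [YoungDiagram.mem_cells, mem_rectStaircase ha]
    exact h1
  · exact YoungDiagram.cells_subset_iff.mpr hμ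

instance : Finite {μ : YoungDiagram // μ ≤ rectStaircase d a b} := by
  apply Finite.of_injective (β := ((rectStaircase d a b).cells.powerset : Finset (Finset (ℕ × ℕ))))
    (f := fun μ => ⟨μ.1.cells, Finset.mem_powerset.mpr (YoungDiagram.cells_subset_iff.mpr μ.2)⟩)
  intro μ ν h
  apply Subtype.ext
  apply YoungDiagram.ext
  exact congrArg Subtype.val h

lemma toggle_sum_i (d a b : ℕ) (ha : 0 < a) (hb : 0 < b)
    [Fintype {μ : YoungDiagram // μ ≤ rectStaircase d a b}] (i : ℕ) :
    (∑ μ : {μ : YoungDiagram // μ ≤ rectStaircase d a b}, TA d a b μ.1 i)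
      = ∑ μ : {μ : YoungDiagram // μ ≤ rectStaircase d a b}, TR d a b μ.1 i := by
  classical
  have hL : (∑ μ ∈ (Finset.univ.filter
        (fun μ : {μ : YoungDiagram // μ ≤ rectStaircase d a b} =>
          μ.1.rowLen i < b * (d - 1 - i / a) ∧
            (i = 0 ∨ μ.1.rowLen i < μ.1.rowLen (i - 1)))), TA d a b μ.1 i)
      = ∑ μ : {μ : YoungDiagram // μ ≤ rectStaircase d a b}, TA d a b μ.1 i := by
    apply Finset.sum_filter_of_ne
    intro μ _ hne
    by_contra hc
    exact hne (by simp only [TA]; rw [if_neg hc])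
  have hR : (∑ μ ∈ (Finset.univ.filter
        (fun μ : {μ : YoungDiagram // μ ≤ rectStaircase d a b} =>
          μ.1.rowLen (i + 1) < μ.1.rowLen i)), TR d a b μ.1 i)
      = ∑ μ : {μ : YoungDiagram // μ ≤ rectStaircase d a b}, TR d a b μ.1 i := by
    apply Finset.sum_filter_of_ne
    intro μ _ hne
    by_contra hc
    exact hne (by simp only [TR]; rw [if_neg hc])
  rw [← hL, ← hR]
  apply Finset.sum_nbij'
    (i := fun μ => if h : μ.1.rowLen i < b * (d - 1 - i / a) ∧
        (i = 0 ∨ μ.1.rowLen i < μ.1.rowLen (i - 1))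
      then ⟨addC μ.1 i h.2, addC_le_staircase ha μ.2 h.1 h.2⟩ else μ)
    (j := fun μ => if h : μ.1.rowLen (i + 1) < μ.1.rowLen i
      then ⟨eraseC μ.1 i h, le_trans (eraseC_le h) μ.2⟩ else μ)
  · -- maps into target filter
    intro μ hμ
    rw [Finset.mem_filter] at hμ
    obtain ⟨-, hcond⟩ := hμ
    rw [dif_pos hcond, Finset.mem_filter]
    refine ⟨Finset.mem_univ _, ?_⟩
    show (addC μ.1 i hcond.2).rowLen (i + 1) < (addC μ.1 i hcond.2).rowLen i
    rw [rowLen_addC hcond.2 (i + 1), rowLen_addC hcond.2 i, if_neg (by omega), if_pos rfl]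
    have := μ.1.rowLen_anti i (i + 1) (by omega)
    omega
  · -- reverse maps into source filter
    intro μ hμ
    rw [Finset.mem_filter] at hμ
    obtain ⟨-, hcond⟩ := hμ
    rw [dif_pos hcond, Finset.mem_filter]
    refine ⟨Finset.mem_univ _, ?_, ?_⟩
    · show (eraseC μ.1 i hcond).rowLen i < b * (d - 1 - i / a)
      rw [rowLen_eraseC hcond i, if_pos rfl]
      have := rowLen_le_L ha μ.2 i
      omega
    · show i = 0 ∨ (eraseC μ.1 i hcond).rowLen i < (eraseC μ.1 i hcond).rowLen (i - 1)
      rcases Nat.eq_zero_or_pos i with rfl | hi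
      · exact Or.inl rfl
      · right
        rw [rowLen_eraseC hcond i, if_pos rfl, rowLen_eraseC hcond (i - 1), if_neg (by omega)]
        have := μ.1.rowLen_anti (i - 1) i (by omega)
        omega
  · -- left inverse
    intro μ hμ
    rw [Finset.mem_filter] at hμ
    obtain ⟨-, hcond⟩ := hμ
    rw [dif_pos hcond]
    have hPR : (addC μ.1 i hcond.2).rowLen (i + 1) < (addC μ.1 i hcond.2).rowLen i := by
      rw [rowLen_addC hcond.2 (i + 1), rowLen_addC hcond.2 i, if_neg (by omega), if_pos rfl]
      have := μ.1.rowLen_anti i (i + 1) (by omega)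
      omega
    rw [dif_pos hPR]
    exact Subtype.ext (eraseC_addC hcond.2 hPR)
  · -- right inverse
    intro μ hμ
    rw [Finset.mem_filter] at hμ
    obtain ⟨-, hcond⟩ := hμ
    rw [dif_pos hcond]
    have hPA : (eraseC μ.1 i hcond).rowLen i < b * (d - 1 - i / a) ∧
        (i = 0 ∨ (eraseC μ.1 i hcond).rowLen i < (eraseC μ.1 i hcond).rowLen (i - 1)) := by
      constructor
      · rw [rowLen_eraseC hcond i, if_pos rfl]
        have := rowLen_le_L ha μ.2 i
        omega
      · rcases Nat.eq_zero_or_pos i with rfl | hi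
        · exact Or.inl rfl
        · right
          rw [rowLen_eraseC hcond i, if_pos rfl, rowLen_eraseC hcond (i - 1), if_neg (by omega)]
          have := μ.1.rowLen_anti (i - 1) i (by omega)
          omega
    rw [dif_pos hPA]
    exact Subtype.ext (addC_eraseC hcond hPA.2)
  · -- weights agree
    intro μ hμ
    rw [Finset.mem_filter] at hμ
    obtain ⟨-, hcond⟩ := hμ
    rw [dif_pos hcond]
    show TA d a b μ.1 i = TR d a b (addC μ.1 i hcond.2) i
    have hPR : (addC μ.1 i hcond.2).rowLen (i + 1) < (addC μ.1 i hcond.2).rowLen i := by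
      rw [rowLen_addC hcond.2 (i + 1), rowLen_addC hcond.2 i, if_neg (by omega), if_pos rfl]
      have := μ.1.rowLen_anti i (i + 1) (by omega)
      omega
    simp only [TA, TR]
    rw [if_pos hcond, if_pos hPR, rowLen_addC hcond.2 i, if_pos rfl]
    push_cast
    ring

end StaircaseAux


/-- For the rectangular staircase `λ = δ_d ∘ (b^a)`, the expected down-degree of a
uniformly random element of the interval `[∅, λ]` in Young's lattice is `(d-1)ab/(a+b)`. -/
theorem stmt10 (d a b : ℕ) (hd : 1 ≤ d) (ha : 0 < a) (hb : 0 < b) :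
    (∑ᶠ μ : {μ : YoungDiagram // μ ≤ rectStaircase d a b},
        (downDeg {μ : YoungDiagram // μ ≤ rectStaircase d a b} μ : ℚ)) /
      (Nat.card {μ : YoungDiagram // μ ≤ rectStaircase d a b} : ℚ) =
      ((d : ℚ) - 1) * a * b / (a + b) := by
  classical
  haveI : Fintype {μ : YoungDiagram // μ ≤ rectStaircase d a b} := Fintype.ofFinite _
  haveI : Nonempty {μ : YoungDiagram // μ ≤ rectStaircase d a b} := ⟨⟨⊥, bot_le⟩⟩
  set n := a * (d - 1) with hn
  have hdd : ∀ μ : {μ : YoungDiagram // μ ≤ rectStaircase d a b},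
      downDeg {μ : YoungDiagram // μ ≤ rectStaircase d a b} μ =
        ((Finset.range (n + 1)).filter
          (fun i => μ.1.rowLen (i + 1) < μ.1.rowLen i)).card := by
    intro μ
    apply StaircaseAux.downDeg_eq
    intro i hi
    exact StaircaseAux.rowLen_eq_zero_of_le ha μ.2 (by omega)
  -- sum of per-diagram identities, with the toggle sums cancelling
  have h1 : (∑ μ : {μ : YoungDiagram // μ ≤ rectStaircase d a b},
      ∑ i ∈ Finset.range (n + 1),
        (StaircaseAux.TA d a b μ.1 i - StaircaseAux.TR d a b μ.1 i)) = 0 := by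
    calc (∑ μ : {μ : YoungDiagram // μ ≤ rectStaircase d a b},
        ∑ i ∈ Finset.range (n + 1),
          (StaircaseAux.TA d a b μ.1 i - StaircaseAux.TR d a b μ.1 i))
        = (∑ μ : {μ : YoungDiagram // μ ≤ rectStaircase d a b},
            ((∑ i ∈ Finset.range (n + 1), StaircaseAux.TA d a b μ.1 i)
              - ∑ i ∈ Finset.range (n + 1), StaircaseAux.TR d a b μ.1 i)) :=
          Finset.sum_congr rfl (fun μ _ => Finset.sum_sub_distrib _ _)
      _ = (∑ μ : {μ : YoungDiagram // μ ≤ rectStaircase d a b},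
            ∑ i ∈ Finset.range (n + 1), StaircaseAux.TA d a b μ.1 i)
          - ∑ μ : {μ : YoungDiagram // μ ≤ rectStaircase d a b},
            ∑ i ∈ Finset.range (n + 1), StaircaseAux.TR d a b μ.1 i :=
          Finset.sum_sub_distrib _ _
      _ = 0 := by
          rw [sub_eq_zero, Finset.sum_comm, Finset.sum_comm
            (s := (Finset.univ : Finset {μ : YoungDiagram // μ ≤ rectStaircase d a b}))]
          exact Finset.sum_congr rfl
            (fun i _ => StaircaseAux.toggle_sum_i d a b ha hb i)
  have h2 : (∑ μ : {μ : YoungDiagram // μ ≤ rectStaircase d a b},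
      (((a : ℚ) + b) * ((Finset.range (n + 1)).filter
          (fun i => μ.1.rowLen (i + 1) < μ.1.rowLen i)).card
        - ((a * b * (d - 1) : ℕ) : ℚ))) = 0 := by
    rw [← h1]
    exact Finset.sum_congr rfl
      (fun μ _ => (StaircaseAux.key_identity' ha hb μ.2).symm)
  rw [Finset.sum_sub_distrib, Finset.sum_const, ← Finset.mul_sum, sub_eq_zero,
    Finset.card_univ, nsmul_eq_mul] at h2
  -- translate to downDeg
  have hE : (∑ μ : {μ : YoungDiagram // μ ≤ rectStaircase d a b},
      ((downDeg {μ : YoungDiagram // μ ≤ rectStaircase d a b} μ : ℚ)))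
      = ∑ μ : {μ : YoungDiagram // μ ≤ rectStaircase d a b},
        ((((Finset.range (n + 1)).filter
          (fun i => μ.1.rowLen (i + 1) < μ.1.rowLen i)).card : ℚ)) :=
    Finset.sum_congr rfl (fun μ _ => by rw [hdd μ])
  rw [finsum_eq_sum_of_fintype, Nat.card_eq_fintype_card, hE]
  have hV : (0 : ℚ) < (Fintype.card {μ : YoungDiagram // μ ≤ rectStaircase d a b} : ℚ) := by
    have := Fintype.card_pos (α := {μ : YoungDiagram // μ ≤ rectStaircase d a b})
    exact_mod_cast this
  have hab : (0 : ℚ) < (a : ℚ) + b := by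
    have : (0 : ℚ) < (a : ℚ) := by exact_mod_cast ha
    have : (0 : ℚ) < (b : ℚ) := by exact_mod_cast hb
    linarith [show (0:ℚ) < (a:ℚ) from by exact_mod_cast ha]
  have hK : ((a * b * (d - 1) : ℕ) : ℚ) = ((d : ℚ) - 1) * a * b := by
    rw [Nat.cast_mul, Nat.cast_mul, Nat.cast_sub hd, Nat.cast_one]
    ring
  rw [div_eq_div_iff (ne_of_gt hV) (ne_of_gt hab)]
  rw [hK] at h2
  linarith [h2]
end

section
/- For positive integers a, b and d ≥ 1, the hypergeometric identity Σ_{i=1}^{d−1} a·i · ((b/(a+b))_i / i!) · ((a/(a+b))_{d−1−i} / (d−1−i)!) = (d−1)ab/(a+b) holds, where (z)_j denotes the rising factorial z(z+1)⋯(z+j−1). -/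
open Finset Polynomial

lemma smeval_desc_rat (r : ℚ) (n : ℕ) :
    (descPochhammer ℤ n).smeval r = (descPochhammer ℚ n).eval r := by
  rw [← Polynomial.aeval_eq_smeval, Polynomial.aeval_def, ← Polynomial.eval_map,
    descPochhammer_map]

lemma rchoose_eq (r : ℚ) (n : ℕ) :
    Ring.choose r n = (descPochhammer ℚ n).eval r / n.factorial := by
  have h := Ring.descPochhammer_eq_factorial_smul_choose r n
  rw [smeval_desc_rat, nsmul_eq_mul] at h
  rw [h, mul_div_cancel_left₀ _ (by exact_mod_cast n.factorial_ne_zero)]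

lemma desc_neg_eq (z : ℚ) (k : ℕ) :
    (descPochhammer ℚ k).eval (-z) = (-1) ^ k * (ascPochhammer ℚ k).eval z := by
  have h := ascPochhammer_eval_neg_eq_descPochhammer (R := ℚ) (-z) k
  rw [neg_neg] at h
  rw [h, ← mul_assoc, ← mul_pow, neg_mul_neg, one_mul, one_pow, one_mul]

lemma asc_vandermonde (x y : ℚ) (n : ℕ) :
    ∑ j ∈ range (n + 1),
      (ascPochhammer ℚ j).eval x / j.factorial *
        ((ascPochhammer ℚ (n - j)).eval y / (n - j).factorial) =
    (ascPochhammer ℚ n).eval (x + y) / n.factorial := by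
  have h := Ring.add_choose_eq (R := ℚ) (r := -x) (s := -y) n (Commute.all _ _)
  rw [Finset.Nat.sum_antidiagonal_eq_sum_range_succ_mk] at h
  simp only [rchoose_eq, desc_neg_eq] at h
  have h2 : (-x) + (-y) = -(x + y) := by ring
  rw [h2, desc_neg_eq] at h
  have hn2 : ((-1 : ℚ) ^ n) * ((-1 : ℚ) ^ n) = 1 := by
    rw [← mul_pow]; norm_num
  symm
  calc (ascPochhammer ℚ n).eval (x + y) / n.factorial
      = (-1:ℚ)^n * ((-1:ℚ)^n * (ascPochhammer ℚ n).eval (x + y) / n.factorial) := by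
        rw [mul_div_assoc, ← mul_assoc, hn2, one_mul]
    _ = (-1:ℚ)^n * ∑ j ∈ range (n + 1),
          (-1:ℚ)^j * (ascPochhammer ℚ j).eval x / j.factorial *
            ((-1:ℚ)^(n-j) * (ascPochhammer ℚ (n-j)).eval y / (n-j).factorial) := by rw [← h]
    _ = ∑ j ∈ range (n + 1), (-1:ℚ)^n *
          ((-1:ℚ)^j * (ascPochhammer ℚ j).eval x / j.factorial *
            ((-1:ℚ)^(n-j) * (ascPochhammer ℚ (n-j)).eval y / (n-j).factorial)) := by
        rw [mul_sum]
    _ = _ := by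
        refine Finset.sum_congr rfl fun j hj => ?_
        have hjn : j ≤ n := Nat.lt_succ_iff.mp (mem_range.mp hj)
        have hs : (-1:ℚ)^j * (-1:ℚ)^(n-j) = (-1:ℚ)^n := by
          rw [← pow_add]; congr 1; omega
        set A := (ascPochhammer ℚ j).eval x
        set B := (ascPochhammer ℚ (n-j)).eval y
        have expand : (-1:ℚ)^n * ((-1:ℚ)^j * A / j.factorial *
            ((-1:ℚ)^(n-j) * B / (n-j).factorial)) =
            ((-1:ℚ)^n * ((-1:ℚ)^j * (-1:ℚ)^(n-j))) * (A / j.factorial * (B / (n-j).factorial)) := by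
          ring
        rw [expand, hs, hn2, one_mul]

lemma asc_succ_left_eval (x : ℚ) (j : ℕ) :
    (ascPochhammer ℚ (j + 1)).eval x = x * (ascPochhammer ℚ j).eval (x + 1) := by
  rw [ascPochhammer_succ_left, eval_mul, eval_X, eval_comp, eval_add, eval_X, eval_one]

lemma asc_two_eval (e : ℕ) : (ascPochhammer ℚ e).eval 2 = (e + 1).factorial := by
  have h2 : ((2 : ℕ) : ℚ) = 2 := by norm_num
  rw [← h2, ← ascPochhammer_eval_cast, ascPochhammer_nat_eq_ascFactorial]
  congr 1
  induction e with
  | zero => rfl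
  | succ k ih =>
    rw [Nat.ascFactorial_succ, ih, show 2 + k = k + 2 from by omega]
    exact (Nat.factorial_succ (k + 1)).symm

/-- The hypergeometric (Chu–Vandermonde) identity
`Σ_{i=1}^{d-1} a·i · ((b/(a+b))_i / i!) · ((a/(a+b))_{d-1-i} / (d-1-i)!) = (d-1)ab/(a+b)`,
where `(z)_j` is the rising factorial (Pochhammer symbol). -/
theorem stmt13 (a b : ℕ) (ha : 0 < a) (hb : 0 < b) (d : ℕ) (hd : 1 ≤ d) :
    ∑ i ∈ Finset.Icc 1 (d - 1),
        (a : ℚ) * i *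
          ((ascPochhammer ℚ i).eval ((b : ℚ) / (a + b)) / (Nat.factorial i : ℚ)) *
          ((ascPochhammer ℚ (d - 1 - i)).eval ((a : ℚ) / (a + b)) /
            (Nat.factorial (d - 1 - i) : ℚ)) =
      ((d : ℚ) - 1) * a * b / (a + b) := by
  have hab : ((a : ℚ) + b) ≠ 0 := by positivity
  rcases Nat.lt_or_ge d 2 with h2 | h2
  · have hone : d = 1 := by omega
    subst hone
    simp
  · obtain ⟨e, rfl⟩ : ∃ e, d = e + 2 := ⟨d - 2, by omega⟩
    set x : ℚ := (b : ℚ) / (a + b) with hx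
    set y : ℚ := (a : ℚ) / (a + b) with hy
    have hred : e + 2 - 1 = e + 1 := rfl
    rw [hred, ← Finset.Ico_add_one_right_eq_Icc, Finset.sum_Ico_eq_sum_range]
    have hred2 : e + 1 + 1 - 1 = e + 1 := rfl
    rw [hred2]
    have key : ∀ j ∈ range (e + 1),
        (a : ℚ) * (↑(1 + j)) *
          ((ascPochhammer ℚ (1 + j)).eval x / (Nat.factorial (1 + j) : ℚ)) *
          ((ascPochhammer ℚ (e + 1 - (1 + j))).eval y /
            (Nat.factorial (e + 1 - (1 + j)) : ℚ)) =
        (a : ℚ) * x * ((ascPochhammer ℚ j).eval (x + 1) / j.factorial *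
          ((ascPochhammer ℚ (e - j)).eval y / (e - j).factorial)) := by
      intro j hj
      have hsub : e + 1 - (1 + j) = e - j := by omega
      have hadd : 1 + j = j + 1 := by omega
      rw [hsub, hadd, asc_succ_left_eval, Nat.factorial_succ]
      have hj1 : ((j : ℚ) + 1) ≠ 0 := by positivity
      have hjf : ((j.factorial : ℚ)) ≠ 0 := by exact_mod_cast j.factorial_ne_zero
      have hjf2 : (((e - j).factorial : ℚ)) ≠ 0 := by exact_mod_cast (e - j).factorial_ne_zero
      push_cast
      field_simp
    rw [Finset.sum_congr rfl key, ← Finset.mul_sum, asc_vandermonde]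
    have hxy : x + 1 + y = 2 := by
      rw [hx, hy]
      field_simp
      ring
    rw [hxy, asc_two_eval, Nat.factorial_succ]
    have hef : ((e.factorial : ℚ)) ≠ 0 := by exact_mod_cast e.factorial_ne_zero
    push_cast
    rw [hx]
    field_simp
    ring
end

section
/- Let P be a finite forest poset (each element covered by at most one element). Then the number of linear extensions of P equals (#P)! divided by the product over i ∈ P of #P_{≤i}, where P_{≤i} = {j ∈ P : j ≤_P i}. -/
universe u

section Aux
variable {P : Type u} [PartialOrder P] [Fintype P]

lemma my_exists_cover {a b : P} (h : a < b) : ∃ x : P, a ⋖ x ∧ x ≤ b := by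
  obtain ⟨x, hxb, hmin⟩ := Set.IsPWO.exists_le_minimal
    (s := {x : P | a < x ∧ x ≤ b}) (Set.toFinite _).isPWO ⟨h, le_rfl⟩
  refine ⟨x, ⟨hmin.1.1, fun c hac hcx => ?_⟩, hmin.1.2⟩
  exact absurd (hmin.2 ⟨hac, hcx.le.trans hmin.1.2⟩ hcx.le) hcx.not_ge

lemma my_cover_unique (hf : ∀ p : P, ({q : P | p ⋖ q}).ncard ≤ 1)
    {a x y : P} (hx : a ⋖ x) (hy : a ⋖ y) : x = y :=
  (Set.ncard_le_one_iff (Set.toFinite _)).mp (hf a) hx hy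

lemma my_forest_comparable (hf : ∀ p : P, ({q : P | p ⋖ q}).ncard ≤ 1) :
    ∀ a b c : P, a ≤ b → a ≤ c → b ≤ c ∨ c ≤ b := by
  have wf : WellFounded ((· > ·) : P → P → Prop) := (Finite.to_wellFoundedGT).wf
  intro a
  induction a using WellFounded.induction wf with
  | _ a IH =>
    intro b c hb hc
    rcases eq_or_lt_of_le hb with rfl | hb'
    · exact Or.inl hc
    rcases eq_or_lt_of_le hc with rfl | hc'
    · exact Or.inr hb
    obtain ⟨x, hax, hxb⟩ := my_exists_cover hb'
    obtain ⟨y, hay, hyc⟩ := my_exists_cover hc'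
    obtain rfl := my_cover_unique hf hax hay
    exact IH x hax.lt b c hxb hyc

omit [Fintype P] in
lemma my_top_isMax {n : ℕ} (f : P ≃ Fin (n + 1)) (hf : Monotone ⇑f) :
    IsMax (f.symm (Fin.last n)) := by
  intro q hq
  have h1 : f (f.symm (Fin.last n)) ≤ f q := hf hq
  rw [Equiv.apply_symm_apply] at h1
  have : f q = Fin.last n := le_antisymm (Fin.le_last _) h1
  rw [← this, Equiv.symm_apply_apply]

open Classical in
noncomputable def myFiberEquiv {n : ℕ} (m : P) (hm : IsMax m) :
    {f : P ≃ Fin (n + 1) // Monotone ⇑f ∧ f.symm (Fin.last n) = m} ≃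
      {g : {p : P // p ≠ m} ≃ Fin n // Monotone ⇑g} where
  toFun := fun ⟨f, hmono, hlast⟩ => by
    have hfm : f m = Fin.last n := by rw [← hlast, Equiv.apply_symm_apply]
    have hne : ∀ p : {p : P // p ≠ m}, f p.1 ≠ Fin.last n := fun p h =>
      p.2 (f.injective (h.trans hfm.symm))
    have hne' : ∀ i : Fin n, f.symm i.castSucc ≠ m := fun i h => by
      have h2 : f m = i.castSucc := by rw [← h, Equiv.apply_symm_apply]
      exact absurd (hfm ▸ h2) (Fin.castSucc_lt_last i).ne'
    refine ⟨⟨fun p => (f p.1).castPred (hne p),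
        fun i => ⟨f.symm i.castSucc, hne' i⟩, ?_, ?_⟩, ?_⟩
    · intro p
      apply Subtype.ext
      show (f.symm ((f p.1).castPred (hne p)).castSucc : P) = p.1
      rw [Fin.castSucc_castPred, Equiv.symm_apply_apply]
    · intro i
      show (f (f.symm i.castSucc)).castPred _ = i
      simp_rw [Equiv.apply_symm_apply]
      exact Fin.castPred_castSucc
    · intro p q hpq
      have h3 := hmono (show p.1 ≤ q.1 from hpq)
      rw [Fin.le_def] at h3 ⊢
      simpa using h3
  invFun := fun ⟨g, hg⟩ => by
    refine ⟨⟨fun p => if h : p = m then Fin.last n else (g ⟨p, h⟩).castSucc,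
        fun i => if h : i = Fin.last n then m else (g.symm (i.castPred h)).1, ?_, ?_⟩, ?_, ?_⟩
    · intro p
      dsimp only
      by_cases h : p = m
      · rw [dif_pos h, dif_pos rfl, h]
      · rw [dif_neg h, dif_neg (Fin.castSucc_lt_last _).ne, Fin.castPred_castSucc,
          Equiv.symm_apply_apply]
    · intro i
      dsimp only
      by_cases h : i = Fin.last n
      · rw [dif_pos h, dif_pos rfl, h]
      · rw [dif_neg h, dif_neg (g.symm (i.castPred h)).2, Equiv.apply_symm_apply,
          Fin.castSucc_castPred]
    · intro p q hpq
      simp only [Equiv.coe_fn_mk]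
      by_cases hq : q = m
      · rw [dif_pos hq]
        exact Fin.le_last _
      · have hp : p ≠ m := fun h => hq (le_antisymm (hm (h ▸ hpq)) (h ▸ hpq))
        rw [dif_neg hp, dif_neg hq]
        exact Fin.castSucc_le_castSucc_iff.mpr
          (hg (show (⟨p, hp⟩ : {p : P // p ≠ m}) ≤ ⟨q, hq⟩ from hpq))
    · rw [Equiv.symm_apply_eq]
      simp
  left_inv := by
    rintro ⟨f, hmono, hlast⟩
    have hfm : f m = Fin.last n := by rw [← hlast, Equiv.apply_symm_apply]
    apply Subtype.ext
    apply Equiv.ext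
    intro p
    dsimp only [Equiv.coe_fn_mk]
    by_cases h : p = m
    · rw [dif_pos h, h, hfm]
    · rw [dif_neg h, Fin.castSucc_castPred]
  right_inv := by
    rintro ⟨g, hg⟩
    apply Subtype.ext
    apply Equiv.ext
    intro p
    dsimp only [Equiv.coe_fn_mk]
    apply Fin.ext
    rw [Fin.coe_castPred, dif_neg p.2, Fin.coe_castSucc]

end Aux

open Classical in
theorem my_hook_aux : ∀ (n : ℕ) (P : Type u) [PartialOrder P] [Fintype P],
    Fintype.card P = n →
    (∀ p : P, ({q : P | p ⋖ q}).ncard ≤ 1) →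
    Nat.card {f : P ≃ Fin n // Monotone ⇑f} * ∏ i : P, Nat.card {j : P // j ≤ i}
      = n.factorial := by
  intro n
  induction n with
  | zero =>
    intro P _ _ hc _
    haveI : IsEmpty P := Fintype.card_eq_zero_iff.mp hc
    haveI : Unique {f : P ≃ Fin 0 // Monotone ⇑f} :=
      { default := ⟨Equiv.equivOfIsEmpty P (Fin 0), by intro a b h; exact isEmptyElim a⟩
        uniq := fun f => Subtype.ext (Equiv.ext fun a => isEmptyElim a) }
    rw [Nat.card_unique]
    simp
  | succ n IH =>
    intro P _ _ hc hforest
    -- sigma decomposition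
    have e1 : Nat.card {f : P ≃ Fin (n + 1) // Monotone ⇑f}
        = ∑ m : P, Nat.card {f : P ≃ Fin (n + 1) // Monotone ⇑f ∧ f.symm (Fin.last n) = m} := by
      rw [Nat.card_congr ((Equiv.sigmaFiberEquiv
        (fun f : {f : P ≃ Fin (n + 1) // Monotone ⇑f} => f.1.symm (Fin.last n))).symm.trans
        (Equiv.sigmaCongrRight (fun m => Equiv.subtypeSubtypeEquivSubtypeInter
        (fun f : P ≃ Fin (n + 1) => Monotone ⇑f) (fun f => f.symm (Fin.last n) = m))))]
      rw [Nat.card_eq_fintype_card, Fintype.card_sigma]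
      exact Finset.sum_congr rfl (fun m _ => (Nat.card_eq_fintype_card).symm)
    -- empty fibers for non-maximal elements
    have e2 : ∀ m : P, ¬ IsMax m →
        Nat.card {f : P ≃ Fin (n + 1) // Monotone ⇑f ∧ f.symm (Fin.last n) = m} = 0 := by
      intro m hm
      refine Nat.card_eq_zero.mpr (Or.inl ⟨fun x => ?_⟩)
      obtain ⟨f, hf, hl⟩ := x
      exact hm (hl ▸ my_top_isMax f hf)
    -- forest structure on the complement of a maximal element
    have hsubforest : ∀ (m : P), IsMax m →
        ∀ p : {x : P // x ≠ m}, ({q : {x : P // x ≠ m} | p ⋖ q}).ncard ≤ 1 := by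
      intro m hm p
      have himg : (Subtype.val '' {q : {x : P // x ≠ m} | p ⋖ q}) ⊆ {q : P | p.1 ⋖ q} := by
        rintro _ ⟨q, hq, rfl⟩
        refine ⟨Subtype.coe_lt_coe.mpr hq.lt, fun c hc1 hc2 => ?_⟩
        have hcm : c ≠ m := by
          intro h
          subst h
          exact absurd (hm hc2.le) hc2.not_ge
        exact hq.2 (show p < ⟨c, hcm⟩ from Subtype.coe_lt_coe.mp hc1)
          (show (⟨c, hcm⟩ : {x : P // x ≠ m}) < q from Subtype.coe_lt_coe.mp hc2)
      calc ({q : {x : P // x ≠ m} | p ⋖ q}).ncard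
          = (Subtype.val '' {q : {x : P // x ≠ m} | p ⋖ q}).ncard :=
            (Set.ncard_image_of_injective _ Subtype.val_injective).symm
        _ ≤ ({q : P | p.1 ⋖ q}).ncard := Set.ncard_le_ncard himg (Set.toFinite _)
        _ ≤ 1 := hforest p.1
    -- hooks transfer to the subposet
    have hhook : ∀ (m : P), IsMax m → ∀ i : {x : P // x ≠ m},
        Nat.card {j : {x : P // x ≠ m} // j ≤ i} = Nat.card {j : P // j ≤ i.1} := by
      intro m hm i
      apply Nat.card_congr
      refine ⟨fun j => ⟨j.1.1, j.2⟩, fun j => ⟨⟨j.1, ?_⟩, ?_⟩, fun j => rfl, fun j => rfl⟩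
      · intro h
        have hj : m ≤ i.1 := h.symm.le.trans j.2
        exact i.2 (le_antisymm (hm hj) hj)
      · exact j.2
    -- product splitting
    have hprodsplit : ∀ (m : P),
        (∏ i : P, Nat.card {j : P // j ≤ i}) =
          Nat.card {j : P // j ≤ m} *
            ∏ i : {x : P // x ≠ m}, Nat.card {j : P // j ≤ i.1} := by
      intro m
      rw [Fintype.prod_eq_mul_prod_compl m]
      congr 1
      exact Finset.prod_subtype _ (fun x => by simp) _
    -- partition of P by maximal elements
    have hpart : ∑ m ∈ Finset.univ.filter (fun m : P => IsMax m),
        Nat.card {j : P // j ≤ m} = n + 1 := by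
      have key : (Finset.univ : Finset P) =
          (Finset.univ.filter (fun m : P => IsMax m)).biUnion
            (fun m => Finset.univ.filter (fun j : P => j ≤ m)) := by
        apply Finset.ext
        intro j
        simp only [Finset.mem_univ, Finset.mem_biUnion, Finset.mem_filter, true_and, true_iff]
        obtain ⟨b, hb, hmax⟩ := Finite.exists_le_maximal (p := fun _ : P => True) trivial
        exact ⟨b, fun x hx => hmax.2 trivial hx, hb⟩
      have hdisj : ∀ m1 ∈ Finset.univ.filter (fun m : P => IsMax m),
          ∀ m2 ∈ Finset.univ.filter (fun m : P => IsMax m), m1 ≠ m2 →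
          Disjoint (Finset.univ.filter (fun j : P => j ≤ m1))
            (Finset.univ.filter (fun j : P => j ≤ m2)) := by
        intro m1 hm1 m2 hm2 hne
        simp only [Finset.mem_filter, Finset.mem_univ, true_and] at hm1 hm2
        rw [Finset.disjoint_left]
        intro j hj1 hj2
        simp only [Finset.mem_filter, Finset.mem_univ, true_and] at hj1 hj2
        rcases my_forest_comparable hforest j m1 m2 hj1 hj2 with h | h
        · exact hne (le_antisymm h (hm1 h))
        · exact hne (le_antisymm (hm2 h) h)
      have h2 := Finset.card_biUnion hdisj
      rw [← key, Finset.card_univ, hc] at h2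
      rw [h2]
      refine Finset.sum_congr rfl (fun m _ => ?_)
      rw [Nat.card_eq_fintype_card, Fintype.card_subtype]
    -- per-fiber computation for maximal elements
    have hterm : ∀ m : P, IsMax m →
        Nat.card {f : P ≃ Fin (n + 1) // Monotone ⇑f ∧ f.symm (Fin.last n) = m} *
          ∏ i : P, Nat.card {j : P // j ≤ i}
        = Nat.card {j : P // j ≤ m} * n.factorial := by
      intro m hm
      have hcard : Fintype.card {x : P // x ≠ m} = n := by
        have h1 := Fintype.card_subtype_compl (fun x : P => x = m)
        rw [Fintype.card_subtype_eq, hc] at h1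
        simpa using h1
      have hIH := IH {x : P // x ≠ m} hcard (hsubforest m hm)
      rw [Nat.card_congr (myFiberEquiv m hm), hprodsplit m]
      have hrw : ∏ i : {x : P // x ≠ m}, Nat.card {j : P // j ≤ i.1}
          = ∏ i : {x : P // x ≠ m}, Nat.card {j : {x : P // x ≠ m} // j ≤ i} :=
        Finset.prod_congr rfl (fun i _ => (hhook m hm i).symm)
      rw [hrw, mul_left_comm, hIH]
    -- put everything together
    rw [e1, Finset.sum_mul]
    rw [← Finset.sum_filter_of_ne (p := fun m : P => IsMax m)
      (f := fun m => Nat.card {f : P ≃ Fin (n + 1) // Monotone ⇑f ∧ f.symm (Fin.last n) = m} *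
        ∏ i : P, Nat.card {j : P // j ≤ i}) ?_]
    · rw [Finset.sum_congr rfl (fun m hmF => hterm m (by simpa using hmF))]
      rw [← Finset.sum_mul, hpart, Nat.factorial_succ]
    · intro m _ hne
      by_contra hmax
      simp only [e2 m hmax, zero_mul] at hne
      exact hne rfl

/-- Knuth's hook-length formula for forests: if `P` is a finite forest poset (every
element is covered by at most one element), then the number of linear extensions of `P`
(order-preserving bijections to the chain `0 < 1 < … < #P - 1`) equals
`(#P)! / Π_{i ∈ P} #P_{≤ i}`. -/
theorem stmt14 (P : Type*) [PartialOrder P] [Fintype P]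
    (hforest : ∀ p : P, ({q : P | p ⋖ q}).ncard ≤ 1) :
    (Nat.card {f : P ≃ Fin (Fintype.card P) // Monotone ⇑f} : ℚ) =
      (Nat.factorial (Fintype.card P) : ℚ) /
        ∏ i : P, (({j : P | j ≤ i}).ncard : ℚ) := by
  classical
  have key := my_hook_aux (Fintype.card P) P rfl hforest
  have hpos : ∀ i : P, 0 < ({j : P | j ≤ i}).ncard := fun i =>
    (Set.ncard_pos (Set.toFinite _)).mpr ⟨i, le_rfl⟩
  have hprod : (∏ i : P, (({j : P | j ≤ i}).ncard : ℚ)) ≠ 0 :=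
    Finset.prod_ne_zero_iff.mpr (fun i _ => by exact_mod_cast (hpos i).ne')
  rw [eq_div_iff hprod]
  have hconv : ∀ i : P, Nat.card {j : P // j ≤ i} = ({j : P | j ≤ i}).ncard := fun i =>
    Nat.card_coe_set_eq _
  rw [Finset.prod_congr rfl (fun i _ => hconv i)] at key
  exact_mod_cast key
end

section
/- Let P be a finite forest poset and i ⋖ j a covering relation in P. Let P/{i,j} be the quotient poset merging i and j. Then #L(P/{i,j}) / #L(P) = (#P_{≤i}/#P) · Π_{k >_P i} ( #P_{≤k} / (#P_{≤k} − 1) ), where L(·) denotes the set of linear extensions. -/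
open scoped BigOperators
open Finset
universe u


/-- The set of elements above any point is a chain. -/
def Upchain (α : Type u) [PartialOrder α] : Prop :=
  ∀ x a b : α, x ≤ a → x ≤ b → a ≤ b ∨ b ≤ a

lemma upchain_of_forest {α : Type u} [PartialOrder α] [Fintype α]
    (hf : ∀ p : α, ({q : α | p ⋖ q}).ncard ≤ 1) : Upchain α := by
  intro x
  refine wellFounded_gt.induction (C := fun x => ∀ a b : α, x ≤ a → x ≤ b → a ≤ b ∨ b ≤ a) x ?_
  intro x ih a b ha hb
  rcases ha.eq_or_lt with rfl | ha'
  · exact Or.inl hb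
  rcases hb.eq_or_lt with rfl | hb'
  · exact Or.inr ha
  obtain ⟨c, hc, hca⟩ := exists_covBy_le_of_lt ha'
  obtain ⟨c', hc', hcb⟩ := exists_covBy_le_of_lt hb'
  have hcc : c = c' := (Set.ncard_le_one_iff (Set.toFinite _)).mp (hf x) hc hc'
  exact ih c hc.lt a b hca (hcc ▸ hcb)

lemma ncard_le_eq_filter {α : Type u} [PartialOrder α] [Fintype α] (k : α)
    [DecidablePred (· ≤ k)] :
    ({q : α | q ≤ k}).ncard = (univ.filter (fun q => q ≤ k)).card := by
  rw [← Set.ncard_coe_finset]; congr 1; ext q; simp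

lemma sum_hooks {α : Type u} [PartialOrder α] [Fintype α] (hc : Upchain α)
    [DecidablePred (IsMax (α := α))] :
    ∑ m ∈ univ.filter (fun m : α => IsMax m), ({q : α | q ≤ m}).ncard
      = Fintype.card α := by
  classical
  have hex : ∀ q : α, ∃ b, q ≤ b ∧ Maximal (fun _ => True) b :=
    fun q => Finite.exists_le_maximal trivial
  choose Φ hΦle hΦmax using hex
  have hmax : ∀ q, IsMax (Φ q) := fun q c hqc => (hΦmax q).2 trivial hqc
  have huniq : ∀ q m : α, IsMax m → q ≤ m → Φ q = m := by
    intro q m hm hqm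
    rcases hc q (Φ q) m (hΦle q) hqm with h | h
    · exact le_antisymm h (hmax q h)
    · exact (le_antisymm h (hm h)).symm
  have hfib := Finset.card_eq_sum_card_fiberwise
    (s := (univ : Finset α)) (t := univ.filter (fun m : α => IsMax m)) (f := Φ)
    (fun q _ => by simp [hmax q])
  rw [Finset.card_univ] at hfib
  refine Eq.trans ?_ hfib.symm
  refine Finset.sum_congr rfl ?_
  intro m hm
  rw [ncard_le_eq_filter]
  congr 1
  ext q
  simp only [mem_filter, mem_univ, true_and]
  constructor
  · intro h
    exact huniq q m (by simpa using hm) h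
  · rintro rfl
    exact hΦle q

lemma step_down {α : Type u} [PartialOrder α] [Fintype α] {N : ℕ} {m : α} (hm : IsMax m) :
    Nat.card {f : α ≃ Fin (N + 1) // Monotone ⇑f ∧ f m = Fin.last N}
      = Nat.card {g : {p : α // p ≠ m} ≃ Fin N // Monotone ⇑g} := by
  classical
  have hne : ∀ (f : {f : α ≃ Fin (N + 1) // Monotone ⇑f ∧ f m = Fin.last N})
      (p : {p : α // p ≠ m}), (f : α ≃ Fin (N + 1)) ↑p ≠ Fin.last N := by
    rintro ⟨f, hf, hfm⟩ p h
    exact p.2 (f.injective (h.trans hfm.symm))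
  have hsymm : ∀ (f : {f : α ≃ Fin (N + 1) // Monotone ⇑f ∧ f m = Fin.last N})
      (x : Fin N), (f : α ≃ Fin (N + 1)).symm x.castSucc ≠ m := by
    rintro ⟨f, hf, hfm⟩ x h
    have : x.castSucc = Fin.last N := by
      rw [← hfm, ← h, Equiv.apply_symm_apply]
    exact (Fin.castSucc_lt_last x).ne this
  refine Nat.card_eq_of_bijective (fun f =>
    ⟨⟨fun p => ((f : α ≃ Fin (N + 1)) ↑p).castPred (hne f p),
      fun x => ⟨(f : α ≃ Fin (N + 1)).symm x.castSucc, hsymm f x⟩,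
      fun p => by simp, fun x => by simp⟩,
      fun a b hab => by
        simp only [Fin.le_def, Fin.coe_castPred]
        exact f.2.1 hab⟩) ⟨?_, ?_⟩
  · -- injective
    rintro ⟨f, hf, hfm⟩ ⟨f', hf', hfm'⟩ h
    simp only [Subtype.mk_eq_mk] at h ⊢
    ext p
    by_cases hp : p = m
    · subst hp; rw [hfm, hfm']
    · have := congrArg (fun g : {g : {p : α // p ≠ m} ≃ Fin N // Monotone ⇑g} =>
        ((g : {p : α // p ≠ m} ≃ Fin N) ⟨p, hp⟩ : Fin N).val) h
      simpa [Fin.ext_iff] using this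
  · -- surjective
    rintro ⟨g, hg⟩
    have hcs : ∀ x : Fin N, x.castSucc ≠ Fin.last N := fun x => (Fin.castSucc_lt_last x).ne
    refine ⟨⟨⟨fun p => if h : p = m then Fin.last N else (g ⟨p, h⟩).castSucc,
      fun x => if h : x = Fin.last N then m else ↑(g.symm (x.castPred h)), ?_, ?_⟩, ?_, ?_⟩, ?_⟩
    · intro p
      by_cases h : p = m
      · simp [h]
      · simp [h, dif_neg (hcs (g ⟨p, h⟩))]
    · intro x
      by_cases h : x = Fin.last N
      · simp [h]
      · simp only [dif_neg h, dif_neg (g.symm (x.castPred h)).2, Subtype.coe_eta,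
          Equiv.apply_symm_apply, Fin.castSucc_castPred]
    · -- Monotone
      intro a b hab
      simp only [Equiv.coe_fn_mk]
      by_cases hb : b = m
      · subst hb
        rw [dif_pos rfl]
        exact Fin.le_last _
      · have ha : a ≠ m := fun h => hb (le_antisymm (hm (h ▸ hab)) (h ▸ hab))
        rw [dif_neg ha, dif_neg hb]
        exact Fin.castSucc_le_castSucc_iff.mpr (hg (by exact hab))
    · simp
    · apply Subtype.ext
      ext p
      simp only [Equiv.coe_fn_mk, Fin.coe_castPred, dif_neg p.2, Fin.coe_castSucc]
lemma hooks_sub {α : Type u} [PartialOrder α] [Fintype α] {m : α} (hm : IsMax m)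
    (k : {p : α // p ≠ m}) :
    ({q : {p : α // p ≠ m} | q ≤ k}).ncard = ({q : α | q ≤ ↑k}).ncard := by
  rw [← Set.ncard_image_of_injective {q : {p : α // p ≠ m} | q ≤ k} Subtype.val_injective]
  congr 1
  ext q
  simp only [Set.mem_image, Set.mem_setOf_eq]
  constructor
  · rintro ⟨r, hr, rfl⟩
    exact hr
  · intro hq
    have hqm : q ≠ m := by
      rintro rfl
      exact k.2 (le_antisymm (hm hq) hq)
    exact ⟨⟨q, hqm⟩, hq, rfl⟩

theorem hook_formula (n : ℕ) : ∀ (α : Type u) [PartialOrder α] [Fintype α],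
    Upchain α → Fintype.card α = n →
    Nat.card {f : α ≃ Fin n // Monotone ⇑f} * ∏ k : α, ({q : α | q ≤ k}).ncard
      = n.factorial := by
  induction n using Nat.strong_induction_on with
  | _ n ih =>
  intro α _ _ hc hcard
  classical
  rcases n with _ | N
  · haveI : IsEmpty α := Fintype.card_eq_zero_iff.mp hcard
    haveI : Unique {f : α ≃ Fin 0 // Monotone ⇑f} :=
      ⟨⟨⟨Equiv.equivOfIsEmpty α (Fin 0), fun a => isEmptyElim a⟩⟩,
       fun f => Subtype.ext (Equiv.ext fun a => isEmptyElim a)⟩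
    rw [Nat.card_unique, Finset.univ_eq_empty, Finset.prod_empty]
    simp
  · -- n = N + 1
    set M := univ.filter (fun m : α => IsMax m) with hM
    have hmaxsymm : ∀ (f : {f : α ≃ Fin (N + 1) // Monotone ⇑f}),
        IsMax ((f : α ≃ Fin (N + 1)).symm (Fin.last N)) := by
      rintro ⟨f, hf⟩ b hb
      rcases hb.eq_or_lt with h | hlt
      · exact h.ge
      · have := (hf.strictMono_of_injective f.injective) hlt
        rw [Equiv.apply_symm_apply] at this
        exact absurd this (not_lt.mpr (Fin.le_last _))
    have decomp : Nat.card {f : α ≃ Fin (N + 1) // Monotone ⇑f}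
        = ∑ m ∈ M, Nat.card {f : α ≃ Fin (N + 1) // Monotone ⇑f ∧ f m = Fin.last N} := by
      rw [Nat.card_congr
        ((Equiv.sigmaFiberEquiv
          (fun f : {f : α ≃ Fin (N + 1) // Monotone ⇑f} =>
            (f : α ≃ Fin (N + 1)).symm (Fin.last N))).symm)]
      rw [Nat.card_eq_fintype_card, Fintype.card_sigma]
      have hzero : ∀ m ∈ (univ : Finset α), m ∉ M →
          Fintype.card {f : {f : α ≃ Fin (N + 1) // Monotone ⇑f} //
            (f : α ≃ Fin (N + 1)).symm (Fin.last N) = m} = 0 := by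
        intro m _ hm
        have hnm : ¬ IsMax m := by simpa [hM] using hm
        rw [Fintype.card_eq_zero_iff]
        exact ⟨fun f => hnm (f.2 ▸ hmaxsymm f.1)⟩
      rw [← Finset.sum_subset (Finset.subset_univ M) hzero]
      refine Finset.sum_congr rfl ?_
      intro m _
      rw [← Nat.card_eq_fintype_card]
      rw [Nat.card_congr (Equiv.subtypeSubtypeEquivSubtypeInter
        (fun f : α ≃ Fin (N + 1) => Monotone ⇑f)
        (fun f : α ≃ Fin (N + 1) => f.symm (Fin.last N) = m))]
      refine Nat.card_congr (Equiv.subtypeEquivRight ?_)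
      intro f
      refine and_congr_right fun _ => ?_
      rw [Equiv.symm_apply_eq, eq_comm]
    have hcard' : ∀ m : α, Fintype.card {p : α // p ≠ m} = N := by
      intro m
      have : Fintype.card {p : α // p ≠ m} = Fintype.card α - 1 := by
        simp [Fintype.card_subtype_compl]
      rw [this, hcard]
      omega
    have hsub : ∀ m ∈ M, Nat.card {f : α ≃ Fin (N + 1) // Monotone ⇑f ∧ f m = Fin.last N}
        * ∏ k ∈ univ.erase m, ({q : α | q ≤ k}).ncard = N.factorial := by
      intro m hm
      have hmmax : IsMax m := by simpa [hM] using hm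
      have hupsub : Upchain {p : α // p ≠ m} := by
        intro x a b hxa hxb
        have := hc ↑x ↑a ↑b hxa hxb
        rcases this with h | h
        · exact Or.inl h
        · exact Or.inr h
      have hprod : ∏ k ∈ univ.erase m, ({q : α | q ≤ k}).ncard
          = ∏ k : {p : α // p ≠ m}, ({q : {p : α // p ≠ m} | q ≤ k}).ncard := by
        rw [Finset.prod_subtype (p := fun p : α => p ≠ m) (univ.erase m) (by simp)
          (fun k => ({q : α | q ≤ k}).ncard)]
        exact Finset.prod_congr rfl fun k _ => (hooks_sub hmmax k).symm
      rw [step_down hmmax, hprod]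
      exact ih N (Nat.lt_succ_self N) {p : α // p ≠ m} hupsub (hcard' m)
    calc Nat.card {f : α ≃ Fin (N + 1) // Monotone ⇑f} * ∏ k : α, ({q : α | q ≤ k}).ncard
        = ∑ m ∈ M, Nat.card {f : α ≃ Fin (N + 1) // Monotone ⇑f ∧ f m = Fin.last N}
            * ∏ k : α, ({q : α | q ≤ k}).ncard := by rw [decomp, Finset.sum_mul]
      _ = ∑ m ∈ M, ({q : α | q ≤ m}).ncard * N.factorial := by
          refine Finset.sum_congr rfl ?_
          intro m hm
          rw [← Finset.mul_prod_erase univ _ (mem_univ m)]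
          rw [show Nat.card {f : α ≃ Fin (N + 1) // Monotone ⇑f ∧ f m = Fin.last N}
              * (({q : α | q ≤ m}).ncard * ∏ k ∈ univ.erase m, ({q : α | q ≤ k}).ncard)
              = ({q : α | q ≤ m}).ncard
                * (Nat.card {f : α ≃ Fin (N + 1) // Monotone ⇑f ∧ f m = Fin.last N}
                  * ∏ k ∈ univ.erase m, ({q : α | q ≤ k}).ncard) by ring]
          rw [hsub m hm]
      _ = (∑ m ∈ M, ({q : α | q ≤ m}).ncard) * N.factorial := by rw [Finset.sum_mul]
      _ = (N + 1) * N.factorial := by rw [sum_hooks hc, hcard]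
      _ = (N + 1).factorial := (Nat.factorial_succ N).symm
section Q
variable {P : Type u} [PartialOrder P] [Fintype P] {i j : P}

lemma between (hij : i ⋖ j) {b : P} (h1 : i ≤ b) (h2 : b < j) : b = i := by
  rcases h1.eq_or_lt with h | h
  · exact h.symm
  · exact absurd h2 (hij.2 h)

lemma above (hij : i ⋖ j) (hchain : Upchain P) {k : P} (hik : i < k) (hkj : k ≠ j) :
    j < k := by
  rcases hchain i k j hik.le hij.lt.le with h | h
  · rcases h.eq_or_lt with h' | h'
    · exact absurd h' hkj
    · exact absurd h' (hij.2 hik)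
  · exact h.lt_of_ne (Ne.symm hkj)

def QR (i j : P) (a b : {p : P // p ≠ j}) : Prop :=
  (a : P) ≤ (b : P) ∨ ((b : P) = i ∧ (a : P) ≤ j) ∨ ((a : P) = i ∧ j ≤ (b : P))

def QOrder (i j : P) (hij : i ⋖ j) (hchain : Upchain P) :
    PartialOrder {p : P // p ≠ j} where
  le := QR i j
  lt a b := QR i j a b ∧ ¬ QR i j b a
  lt_iff_le_not_ge _ _ := Iff.rfl
  le_refl a := Or.inl le_rfl
  le_trans := by
    rintro a b c (hab | ⟨hbi, haj⟩ | ⟨hai, hjb⟩) (hbc | ⟨hci, hbj⟩ | ⟨hbi', hjc⟩)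
    · exact Or.inl (hab.trans hbc)
    · exact Or.inr (Or.inl ⟨hci, hab.trans hbj⟩)
    · exact Or.inl (((hbi' ▸ hab).trans hij.le).trans hjc)
    · by_cases hc : (c : P) = i
      · exact Or.inr (Or.inl ⟨hc, haj⟩)
      · have hic : i < (c : P) := (hbi ▸ hbc).lt_of_ne (Ne.symm hc)
        exact Or.inl (haj.trans (above hij hchain hic c.2).le)
    · exact Or.inr (Or.inl ⟨hci, haj⟩)
    · exact Or.inl (haj.trans hjc)
    · exact Or.inr (Or.inr ⟨hai, hjb.trans hbc⟩)
    · exact absurd (le_antisymm hbj hjb) b.2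
    · exact absurd (hjb.trans_eq hbi') hij.lt.not_ge
  le_antisymm := by
    rintro a b (hab | ⟨hbi, haj⟩ | ⟨hai, hjb⟩) (hba | ⟨hai', hbj⟩ | ⟨hbi', hja⟩)
    · exact Subtype.ext (le_antisymm hab hba)
    · exact Subtype.ext (hai'.trans (between hij (hai' ▸ hab) (hbj.lt_of_ne b.2)).symm)
    · exact absurd (hja.trans (hab.trans_eq hbi')) hij.lt.not_ge
    · exact Subtype.ext ((between hij (hbi ▸ hba) (haj.lt_of_ne a.2)).trans hbi.symm)
    · exact Subtype.ext (hai'.trans hbi.symm)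
    · exact absurd (le_antisymm haj hja) a.2
    · exact absurd ((hjb.trans hba).trans_eq hai) hij.lt.not_ge
    · exact absurd (le_antisymm hbj hjb) b.2
    · exact absurd (hja.trans_eq hai) hij.lt.not_ge

lemma Qupchain (hij : i ⋖ j) (hchain : Upchain P) :
    ∀ x a b : {p : P // p ≠ j}, QR i j x a → QR i j x b →
      QR i j a b ∨ QR i j b a := by
  have hP : ∀ a b : {p : P // p ≠ j}, ((a : P) ≤ b ∨ (b : P) ≤ a) →
      QR i j a b ∨ QR i j b a := fun a b h => h.imp Or.inl Or.inl
  rintro x a b (hxa | ⟨hai, hxj⟩ | ⟨hxi, hja⟩) (hxb | ⟨hbi, hxj'⟩ | ⟨hxi', hjb⟩)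
  · exact hP a b (hchain x a b hxa hxb)
  · rcases hchain x a j hxa hxj' with h | h
    · exact Or.inl (Or.inr (Or.inl ⟨hbi, h⟩))
    · exact Or.inr (Or.inl (hbi.le.trans (hij.le.trans h)))
  · exact hP a b (hchain i a b (hxi' ▸ hxa) (hij.le.trans hjb))
  · rcases hchain x b j hxb hxj with h | h
    · exact Or.inr (Or.inr (Or.inl ⟨hai, h⟩))
    · exact Or.inl (Or.inl (hai ▸ (hij.le.trans h)))
  · exact Or.inl (Or.inr (Or.inl ⟨hbi, hai.le.trans hij.le⟩))
  · exact Or.inl (Or.inr (Or.inr ⟨hai, hjb⟩))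
  · exact hP a b (hchain i a b (hij.le.trans hja) (hxi ▸ hxb))
  · exact Or.inr (Or.inr (Or.inr ⟨hbi, hja⟩))
  · exact hP a b (hchain j a b hja hjb)

lemma Qhook_i (hij : i ⋖ j) (k : {p : P // p ≠ j}) (hk : (k : P) = i) :
    ({q : {p : P // p ≠ j} | QR i j q k}).ncard = ({q : P | q ≤ j}).ncard - 1 := by
  rw [← Set.ncard_image_of_injective {q : {p : P // p ≠ j} | QR i j q k}
    Subtype.val_injective]
  have himg : Subtype.val '' {q : {p : P // p ≠ j} | QR i j q k}
      = {q : P | q ≤ j} \ {j} := by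
    ext q
    simp only [Set.mem_image, Set.mem_diff, Set.mem_setOf_eq, Set.mem_singleton_iff]
    constructor
    · rintro ⟨r, hr, rfl⟩
      refine ⟨?_, r.2⟩
      rcases hr with h | ⟨_, h⟩ | ⟨hri, hjk⟩
      · exact (h.trans_eq hk).trans hij.le
      · exact h
      · exact absurd (hjk.trans_eq hk) hij.lt.not_ge
    · rintro ⟨hq, hqj⟩
      exact ⟨⟨q, hqj⟩, Or.inr (Or.inl ⟨hk, hq⟩), rfl⟩
  rw [himg, Set.ncard_diff_singleton_of_mem (by exact le_rfl)]

lemma Qimg (hij : i ⋖ j) (k : {p : P // p ≠ j}) (hk : (k : P) ≠ i) :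
    Subtype.val '' {q : {p : P // p ≠ j} | QR i j q k}
      = {q : P | q ≤ (k : P)} \ {j} := by
  ext q
  simp only [Set.mem_image, Set.mem_diff, Set.mem_setOf_eq, Set.mem_singleton_iff]
  constructor
  · rintro ⟨r, hr, rfl⟩
    refine ⟨?_, r.2⟩
    rcases hr with h | ⟨hki, _⟩ | ⟨hri, hjk⟩
    · exact h
    · exact absurd hki hk
    · exact hri.le.trans (hij.le.trans hjk)
  · rintro ⟨hq, hqj⟩
    exact ⟨⟨q, hqj⟩, Or.inl hq, rfl⟩

lemma Qhook_gt (hij : i ⋖ j) (k : {p : P // p ≠ j}) (hk : (k : P) ≠ i)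
    (hjk : j < (k : P)) :
    ({q : {p : P // p ≠ j} | QR i j q k}).ncard = ({q : P | q ≤ (k : P)}).ncard - 1 := by
  rw [← Set.ncard_image_of_injective {q : {p : P // p ≠ j} | QR i j q k}
    Subtype.val_injective, Qimg hij k hk,
    Set.ncard_diff_singleton_of_mem (by exact hjk.le)]

lemma Qhook_rest (k : {p : P // p ≠ j}) (hij : i ⋖ j) (hk : (k : P) ≠ i)
    (hjk : ¬ j < (k : P)) :
    ({q : {p : P // p ≠ j} | QR i j q k}).ncard = ({q : P | q ≤ (k : P)}).ncard := by
  rw [← Set.ncard_image_of_injective {q : {p : P // p ≠ j} | QR i j q k}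
    Subtype.val_injective, Qimg hij k hk, Set.diff_singleton_eq_self]
  intro hmem
  have hjle : j ≤ (k : P) := hmem
  exact hjk (hjle.lt_of_ne (fun h => k.2 h.symm))

end Q

/-- For a finite forest poset `P` with a covering relation `i ⋖ j`, the ratio of the
number of linear extensions of the quotient poset `P/{i,j}` (obtained by merging `i`
and `j`; its linear extensions are modelled as bijections from `P \ {j}` to a chain
respecting the generating relations of the quotient order) to the number of linear
extensions of `P` equals `(#P_{≤i}/#P) · Π_{k >_P i} (#P_{≤k}/(#P_{≤k} - 1))`. -/
theorem stmt15 (P : Type*) [PartialOrder P] [Fintype P]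
    (hforest : ∀ p : P, ({q : P | p ⋖ q}).ncard ≤ 1)
    (i j : P) (hij : i ⋖ j) :
    (Nat.card {f : {p : P // p ≠ j} ≃ Fin (Fintype.card P - 1) //
        ∀ a b : {p : P // p ≠ j},
          ((a : P) ≤ (b : P) ∨ ((b : P) = i ∧ (a : P) ≤ j) ∨
            ((a : P) = i ∧ j ≤ (b : P))) → f a ≤ f b} : ℚ) /
      (Nat.card {f : P ≃ Fin (Fintype.card P) // Monotone ⇑f} : ℚ) =
    (({q : P | q ≤ i}).ncard : ℚ) / (Fintype.card P : ℚ) *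
      ∏ᶠ k ∈ {k : P | i < k},
        ((({q : P | q ≤ k}).ncard : ℚ) / ((({q : P | q ≤ k}).ncard : ℚ) - 1)) := by
  classical
  have hchain : Upchain P := upchain_of_forest hforest
  have hiltj : i < j := hij.lt
  have hne_ij : i ≠ j := hiltj.ne
  haveI : Nonempty P := ⟨i⟩
  set n := Fintype.card P with hn
  have hnpos : 0 < n := Fintype.card_pos
  have hone : ∀ k : P, 1 ≤ ({q : P | q ≤ k}).ncard := fun k =>
    (Set.ncard_pos (Set.toFinite _)).mpr ⟨k, le_rfl⟩
  have htwo : ∀ k : P, i < k → 2 ≤ ({q : P | q ≤ k}).ncard := fun k hk =>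
    (Set.one_lt_ncard_iff (Set.toFinite _)).mpr ⟨i, k, hk.le, le_rfl, hk.ne⟩
  have hookP := hook_formula n P hchain hn.symm
  -- quotient side
  have hcardQ : Fintype.card {p : P // p ≠ j} = n - 1 := by
    have h1 : Fintype.card {p : P // p ≠ j} = Fintype.card P - 1 := by
      simp [Fintype.card_subtype_compl]
    rw [h1, ← hn]
  have hupQ : @Upchain {p : P // p ≠ j} (QOrder i j hij hchain) :=
    Qupchain hij hchain
  have hookQ0 := @hook_formula (n - 1) {p : P // p ≠ j} (QOrder i j hij hchain) _
    hupQ hcardQ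
  have hookQ : Nat.card {f : {p : P // p ≠ j} ≃ Fin (n - 1) //
      ∀ a b : {p : P // p ≠ j},
        ((a : P) ≤ (b : P) ∨ ((b : P) = i ∧ (a : P) ≤ j) ∨
          ((a : P) = i ∧ j ≤ (b : P))) → f a ≤ f b}
      * ∏ k : {p : P // p ≠ j}, ({q : {p : P // p ≠ j} | QR i j q k}).ncard
      = (n - 1).factorial := hookQ0
  -- rewrite quotient hooks
  have hGQ : ∀ k : {p : P // p ≠ j}, ({q : {p : P // p ≠ j} | QR i j q k}).ncard
      = (if (k : P) = i then ({q : P | q ≤ j}).ncard - 1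
         else if j < (k : P) then ({q : P | q ≤ (k : P)}).ncard - 1
         else ({q : P | q ≤ (k : P)}).ncard) := by
    intro k
    by_cases hk : (k : P) = i
    · rw [Qhook_i hij k hk, if_pos hk]
    · rw [if_neg hk]
      by_cases hjk : j < (k : P)
      · rw [Qhook_gt hij k hk hjk, if_pos hjk]
      · rw [Qhook_rest k hij hk hjk, if_neg hjk]
  have hprodQ : ∏ k : {p : P // p ≠ j}, ({q : {p : P // p ≠ j} | QR i j q k}).ncard
      = ∏ k ∈ univ.erase j, (if k = i then ({q : P | q ≤ j}).ncard - 1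
         else if j < k then ({q : P | q ≤ k}).ncard - 1
         else ({q : P | q ≤ k}).ncard) := by
    rw [Finset.prod_subtype (p := fun p : P => p ≠ j) (univ.erase j) (by simp)
      (fun k => if k = i then ({q : P | q ≤ j}).ncard - 1
         else if j < k then ({q : P | q ≤ k}).ncard - 1
         else ({q : P | q ≤ k}).ncard)]
    exact Finset.prod_congr rfl (fun k _ => hGQ k)
  rw [hprodQ] at hookQ
  -- cast to ℚ
  have hookP' : (Nat.card {f : P ≃ Fin n // Monotone ⇑f} : ℚ)
      * ∏ k : P, (({q : P | q ≤ k}).ncard : ℚ) = (n.factorial : ℚ) := by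
    exact_mod_cast hookP
  have hookQ' : (Nat.card {f : {p : P // p ≠ j} ≃ Fin (n - 1) //
      ∀ a b : {p : P // p ≠ j},
        ((a : P) ≤ (b : P) ∨ ((b : P) = i ∧ (a : P) ≤ j) ∨
          ((a : P) = i ∧ j ≤ (b : P))) → f a ≤ f b} : ℚ)
      * ∏ k ∈ univ.erase j, (if k = i then (({q : P | q ≤ j}).ncard : ℚ) - 1
         else if j < k then (({q : P | q ≤ k}).ncard : ℚ) - 1
         else (({q : P | q ≤ k}).ncard : ℚ)) = ((n - 1).factorial : ℚ) := by
    have := congrArg (fun m : ℕ => (m : ℚ)) hookQ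
    push_cast at this
    rw [← this]
    congr 1
    refine Finset.prod_congr rfl ?_
    intro k hk
    by_cases hki : k = i
    · rw [if_pos hki, if_pos hki, Nat.cast_sub (hone j)]
      push_cast
      ring
    · rw [if_neg hki, if_neg hki]
      by_cases hjk : j < k
      · rw [if_pos hjk, if_pos hjk, Nat.cast_sub (hone k)]
        push_cast
        ring
      · rw [if_neg hjk, if_neg hjk]
  -- Finset decompositions
  have hiMem : i ∈ univ.erase j := by simp [hne_ij]
  have hT'filter : ((univ.erase j).erase i).filter (fun k => j < k)
      = univ.filter (fun k : P => j < k) := by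
    ext k
    simp only [mem_filter, mem_erase, mem_univ, true_and, and_true]
    constructor
    · tauto
    · intro h
      refine ⟨⟨?_, ?_⟩, h⟩
      · rintro rfl
        exact absurd h (lt_asymm hiltj)
      · rintro rfl
        exact lt_irrefl _ h
  have hsplitP : ∏ k : P, (({q : P | q ≤ k}).ncard : ℚ)
      = (({q : P | q ≤ j}).ncard : ℚ) * ((({q : P | q ≤ i}).ncard : ℚ)
        * ((∏ k ∈ univ.filter (fun k : P => j < k), (({q : P | q ≤ k}).ncard : ℚ))
          * (∏ k ∈ ((univ.erase j).erase i).filter (fun k => ¬ j < k),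
              (({q : P | q ≤ k}).ncard : ℚ)))) := by
    rw [← Finset.mul_prod_erase univ _ (mem_univ j)]
    congr 1
    rw [← Finset.mul_prod_erase (univ.erase j) _ hiMem]
    congr 1
    rw [← Finset.prod_filter_mul_prod_filter_not ((univ.erase j).erase i)
      (fun k => j < k), hT'filter]
  have hsplitQ : (∏ k ∈ univ.erase j, (if k = i then (({q : P | q ≤ j}).ncard : ℚ) - 1
         else if j < k then (({q : P | q ≤ k}).ncard : ℚ) - 1
         else (({q : P | q ≤ k}).ncard : ℚ)))
      = ((({q : P | q ≤ j}).ncard : ℚ) - 1)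
        * ((∏ k ∈ univ.filter (fun k : P => j < k), ((({q : P | q ≤ k}).ncard : ℚ) - 1))
          * (∏ k ∈ ((univ.erase j).erase i).filter (fun k => ¬ j < k),
              (({q : P | q ≤ k}).ncard : ℚ))) := by
    rw [← Finset.mul_prod_erase (univ.erase j) _ hiMem, if_pos rfl]
    congr 1
    rw [← Finset.prod_filter_mul_prod_filter_not ((univ.erase j).erase i)
      (fun k => j < k)]
    congr 1
    · refine Eq.trans (Finset.prod_congr rfl ?_) (by rw [hT'filter])
      intro k hk
      rw [mem_filter] at hk
      have hjk : j < k := hk.2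
      have hki : k ≠ i := (mem_erase.mp hk.1).1
      rw [if_neg hki, if_pos hjk]
    · refine Finset.prod_congr rfl ?_
      intro k hk
      rw [mem_filter] at hk
      have hki : k ≠ i := (mem_erase.mp hk.1).1
      rw [if_neg hki, if_neg hk.2]
  have hFiFj : univ.filter (fun k : P => i < k)
      = insert j (univ.filter (fun k : P => j < k)) := by
    ext k
    simp only [mem_insert, mem_filter, mem_univ, true_and]
    constructor
    · intro hk
      by_cases hkj : k = j
      · exact Or.inl hkj
      · exact Or.inr (above hij hchain hk hkj)
    · rintro (rfl | hk)
      · exact hiltj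
      · exact hiltj.trans hk
  have hjFj : j ∉ univ.filter (fun k : P => j < k) := by simp
  have hfin : ∏ᶠ k ∈ {k : P | i < k},
      ((({q : P | q ≤ k}).ncard : ℚ) / ((({q : P | q ≤ k}).ncard : ℚ) - 1))
      = ((({q : P | q ≤ j}).ncard : ℚ) / ((({q : P | q ≤ j}).ncard : ℚ) - 1))
        * ((∏ k ∈ univ.filter (fun k : P => j < k), (({q : P | q ≤ k}).ncard : ℚ))
          / (∏ k ∈ univ.filter (fun k : P => j < k),
              ((({q : P | q ≤ k}).ncard : ℚ) - 1))) := by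
    have hset : {k : P | i < k} = ↑(univ.filter (fun k : P => i < k)) := by
      ext k; simp
    rw [hset, finprod_mem_coe_finset, hFiFj, Finset.prod_insert hjFj,
      Finset.prod_div_distrib]
  rw [hfin]
  rw [hsplitP] at hookP'
  rw [hsplitQ] at hookQ'
  -- nonzero facts
  have hq0 : ∀ k : P, (({q : P | q ≤ k}).ncard : ℚ) ≠ 0 := fun k =>
    Nat.cast_ne_zero.mpr (by have := hone k; omega)
  have hq1 : ∀ k : P, i < k → (({q : P | q ≤ k}).ncard : ℚ) - 1 ≠ 0 := by
    intro k hk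
    have h2 : (2 : ℚ) ≤ (({q : P | q ≤ k}).ncard : ℚ) := by exact_mod_cast htwo k hk
    intro h
    linarith
  have hE0 : (∏ k ∈ univ.filter (fun k : P => j < k),
      (({q : P | q ≤ k}).ncard : ℚ)) ≠ 0 :=
    Finset.prod_ne_zero_iff.mpr (fun k _ => hq0 k)
  have hD0 : (∏ k ∈ univ.filter (fun k : P => j < k),
      ((({q : P | q ≤ k}).ncard : ℚ) - 1)) ≠ 0 := by
    refine Finset.prod_ne_zero_iff.mpr ?_
    intro k hk
    rw [mem_filter] at hk
    exact hq1 k (hiltj.trans hk.2)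
  have hW0 : (∏ k ∈ ((univ.erase j).erase i).filter (fun k => ¬ j < k),
      (({q : P | q ≤ k}).ncard : ℚ)) ≠ 0 :=
    Finset.prod_ne_zero_iff.mpr (fun k _ => hq0 k)
  have hjm1 : (({q : P | q ≤ j}).ncard : ℚ) - 1 ≠ 0 := hq1 j hiltj
  have hn0 : (n : ℚ) ≠ 0 := Nat.cast_ne_zero.mpr hnpos.ne'
  have hfacne : (n.factorial : ℚ) ≠ 0 := Nat.cast_ne_zero.mpr n.factorial_ne_zero
  have hA0 : (Nat.card {f : P ≃ Fin n // Monotone ⇑f} : ℚ) ≠ 0 := by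
    intro h
    rw [h, zero_mul] at hookP'
    exact hfacne hookP'.symm
  have hfac : (n : ℚ) * ((n - 1).factorial : ℚ) = (n.factorial : ℚ) := by
    exact_mod_cast Nat.mul_factorial_pred hnpos.ne'
  have hAval : (Nat.card {f : P ≃ Fin n // Monotone ⇑f} : ℚ)
      = (n.factorial : ℚ) / ((({q : P | q ≤ j}).ncard : ℚ)
        * ((({q : P | q ≤ i}).ncard : ℚ)
        * ((∏ k ∈ univ.filter (fun k : P => j < k), (({q : P | q ≤ k}).ncard : ℚ))
          * (∏ k ∈ ((univ.erase j).erase i).filter (fun k => ¬ j < k),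
              (({q : P | q ≤ k}).ncard : ℚ))))) := by
    rw [eq_div_iff (by exact mul_ne_zero (hq0 j) (mul_ne_zero (hq0 i)
      (mul_ne_zero hE0 hW0)))]
    exact hookP'
  have hBval : (Nat.card {f : {p : P // p ≠ j} ≃ Fin (n - 1) //
      ∀ a b : {p : P // p ≠ j},
        ((a : P) ≤ (b : P) ∨ ((b : P) = i ∧ (a : P) ≤ j) ∨
          ((a : P) = i ∧ j ≤ (b : P))) → f a ≤ f b} : ℚ)
      = ((n - 1).factorial : ℚ) / (((({q : P | q ≤ j}).ncard : ℚ) - 1)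
        * ((∏ k ∈ univ.filter (fun k : P => j < k), ((({q : P | q ≤ k}).ncard : ℚ) - 1))
          * (∏ k ∈ ((univ.erase j).erase i).filter (fun k => ¬ j < k),
              (({q : P | q ≤ k}).ncard : ℚ)))) := by
    rw [eq_div_iff (by exact mul_ne_zero hjm1 (mul_ne_zero hD0 hW0))]
    exact hookQ'
  rw [hBval, hAval, ← hfac]
  field_simp
end

section
/- For a Coxeter system (W,S) and w ∈ W, there is a bijection between the set of triples ((s_1,…,s_{ℓ(w)}), i, s) with (s_1,…,s_{ℓ(w)}) a reduced word for w, 0 ≤ i ≤ ℓ(w), and s ∈ Des(s_1 s_2 ⋯ s_i), and the set of nearly reduced words for w (0-Hecke words for w of length ℓ(w)+1); the bijection inserts s after position i. -/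
open List

namespace Stmt17Aux

variable {B W : Type*} [Group W] {M : CoxeterMatrix B} (cs : CoxeterSystem M W)

local notation "ℓ" => cs.length
local notation "π" => cs.wordProd

/-- The 0-Hecke step. -/
noncomputable abbrev hstep : W → B → W :=
  fun v s => if cs.length v < cs.length (v * cs.simple s) then v * cs.simple s else v

lemma length_foldl_le (l : List B) (v : W) :
    ℓ (l.foldl (hstep cs) v) ≤ ℓ v + l.length := by
  induction l generalizing v with
  | nil => simp
  | cons a l ih =>
    simp only [List.foldl_cons, List.length_cons]
    refine le_trans (ih _) ?_
    have h1 : ℓ (hstep cs v a) ≤ ℓ v + 1 := by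
      unfold hstep
      split
      · rcases cs.length_mul_simple v a with h | h <;> omega
      · omega
    omega

lemma foldl_eq_of_length_eq (l : List B) (v : W)
    (h : ℓ (l.foldl (hstep cs) v) = ℓ v + l.length) :
    l.foldl (hstep cs) v = v * π l := by
  induction l generalizing v with
  | nil => simp
  | cons a l ih =>
    simp only [List.foldl_cons, List.length_cons] at h ⊢
    by_cases hc : ℓ v < ℓ (v * cs.simple a)
    · have hs : hstep cs v a = v * cs.simple a := if_pos hc
      rw [hs] at h ⊢
      have hle := cs.length_mul_le v (cs.simple a)
      rw [cs.length_simple] at hle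
      have hfl := length_foldl_le cs l (v * cs.simple a)
      have hlen : ℓ (v * cs.simple a) = ℓ v + 1 := by omega
      rw [ih _ (by omega)]
      rw [cs.wordProd_cons, mul_assoc]
    · exfalso
      have hs : hstep cs v a = v := if_neg hc
      rw [hs] at h
      have := length_foldl_le cs l v
      omega

lemma foldl_append_reduced (q p : List B) (h : cs.IsReduced (p ++ q)) :
    q.foldl (hstep cs) (π p) = π (p ++ q) := by
  induction q generalizing p with
  | nil => simp
  | cons a q ih =>
    have hred : cs.IsReduced ((p ++ [a]) ++ q) := by simpa
    have hp : ℓ (π p) = p.length := by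
      have := h.take p.length
      rwa [List.take_left, CoxeterSystem.IsReduced] at this
    have hpa : ℓ (π (p ++ [a])) = p.length + 1 := by
      have := h.take (p.length + 1)
      rw [CoxeterSystem.IsReduced] at this
      rw [show (p ++ a :: q).take (p.length + 1) = p ++ [a] by
        rw [show p ++ a :: q = (p ++ [a]) ++ q by simp,
          show p.length + 1 = (p ++ [a]).length by simp, List.take_left]] at this
      rw [this]
      simp
    have hmul : π (p ++ [a]) = π p * cs.simple a := by
      rw [cs.wordProd_append]; simp
    have hc : ℓ (π p) < ℓ (π p * cs.simple a) := by
      rw [← hmul, hp, hpa]; omega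
    simp only [List.foldl_cons]
    have hs : hstep cs (π p) a = π p * cs.simple a := if_pos hc
    rw [hs, ← hmul, ih (p ++ [a]) hred]
    simp

lemma foldl_reduced (l : List B) (h : cs.IsReduced l) :
    l.foldl (hstep cs) 1 = π l := by
  have := foldl_append_reduced cs l [] (by simpa)
  simpa using this

lemma length_wordProd_take {r : List B} (h : cs.IsReduced r) {k : ℕ} (hk : k ≤ r.length) :
    ℓ (π (r.take k)) = k := by
  have := h.take k
  rw [CoxeterSystem.IsReduced] at this
  rw [this, List.length_take]
  omega


lemma surj_aux (w : W) : ∀ (l p : List B), cs.IsReduced p →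
    p.length + l.length = cs.length w + 1 →
    l.foldl (hstep cs) (π p) = w →
    ∃ r i s, π r = w ∧ r.length = ℓ w ∧ i ≤ ℓ w ∧
      ℓ (π (r.take i) * cs.simple s) < ℓ (π (r.take i)) ∧
      p ++ l = r.take i ++ s :: r.drop i := by
  intro l
  induction l with
  | nil =>
    intro p hp hlen hf
    exfalso
    simp only [List.length_nil, List.foldl_nil] at hf hlen
    rw [CoxeterSystem.IsReduced, hf] at hp
    omega
  | cons a l ih =>
    intro p hp hlen hf
    simp only [List.foldl_cons] at hf
    by_cases hc : ℓ (π p) < ℓ (π p * cs.simple a)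
    · have hs : hstep cs (π p) a = π p * cs.simple a := if_pos hc
      rw [hs] at hf
      have hpa : π (p ++ [a]) = π p * cs.simple a := by
        rw [cs.wordProd_append]; simp
      have hred : cs.IsReduced (p ++ [a]) := by
        rw [CoxeterSystem.IsReduced, hpa]
        have hle := cs.length_mul_le (π p) (cs.simple a)
        rw [cs.length_simple] at hle
        rw [CoxeterSystem.IsReduced] at hp
        simp only [List.length_append, List.length_cons, List.length_nil]
        omega
      obtain ⟨r, i, s, h1, h2, h3, h4, h5⟩ :=
        ih (p ++ [a]) hred (by simp at hlen ⊢; omega) (by rw [hpa]; exact hf)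
      exact ⟨r, i, s, h1, h2, h3, h4, by rw [← h5]; simp⟩
    · have hs : hstep cs (π p) a = π p := if_neg hc
      rw [hs] at hf
      have hle := length_foldl_le cs l (π p)
      rw [hf] at hle
      rw [CoxeterSystem.IsReduced] at hp
      simp only [List.length_cons] at hlen
      have heq : ℓ (l.foldl (hstep cs) (π p)) = ℓ (π p) + l.length := by
        rw [hf]; omega
      have hw : w = π p * π l := by
        rw [← hf, foldl_eq_of_length_eq cs l _ heq]
      have hwl : ℓ w = p.length + l.length := by omega
      have hprod : π (p ++ l) = w := by rw [cs.wordProd_append, ← hw]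
      refine ⟨p ++ l, p.length, a, hprod, by simp [hwl], by omega, ?_, ?_⟩
      · rw [List.take_left]
        have := cs.length_mul_simple_ne (π p) a
        omega
      · rw [List.take_left, List.drop_left]

lemma inj_aux {w : W} {r r' : List B} {i i' : ℕ} {s s' : B}
    (hred : cs.IsReduced r) (h2 : r.length = ℓ w) (h3 : i ≤ ℓ w)
    (h4 : ℓ (π (r.take i) * cs.simple s) < ℓ (π (r.take i)))
    (hred' : cs.IsReduced r') (h2' : r'.length = ℓ w) (h3' : i' ≤ ℓ w)
    (heq : r.take i ++ s :: r.drop i = r'.take i' ++ s' :: r'.drop i') :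
    ¬ i < i' := by
  intro hlt
  have hlt1 : (r.take i).length = i := by rw [List.length_take]; omega
  have hlt2 : (r'.take i').length = i' := by rw [List.length_take]; omega
  have htake1 : r.take i ++ [s] = r'.take (i + 1) := by
    have h := congrArg (List.take (i + 1)) heq
    rwa [List.take_append, List.take_of_length_le (by omega),
      hlt1, Nat.add_sub_cancel_left, List.take_succ_cons, List.take_zero,
      List.take_append_of_le_length (by omega), List.take_take,
      min_eq_left (by omega)] at h
  have hp1 : π (r'.take (i + 1)) = π (r.take i) * cs.simple s := by
    rw [← htake1, cs.wordProd_append, cs.wordProd_singleton]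
  have hl1 : ℓ (π (r'.take (i + 1))) = i + 1 :=
    length_wordProd_take cs hred' (by omega)
  have hl2 : ℓ (π (r.take i)) = i :=
    length_wordProd_take cs hred (by omega)
  rw [hp1] at hl1
  omega

end Stmt17Aux

open Stmt17Aux

/-- For a Coxeter system `(W,S)` and `w ∈ W`, the map `((s_1,…,s_{ℓ(w)}), i, s) ↦
(s_1,…,s_i, s, s_{i+1},…,s_{ℓ(w)})` is a bijection from the set of triples where
`(s_1,…,s_{ℓ(w)})` is a reduced word for `w`, `0 ≤ i ≤ ℓ(w)`, and `s` is a right descent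
of `s_1⋯s_i` (i.e. `ℓ(s_1⋯s_i·s) < ℓ(s_1⋯s_i)`), onto the set of nearly reduced words
for `w`: the 0-Hecke words for `w` of length `ℓ(w)+1`, i.e. words whose 0-Hecke
(Demazure) product, computed by folding `v ↦ v·s` if `ℓ(vs) > ℓ(v)` else `v ↦ v`, is `w`. -/
theorem stmt17 {B W : Type*} [Group W] {M : CoxeterMatrix B}
    (cs : CoxeterSystem M W) (w : W) :
    Set.BijOn
      (fun x : List B × ℕ × B => x.1.take x.2.1 ++ x.2.2 :: x.1.drop x.2.1)
      {x : List B × ℕ × B |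
        cs.wordProd x.1 = w ∧ x.1.length = cs.length w ∧ x.2.1 ≤ cs.length w ∧
          cs.length (cs.wordProd (x.1.take x.2.1) * cs.simple x.2.2) <
            cs.length (cs.wordProd (x.1.take x.2.1))}
      {l : List B | l.length = cs.length w + 1 ∧
        l.foldl (fun v s =>
          if cs.length v < cs.length (v * cs.simple s) then v * cs.simple s else v) 1
          = w} := by
  constructor
  · -- MapsTo
    rintro ⟨r, i, s⟩ ⟨h1, h2, h3, h4⟩
    dsimp only at h1 h2 h3 h4
    have hred : cs.IsReduced r := by rw [CoxeterSystem.IsReduced, h1, h2]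
    constructor
    · simp only [List.length_append, List.length_cons, List.length_take,
        List.length_drop]
      omega
    · show (r.take i ++ s :: r.drop i).foldl (hstep cs) 1 = w
      rw [List.foldl_append, List.foldl_cons,
        foldl_reduced cs _ (hred.take i),
        show hstep cs (cs.wordProd (r.take i)) s = cs.wordProd (r.take i) from if_neg (by omega)]
      have := foldl_append_reduced cs (r.drop i) (r.take i)
        (by rw [List.take_append_drop]; exact hred)
      rw [this, List.take_append_drop, h1]
  constructor
  · -- InjOn
    rintro ⟨r, i, s⟩ ⟨h1, h2, h3, h4⟩ ⟨r', i', s'⟩ ⟨h1', h2', h3', h4'⟩ heq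
    dsimp only at h1 h2 h3 h4 h1' h2' h3' h4' heq
    have hred : cs.IsReduced r := by rw [CoxeterSystem.IsReduced, h1, h2]
    have hred' : cs.IsReduced r' := by rw [CoxeterSystem.IsReduced, h1', h2']
    have hii' : i = i' := by
      have hne1 := inj_aux cs hred h2 h3 h4 hred' h2' h3' heq
      have hne2 := inj_aux cs hred' h2' h3' h4' hred h2 h3 heq.symm
      omega
    subst hii'
    have hlt1 : (r.take i).length = i := by rw [List.length_take]; omega
    have hlt2 : (r'.take i).length = i := by rw [List.length_take]; omega
    obtain ⟨hta, htb⟩ := List.append_inj heq (by omega)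
    obtain ⟨hs, hd⟩ := List.cons.inj htb
    have : r = r' := by
      rw [← List.take_append_drop i r, ← List.take_append_drop i r', hta, hd]
    simp [this, hs]
  · -- SurjOn
    rintro l ⟨hlen, hfold⟩
    obtain ⟨r, i, s, h1, h2, h3, h4, h5⟩ := surj_aux cs w l [] (by
        rw [CoxeterSystem.IsReduced]; simp) (by simpa using hlen) (by
        rw [cs.wordProd_nil]; exact hfold)
    exact ⟨(r, i, s), ⟨h1, h2, h3, h4⟩, by simpa using h5.symm⟩
end
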